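/- arXiv:0711.1143 — 4 statements merged into one kernel-verified Lean document; each statement's English description precedes it below -/
import Mathlib

section
/- Strict monotonicity of the utility functional: if W, Z ∈ L^∞ satisfy W ≥ Z a.s. and P(W > Z) > 0, then U(W) > U(Z). -/
open MeasureTheory Finset Real

noncomputable section

/-- `A(W)`: the set of admissible intertemporal allocations of the risk `W`:
adapted processes `(Y_t)_{t∈𝕋}` with each `Y_t` essentially bounded and
`∑_{t∈𝕋} Y_t/B_t = W` a.s. -/
def IsAlloc {Ω : Type*} [mΩ : MeasurableSpace Ω] (μ : Measure Ω) (T : ℕ)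
    (ℱ : ℕ → MeasurableSpace Ω) (B : ℕ → Ω → ℝ) (W : Ω → ℝ) (Y : ℕ → Ω → ℝ) : Prop :=
  (∀ t ∈ Finset.Icc 1 T, Measurable[ℱ t] (Y t) ∧ ∃ C : ℝ, ∀ᵐ ω ∂μ, |Y t ω| ≤ C) ∧
  ∀ᵐ ω ∂μ, ∑ t ∈ Finset.Icc 1 T, Y t ω / B t ω = W ω

/-- The integrated expected utility `∑_{t∈𝕋} E[u_t(Ỹ_t)]` of an allocation. -/
def allocVal {Ω : Type*} [mΩ : MeasurableSpace Ω] (μ : Measure Ω) (T : ℕ)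
    (u : ℕ → ℝ → ℝ) (B : ℕ → Ω → ℝ) (Y : ℕ → Ω → ℝ) : ℝ :=
  ∑ t ∈ Finset.Icc 1 T, ∫ ω, u t (Y t ω / B t ω) ∂μ

/-- The utility functional `U(W) = sup { ∑_t E[u_t(Ỹ_t)] : Y ∈ A(W) }`. -/
def Util {Ω : Type*} [mΩ : MeasurableSpace Ω] (μ : Measure Ω) (T : ℕ)
    (ℱ : ℕ → MeasurableSpace Ω) (u : ℕ → ℝ → ℝ) (B : ℕ → Ω → ℝ) (W : Ω → ℝ) : ℝ :=
  sSup {s : ℝ | ∃ Y, IsAlloc μ T ℱ B W Y ∧ s = allocVal μ T u B Y}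

namespace UtilAux

variable {Ω : Type*} [mΩ : MeasurableSpace Ω] {μ : Measure Ω} [IsProbabilityMeasure μ]
  {T : ℕ} {ℱ : ℕ → MeasurableSpace Ω} {B : ℕ → Ω → ℝ} {u : ℕ → ℝ → ℝ}

lemma sum_Icc_split (hT : 1 ≤ T) {M : Type*} [AddCommMonoid M] (f : ℕ → M) :
    ∑ t ∈ Icc 1 T, f t = (∑ t ∈ Icc 1 (T-1), f t) + f T := by
  have h : T = (T-1) + 1 := (Nat.succ_pred_eq_of_pos hT).symm
  rw [h, Finset.sum_Icc_succ_top (by omega)]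
  simp only [Nat.add_sub_cancel]

lemma mem_Icc_pred {t : ℕ} (ht : t ∈ Icc 1 (T-1)) (hT : 1 ≤ T) : t ∈ Icc 1 T ∧ t ≠ T := by
  rw [Finset.mem_Icc] at ht ⊢
  omega

lemma integrable_comp {f : Ω → ℝ} (hf : Measurable f) {C : ℝ}
    (hC : ∀ᵐ ω ∂μ, |f ω| ≤ C) {v : ℝ → ℝ} (hv : Continuous v) :
    Integrable (fun ω => v (f ω)) μ := by
  obtain ⟨M, hM⟩ :=
    (isCompact_Icc (a := -C) (b := C)).exists_bound_of_continuousOn hv.continuousOn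
  refine (integrable_const M).mono' (hv.measurable.comp hf).aestronglyMeasurable ?_
  filter_upwards [hC] with ω hω
  exact hM _ ⟨(abs_le.mp hω).1, (abs_le.mp hω).2⟩

lemma alloc_meas (hle : ∀ t, ℱ t ≤ mΩ) (hBmeas : ∀ t ∈ Icc 1 T, Measurable[ℱ t] (B t))
    {V : Ω → ℝ} {Y : ℕ → Ω → ℝ} (hY : IsAlloc μ T ℱ B V Y) {t : ℕ} (ht : t ∈ Icc 1 T) :
    Measurable fun ω => Y t ω / B t ω :=
  (((hY.1 t ht).1.mono (hle t) le_rfl)).div ((hBmeas t ht).mono (hle t) le_rfl)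

lemma alloc_bdd (hBpos : ∀ t ∈ Icc 1 T, ∀ ω, (1:ℝ) ≤ B t ω)
    {V : Ω → ℝ} {Y : ℕ → Ω → ℝ} (hY : IsAlloc μ T ℱ B V Y) {t : ℕ} (ht : t ∈ Icc 1 T) :
    ∃ C : ℝ, 0 ≤ C ∧ ∀ᵐ ω ∂μ, |Y t ω / B t ω| ≤ C := by
  obtain ⟨C, hC⟩ := (hY.1 t ht).2
  refine ⟨max C 0, le_max_right _ _, ?_⟩
  filter_upwards [hC] with ω hω
  have h1 : (1:ℝ) ≤ B t ω := hBpos t ht ω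
  rw [abs_div, abs_of_pos (lt_of_lt_of_le one_pos h1)]
  exact le_trans (div_le_self (abs_nonneg _) h1) (le_trans hω (le_max_left _ _))

lemma alloc_integrable (hle : ∀ t, ℱ t ≤ mΩ) (hBmeas : ∀ t ∈ Icc 1 T, Measurable[ℱ t] (B t))
    (hBpos : ∀ t ∈ Icc 1 T, ∀ ω, (1:ℝ) ≤ B t ω)
    (hucont : ∀ t ∈ Icc 1 T, Continuous (u t))
    {V : Ω → ℝ} {Y : ℕ → Ω → ℝ} (hY : IsAlloc μ T ℱ B V Y) {t : ℕ} (ht : t ∈ Icc 1 T) :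
    Integrable (fun ω => u t (Y t ω / B t ω)) μ := by
  obtain ⟨C, _, hC⟩ := alloc_bdd hBpos hY ht
  exact integrable_comp (alloc_meas hle hBmeas hY ht) hC (hucont t ht)

lemma allocVal_eq (hle : ∀ t, ℱ t ≤ mΩ) (hBmeas : ∀ t ∈ Icc 1 T, Measurable[ℱ t] (B t))
    (hBpos : ∀ t ∈ Icc 1 T, ∀ ω, (1:ℝ) ≤ B t ω)
    (hucont : ∀ t ∈ Icc 1 T, Continuous (u t))
    {V : Ω → ℝ} {Y : ℕ → Ω → ℝ} (hY : IsAlloc μ T ℱ B V Y) :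
    allocVal μ T u B Y = ∫ ω, ∑ t ∈ Icc 1 T, u t (Y t ω / B t ω) ∂μ :=
  (integral_finset_sum _ (fun t ht => alloc_integrable hle hBmeas hBpos hucont hY ht)).symm

def allocC (T : ℕ) (B : ℕ → Ω → ℝ) (y : ℕ → ℝ) (V : Ω → ℝ) : ℕ → Ω → ℝ :=
  fun t ω => if t = T then B t ω * (y T + (V ω - ∑ t' ∈ Finset.Icc 1 T, y t')) else B t ω * y t

lemma allocC_isAlloc (hT : 1 ≤ T) (hℱmono : Monotone ℱ)
    (hBpos : ∀ t ∈ Icc 1 T, ∀ ω, (1:ℝ) ≤ B t ω)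
    (hBmeas : ∀ t ∈ Icc 1 T, Measurable[ℱ t] (B t))
    (hBbdd : ∀ t ∈ Icc 1 T, ∃ CB : ℝ, ∀ ω, B t ω ≤ CB)
    {V : Ω → ℝ} (hV : Measurable[ℱ T] V) {CV : ℝ} (hCV : ∀ᵐ ω ∂μ, |V ω| ≤ CV)
    (y : ℕ → ℝ) :
    IsAlloc μ T ℱ B V (allocC T B y V) := by
  have hTmem : T ∈ Icc 1 T := by simp [hT]
  constructor
  · intro t ht
    obtain ⟨CB, hCB⟩ := hBbdd t ht
    have hCB' : ∀ ω, B t ω ≤ max CB 1 := fun ω => le_trans (hCB ω) (le_max_left _ _)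
    have hCB0 : (0:ℝ) ≤ max CB 1 := le_trans zero_le_one (le_max_right _ _)
    constructor
    · by_cases h : t = T
      · rw [h]
        unfold allocC
        simp only [if_pos rfl]
        exact (hBmeas T hTmem).mul (measurable_const.add (hV.sub measurable_const))
      · unfold allocC
        simp only [if_neg h]
        exact (hBmeas t ht).mul measurable_const
    · by_cases h : t = T
      · refine ⟨max CB 1 * (|y T| + (CV + |∑ t' ∈ Finset.Icc 1 T, y t'|)), ?_⟩
        filter_upwards [hCV] with ω hω
        unfold allocC
        rw [if_pos h, abs_mul]
        have hB0 : 0 ≤ B t ω := le_trans zero_le_one (hBpos t ht ω)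
        have hCV0 : 0 ≤ CV := le_trans (abs_nonneg _) hω
        refine mul_le_mul (by rw [abs_of_nonneg hB0]; exact hCB' ω) ?_ (abs_nonneg _) hCB0
        calc |y T + (V ω - ∑ t' ∈ Finset.Icc 1 T, y t')|
            ≤ |y T| + |V ω - ∑ t' ∈ Finset.Icc 1 T, y t'| := abs_add_le _ _
          _ ≤ |y T| + (|V ω| + |∑ t' ∈ Finset.Icc 1 T, y t'|) := by
              gcongr
              exact abs_sub _ _
          _ ≤ _ := by gcongr
      · refine ⟨max CB 1 * |y t|, ?_⟩
        refine Filter.Eventually.of_forall fun ω => ?_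
        unfold allocC
        rw [if_neg h, abs_mul]
        have hB0 : 0 ≤ B t ω := le_trans zero_le_one (hBpos t ht ω)
        exact mul_le_mul_of_nonneg_right (by rw [abs_of_nonneg hB0]; exact hCB' ω)
          (abs_nonneg _)
  · refine Filter.Eventually.of_forall fun ω => ?_
    have hstep : ∀ t ∈ Icc 1 T, allocC T B y V t ω / B t ω
        = y t + if t = T then (V ω - ∑ t' ∈ Finset.Icc 1 T, y t') else 0 := by
      intro t ht
      have hB0 : B t ω ≠ 0 := ne_of_gt (lt_of_lt_of_le one_pos (hBpos t ht ω))
      have hcancel : ∀ x : ℝ, B t ω * x / B t ω = x := fun x => by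
        rw [mul_comm, mul_div_assoc, div_self hB0, mul_one]
      unfold allocC
      by_cases h : t = T
      · rw [if_pos h, if_pos h, hcancel, h]
      · rw [if_neg h, if_neg h, hcancel, add_zero]
    rw [Finset.sum_congr rfl hstep, Finset.sum_add_distrib, Finset.sum_ite_eq' (Icc 1 T)]
    simp [hTmem]

lemma allocC_val (hT : 1 ≤ T) (hle : ∀ t, ℱ t ≤ mΩ)
    (hBpos : ∀ t ∈ Icc 1 T, ∀ ω, (1:ℝ) ≤ B t ω)
    {V : Ω → ℝ} (y : ℕ → ℝ) :
    allocVal μ T u B (allocC T B y V) =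
      (∑ t ∈ Icc 1 (T-1), u t (y t))
        + ∫ ω, u T (y T + (V ω - ∑ t' ∈ Finset.Icc 1 T, y t')) ∂μ := by
  have hTmem : T ∈ Icc 1 T := by simp [hT]
  unfold allocVal
  rw [sum_Icc_split hT]
  congr 1
  · refine Finset.sum_congr rfl fun t ht => ?_
    obtain ⟨ht', hne⟩ := mem_Icc_pred ht hT
    have : (fun ω => u t (allocC T B y V t ω / B t ω)) = fun _ => u t (y t) := by
      funext ω
      have hB0 : B t ω ≠ 0 := ne_of_gt (lt_of_lt_of_le one_pos (hBpos t ht' ω))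
      unfold allocC
      rw [if_neg hne, mul_comm, mul_div_assoc, div_self hB0, mul_one]
    rw [this]
    simp [integral_const, measure_univ]
  · congr 1
    funext ω
    have hB0 : B T ω ≠ 0 := ne_of_gt (lt_of_lt_of_le one_pos (hBpos T hTmem ω))
    unfold allocC
    rw [if_pos rfl, mul_comm, mul_div_assoc, div_self hB0, mul_one]

lemma alloc_mix (hle : ∀ t, ℱ t ≤ mΩ)
    (hBpos : ∀ t ∈ Icc 1 T, ∀ ω, (1:ℝ) ≤ B t ω)
    (hBmeas : ∀ t ∈ Icc 1 T, Measurable[ℱ t] (B t))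
    (hucont : ∀ t ∈ Icc 1 T, Continuous (u t))
    (huconc : ∀ t ∈ Icc 1 T, ConcaveOn ℝ (Set.univ : Set ℝ) (u t))
    {l : ℝ} (h0 : 0 ≤ l) (h1 : l ≤ 1)
    {V1 V2 : Ω → ℝ} {Y1 Y2 : ℕ → Ω → ℝ}
    (hY1 : IsAlloc μ T ℱ B V1 Y1) (hY2 : IsAlloc μ T ℱ B V2 Y2) :
    IsAlloc μ T ℱ B (fun ω => (1-l) * V1 ω + l * V2 ω)
      (fun t ω => (1-l) * Y1 t ω + l * Y2 t ω) ∧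
    (1-l) * allocVal μ T u B Y1 + l * allocVal μ T u B Y2
      ≤ allocVal μ T u B (fun t ω => (1-l) * Y1 t ω + l * Y2 t ω) := by
  have h1' : 0 ≤ 1 - l := by linarith
  have halloc : IsAlloc μ T ℱ B (fun ω => (1-l) * V1 ω + l * V2 ω)
      (fun t ω => (1-l) * Y1 t ω + l * Y2 t ω) := by
    constructor
    · intro t ht
      refine ⟨((hY1.1 t ht).1.const_mul _).add ((hY2.1 t ht).1.const_mul _), ?_⟩
      obtain ⟨C1, hC1⟩ := (hY1.1 t ht).2
      obtain ⟨C2, hC2⟩ := (hY2.1 t ht).2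
      refine ⟨(1-l) * C1 + l * C2, ?_⟩
      filter_upwards [hC1, hC2] with ω hω1 hω2
      calc |(1-l) * Y1 t ω + l * Y2 t ω| ≤ |(1-l) * Y1 t ω| + |l * Y2 t ω| := abs_add_le _ _
        _ = (1-l) * |Y1 t ω| + l * |Y2 t ω| := by
            rw [abs_mul, abs_mul, abs_of_nonneg h1', abs_of_nonneg h0]
        _ ≤ (1-l) * C1 + l * C2 := by gcongr
    · filter_upwards [hY1.2, hY2.2] with ω hω1 hω2
      have hstep : ∀ t ∈ Icc 1 T,
          ((1-l) * Y1 t ω + l * Y2 t ω) / B t ω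
            = (1-l) * (Y1 t ω / B t ω) + l * (Y2 t ω / B t ω) := by
        intro t ht
        rw [add_div, mul_div_assoc, mul_div_assoc]
      rw [Finset.sum_congr rfl hstep, Finset.sum_add_distrib, ← Finset.mul_sum,
        ← Finset.mul_sum, hω1, hω2]
  refine ⟨halloc, ?_⟩
  unfold allocVal
  rw [Finset.mul_sum, Finset.mul_sum, ← Finset.sum_add_distrib]
  refine Finset.sum_le_sum fun t ht => ?_
  have int1 := alloc_integrable hle hBmeas hBpos hucont hY1 ht
  have int2 := alloc_integrable hle hBmeas hBpos hucont hY2 ht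
  have intc := alloc_integrable hle hBmeas hBpos hucont halloc ht
  have hpt : ∀ ω, (1-l) * u t (Y1 t ω / B t ω) + l * u t (Y2 t ω / B t ω)
      ≤ u t (((1-l) * Y1 t ω + l * Y2 t ω) / B t ω) := by
    intro ω
    have := (huconc t ht).2 (Set.mem_univ (Y1 t ω / B t ω)) (Set.mem_univ (Y2 t ω / B t ω))
      h1' h0 (by ring)
    simp only [smul_eq_mul] at this
    calc (1-l) * u t (Y1 t ω / B t ω) + l * u t (Y2 t ω / B t ω)
        ≤ u t ((1-l) * (Y1 t ω / B t ω) + l * (Y2 t ω / B t ω)) := this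
      _ = u t (((1-l) * Y1 t ω + l * Y2 t ω) / B t ω) := by
          rw [add_div, mul_div_assoc, mul_div_assoc]
  have intadd : Integrable
      (fun ω => (1-l) * u t (Y1 t ω / B t ω) + l * u t (Y2 t ω / B t ω)) μ :=
    (int1.const_mul (1-l)).add (int2.const_mul l)
  have hmono := integral_mono_ae intadd intc (Filter.Eventually.of_forall hpt)
  rwa [integral_add (int1.const_mul _) (int2.const_mul _), integral_const_mul,
    integral_const_mul] at hmono

lemma alloc_shift (hT : 1 ≤ T) (hle : ∀ t, ℱ t ≤ mΩ)
    (hBpos : ∀ t ∈ Icc 1 T, ∀ ω, (1:ℝ) ≤ B t ω)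
    (hBmeas : ∀ t ∈ Icc 1 T, Measurable[ℱ t] (B t))
    (hBbdd : ∀ t ∈ Icc 1 T, ∃ CB : ℝ, ∀ ω, B t ω ≤ CB)
    (hucont : ∀ t ∈ Icc 1 T, Continuous (u t))
    {V : Ω → ℝ} {Y : ℕ → Ω → ℝ} (hY : IsAlloc μ T ℱ B V Y)
    {G : Ω → ℝ} (hG : Measurable[ℱ T] G) {CG : ℝ} (hCG : ∀ᵐ ω ∂μ, |G ω| ≤ CG) :
    IsAlloc μ T ℱ B (fun ω => V ω + G ω)
      (fun t ω => if t = T then Y T ω + B T ω * G ω else Y t ω) ∧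
    allocVal μ T u B (fun t ω => if t = T then Y T ω + B T ω * G ω else Y t ω)
      = allocVal μ T u B Y
        + ∫ ω, (u T (Y T ω / B T ω + G ω) - u T (Y T ω / B T ω)) ∂μ := by
  have hTmem : T ∈ Icc 1 T := by simp [hT]
  have hBT0 : ∀ ω, B T ω ≠ 0 := fun ω => ne_of_gt (lt_of_lt_of_le one_pos (hBpos T hTmem ω))
  have htilde : ∀ ω, (Y T ω + B T ω * G ω) / B T ω = Y T ω / B T ω + G ω := by
    intro ω
    rw [add_div, mul_comm, mul_div_assoc, div_self (hBT0 ω), mul_one]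
  obtain ⟨CY, hCY0, hCY⟩ := alloc_bdd hBpos hY hTmem
  have hmeasYt : Measurable fun ω => Y T ω / B T ω := alloc_meas hle hBmeas hY hTmem
  have hGm : Measurable G := hG.mono (hle T) le_rfl
  have intY := alloc_integrable hle hBmeas hBpos hucont hY hTmem
  have intYG : Integrable (fun ω => u T (Y T ω / B T ω + G ω)) μ := by
    refine integrable_comp (hmeasYt.add hGm) (C := CY + CG) ?_ (hucont T hTmem)
    filter_upwards [hCY, hCG] with ω h1 h2
    exact le_trans (abs_add_le _ _) (by gcongr)
  have halloc : IsAlloc μ T ℱ B (fun ω => V ω + G ω)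
      (fun t ω => if t = T then Y T ω + B T ω * G ω else Y t ω) := by
    constructor
    · intro t ht
      constructor
      · by_cases h : t = T
        · rw [h]
          simp only [if_pos rfl]
          exact (hY.1 T hTmem).1.add ((hBmeas T hTmem).mul hG)
        · simp only [if_neg h]
          exact (hY.1 t ht).1
      · by_cases h : t = T
        · obtain ⟨CB, hCB⟩ := hBbdd T hTmem
          obtain ⟨C1, hC1⟩ := (hY.1 T hTmem).2
          refine ⟨C1 + max CB 1 * max CG 0, ?_⟩
          filter_upwards [hC1, hCG] with ω h1 h2
          rw [if_pos h]
          refine le_trans (abs_add_le _ _) ?_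
          gcongr
          rw [abs_mul]
          refine mul_le_mul ?_ (le_trans h2 (le_max_left _ _)) (abs_nonneg _)
            (le_trans zero_le_one (le_max_right _ _))
          rw [abs_of_nonneg (le_trans zero_le_one (hBpos T hTmem ω))]
          exact le_trans (hCB ω) (le_max_left _ _)
        · obtain ⟨C1, hC1⟩ := (hY.1 t ht).2
          refine ⟨C1, ?_⟩
          filter_upwards [hC1] with ω h1
          rwa [if_neg h]
    · filter_upwards [hY.2] with ω hω
      have hstep : ∀ t ∈ Icc 1 T,
          (if t = T then Y T ω + B T ω * G ω else Y t ω) / B t ω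
            = Y t ω / B t ω + if t = T then G ω else 0 := by
        intro t ht
        by_cases h : t = T
        · rw [if_pos h, if_pos h, h, htilde]
        · rw [if_neg h, if_neg h, add_zero]
      rw [Finset.sum_congr rfl hstep, Finset.sum_add_distrib,
        Finset.sum_ite_eq' (Icc 1 T), if_pos hTmem, hω]
  refine ⟨halloc, ?_⟩
  unfold allocVal
  rw [sum_Icc_split hT (f := fun t => ∫ ω, u t
      ((if t = T then Y T ω + B T ω * G ω else Y t ω) / B t ω) ∂μ),
    sum_Icc_split hT (f := fun t => ∫ ω, u t (Y t ω / B t ω) ∂μ)]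
  have heq1 : ∀ t ∈ Icc 1 (T-1),
      (∫ ω, u t ((if t = T then Y T ω + B T ω * G ω else Y t ω) / B t ω) ∂μ)
        = ∫ ω, u t (Y t ω / B t ω) ∂μ := by
    intro t ht
    obtain ⟨ht', hne⟩ := mem_Icc_pred ht hT
    congr 1
    funext ω
    rw [if_neg hne]
  rw [Finset.sum_congr rfl heq1]
  have heq2 : (∫ ω, u T ((if T = T then Y T ω + B T ω * G ω else Y T ω) / B T ω) ∂μ)
      = ∫ ω, u T (Y T ω / B T ω + G ω) ∂μ := by
    congr 1
    funext ω
    rw [if_pos rfl, htilde]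
  rw [heq2]
  have heq3 : (fun ω => u T (Y T ω / B T ω + G ω))
      = fun ω => u T (Y T ω / B T ω) + (u T (Y T ω / B T ω + G ω) - u T (Y T ω / B T ω)) := by
    funext ω
    ring
  have intD : Integrable
      (fun ω => u T (Y T ω / B T ω + G ω) - u T (Y T ω / B T ω)) μ := intYG.sub intY
  rw [heq3, integral_add intY intD]
  ring

end UtilAux

set_option maxHeartbeats 2000000

open UtilAux

/-- Strict monotonicity of the utility functional (Proposition 2.5(a)):
if `W ≥ Z` a.s. and `P(W > Z) > 0` then `U(W) > U(Z)`. -/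
theorem util_strictMono
    {Ω : Type*} [mΩ : MeasurableSpace Ω] (μ : Measure Ω) [IsProbabilityMeasure μ]
    (T : ℕ) (hT : 1 ≤ T)
    (ℱ : ℕ → MeasurableSpace Ω) (hℱmono : Monotone ℱ) (hℱle : ∀ t, ℱ t ≤ mΩ)
    (r : ℕ → Ω → ℝ)
    (hr_meas : ∀ t ∈ Finset.Icc 1 T, Measurable[ℱ (t - 1)] (r t))
    (hr_nonneg : ∀ t ∈ Finset.Icc 1 T, ∀ ω, 0 ≤ r t ω)
    (hr_bdd : ∀ t ∈ Finset.Icc 1 T, ∃ C : ℝ, ∀ ω, r t ω ≤ C)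
    (B : ℕ → Ω → ℝ) (hB : ∀ t ω, B t ω = ∏ k ∈ Finset.Icc 1 t, (1 + r k ω))
    (u : ℕ → ℝ → ℝ)
    (hu_conc : ∀ t ∈ Finset.Icc 1 T, StrictConcaveOn ℝ (Set.univ : Set ℝ) (u t))
    (hu_diff : ∀ t ∈ Finset.Icc 1 T, ContDiff ℝ 1 (u t))
    (hu_deriv : ∀ t ∈ Finset.Icc 1 T, ∀ x : ℝ, 0 < deriv (u t) x)
    (hUfin : ∀ V : Ω → ℝ, Measurable[ℱ T] V → (∃ C : ℝ, ∀ᵐ ω ∂μ, |V ω| ≤ C) →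
      BddAbove {s : ℝ | ∃ Y, IsAlloc μ T ℱ B V Y ∧ s = allocVal μ T u B Y})
    (W Z : Ω → ℝ)
    (hWmeas : Measurable[ℱ T] W) (hWbdd : ∃ C : ℝ, ∀ᵐ ω ∂μ, |W ω| ≤ C)
    (hZmeas : Measurable[ℱ T] Z) (hZbdd : ∃ C : ℝ, ∀ᵐ ω ∂μ, |Z ω| ≤ C)
    (hWZ : ∀ᵐ ω ∂μ, Z ω ≤ W ω) (hgt : 0 < μ {ω | Z ω < W ω}) :
    Util μ T ℱ u B Z < Util μ T ℱ u B W := by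
  classical
  by_contra hcon
  push_neg at hcon
  have hTmem : T ∈ Icc 1 T := by simp [hT]
  have hBpos : ∀ t ∈ Icc 1 T, ∀ ω, (1:ℝ) ≤ B t ω := by
    intro t ht ω
    rw [hB]
    calc (1:ℝ) = ∏ k ∈ Finset.Icc 1 t, 1 := by simp
      _ ≤ ∏ k ∈ Finset.Icc 1 t, (1 + r k ω) := by
          refine Finset.prod_le_prod (fun k hk => zero_le_one) (fun k hk => ?_)
          have hkT : k ∈ Icc 1 T := by
            rw [Finset.mem_Icc] at hk ht ⊢
            omega
          linarith [hr_nonneg k hkT ω]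
  have hBmeas : ∀ t ∈ Icc 1 T, Measurable[ℱ t] (B t) := by
    intro t ht
    have hBe : B t = fun ω => ∏ k ∈ Finset.Icc 1 t, (1 + r k ω) := funext (hB t)
    rw [hBe]
    refine Finset.measurable_prod _ fun k hk => ?_
    obtain ⟨hk1, hk2⟩ := Finset.mem_Icc.mp hk
    obtain ⟨ht1, ht2⟩ := Finset.mem_Icc.mp ht
    have hkT : k ∈ Icc 1 T := Finset.mem_Icc.mpr ⟨hk1, le_trans hk2 ht2⟩
    exact measurable_const.add ((hr_meas k hkT).mono (hℱmono (by omega)) le_rfl)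
  have hBbdd : ∀ t ∈ Icc 1 T, ∃ CB : ℝ, ∀ ω, B t ω ≤ CB := by
    intro t ht
    have hch : ∀ k : ℕ, ∃ Ck : ℝ, k ∈ Icc 1 T → ∀ ω, r k ω ≤ Ck := by
      intro k
      by_cases hk : k ∈ Icc 1 T
      · exact (hr_bdd k hk).imp fun c hc _ => hc
      · exact ⟨0, fun h => absurd h hk⟩
    choose Cr hCr using hch
    refine ⟨∏ k ∈ Finset.Icc 1 t, (1 + max (Cr k) 0), fun ω => ?_⟩
    rw [hB]
    refine Finset.prod_le_prod (fun k hk => ?_) (fun k hk => ?_)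
    · have hkT : k ∈ Icc 1 T := by
        rw [Finset.mem_Icc] at hk ht ⊢
        omega
      linarith [hr_nonneg k hkT ω]
    · have hkT : k ∈ Icc 1 T := by
        rw [Finset.mem_Icc] at hk ht ⊢
        omega
      have := hCr k hkT ω
      have := le_max_left (Cr k) 0
      linarith
  have hucont : ∀ t ∈ Icc 1 T, Continuous (u t) := fun t ht => (hu_diff t ht).continuous
  have humono : ∀ t ∈ Icc 1 T, StrictMono (u t) :=
    fun t ht => strictMono_of_deriv_pos (hu_deriv t ht)
  have huconc : ∀ t ∈ Icc 1 T, ConcaveOn ℝ (Set.univ : Set ℝ) (u t) :=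
    fun t ht => (hu_conc t ht).concaveOn
  have hWm : Measurable W := hWmeas.mono (hℱle T) le_rfl
  have hZm : Measurable Z := hZmeas.mono (hℱle T) le_rfl
  obtain ⟨C0, hC0⟩ := hWbdd
  obtain ⟨C1, hC1⟩ := hZbdd
  set C : ℝ := max (max C0 C1) 0 with hCdef
  have hCnn : 0 ≤ C := le_max_right _ _
  have hCW : ∀ᵐ ω ∂μ, |W ω| ≤ C :=
    hC0.mono fun ω h => h.trans (le_trans (le_max_left _ _) (le_max_left _ _))
  have hCZ : ∀ᵐ ω ∂μ, |Z ω| ≤ C :=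
    hC1.mono fun ω h => h.trans (le_trans (le_max_right _ _) (le_max_left _ _))
  have hSne : ∀ V : Ω → ℝ, Measurable[ℱ T] V → (∃ CV : ℝ, ∀ᵐ ω ∂μ, |V ω| ≤ CV) →
      {s : ℝ | ∃ Y, IsAlloc μ T ℱ B V Y ∧ s = allocVal μ T u B Y}.Nonempty := by
    rintro V hV ⟨CV, hCV⟩
    exact ⟨_, ⟨allocC T B (fun _ => 0) V,
      allocC_isAlloc hT hℱmono hBpos hBmeas hBbdd hV hCV _, rfl⟩⟩
  have hval_le : ∀ V : Ω → ℝ, Measurable[ℱ T] V → (∃ CV : ℝ, ∀ᵐ ω ∂μ, |V ω| ≤ CV) →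
      ∀ x ∈ {s : ℝ | ∃ Y, IsAlloc μ T ℱ B V Y ∧ s = allocVal μ T u B Y},
        x ≤ Util μ T ℱ u B V :=
    fun V h1 h2 x hx => le_csSup (hUfin V h1 h2) hx
  set c : ℝ := Util μ T ℱ u B Z with hc
  -- positive-measure event where W - Z ≥ δ
  obtain ⟨δ, hδpos, hAδpos⟩ : ∃ δ : ℝ, 0 < δ ∧ 0 < μ {ω | δ ≤ W ω - Z ω} := by
    have hsub : {ω | Z ω < W ω} ⊆ ⋃ n : ℕ, {ω | 1/((n:ℝ)+1) ≤ W ω - Z ω} := by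
      intro ω hω
      obtain ⟨n, hn⟩ := exists_nat_one_div_lt (K := ℝ) (sub_pos.2 hω)
      exact Set.mem_iUnion.2 ⟨n, le_of_lt hn⟩
    have hres : ∃ n : ℕ, μ {ω | 1/((n:ℝ)+1) ≤ W ω - Z ω} ≠ 0 := by
      by_contra hres
      push_neg at hres
      have h0 : μ (⋃ n : ℕ, {ω | 1/((n:ℝ)+1) ≤ W ω - Z ω}) = 0 := measure_iUnion_null hres
      exact absurd (measure_mono_null hsub h0) (ne_of_gt hgt)
    obtain ⟨n, hn⟩ := hres
    exact ⟨1/((n:ℝ)+1), by positivity, pos_iff_ne_zero.2 hn⟩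
  set Aδ : Set Ω := {ω | δ ≤ W ω - Z ω} with hAδ
  have hAδmeas : MeasurableSet Aδ := measurableSet_le measurable_const (hWm.sub hZm)
  set pδ : ℝ := (μ Aδ).toReal with hpδ
  have hpδpos : 0 < pδ := ENNReal.toReal_pos (ne_of_gt hAδpos) (measure_ne_top μ _)
  -- Step 2
  have hstep2 : ∀ (n : ℕ) (Y' : ℕ → Ω → ℝ),
      IsAlloc μ T ℱ B (fun ω => Z ω + (n:ℝ) * (W ω - Z ω)) Y' →
      allocVal μ T u B Y' ≤ c := by
    intro n Y' hY'
    rcases Nat.eq_zero_or_pos n with hn0 | hn1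
    · subst hn0
      have hZ' : IsAlloc μ T ℱ B Z Y' := ⟨hY'.1, hY'.2.mono fun ω h => by simpa using h⟩
      exact hval_le Z hZmeas ⟨C1, hC1⟩ _ ⟨Y', hZ', rfl⟩
    · refine le_of_forall_pos_le_add fun ε hε => ?_
      have hNpos : (0:ℝ) < n := by exact_mod_cast hn1
      have hcε : c - ε/(n:ℝ) < c := by
        have : 0 < ε / (n:ℝ) := by positivity
        linarith
      obtain ⟨v, ⟨Y, hY, rfl⟩, hv⟩ :=
        exists_lt_of_lt_csSup (hSne Z hZmeas ⟨C1, hC1⟩) hcε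
      have h1n : (1:ℝ)/n ≤ 1 := by
        rw [div_le_one hNpos]
        exact_mod_cast hn1
      obtain ⟨halloc, hval⟩ := alloc_mix hℱle hBpos hBmeas hucont huconc
        (l := 1/(n:ℝ)) (by positivity) h1n hY hY'
      have hWalloc : IsAlloc μ T ℱ B W
          (fun t ω => (1 - 1/(n:ℝ)) * Y t ω + (1/(n:ℝ)) * Y' t ω) := by
        refine ⟨halloc.1, ?_⟩
        filter_upwards [halloc.2] with ω hω
        rw [hω]
        field_simp
        ring
      have hvc : allocVal μ T u B
          (fun t ω => (1 - 1/(n:ℝ)) * Y t ω + (1/(n:ℝ)) * Y' t ω) ≤ c :=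
        le_trans (hval_le W hWmeas ⟨C0, hC0⟩ _ ⟨_, hWalloc, rfl⟩) hcon
      have hq0 : (0:ℝ) < 1/(n:ℝ) := by positivity
      have key : (1/(n:ℝ)) * allocVal μ T u B Y' ≤ (1/(n:ℝ)) * (c + ε) := by
        have hYlow : (1 - 1/(n:ℝ)) * (c - ε/(n:ℝ)) ≤ (1 - 1/(n:ℝ)) * allocVal μ T u B Y :=
          mul_le_mul_of_nonneg_left hv.le (by linarith)
        have h2 : (1/(n:ℝ)) * allocVal μ T u B Y'
            ≤ c - (1 - 1/(n:ℝ)) * (c - ε/(n:ℝ)) := by linarith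
        refine h2.trans ?_
        have hnn : (n:ℝ) ≠ 0 := ne_of_gt hNpos
        rw [mul_add]
        have hexp : c - (1 - 1/(n:ℝ)) * (c - ε/(n:ℝ))
            = (1/(n:ℝ))*c + (1 - 1/(n:ℝ)) * (ε/(n:ℝ)) := by
          field_simp
          ring
        rw [hexp]
        have : (1 - 1/(n:ℝ)) * (ε/(n:ℝ)) ≤ (1/(n:ℝ)) * ε := by
          rw [div_eq_mul_inv ε, mul_comm ε, ← mul_assoc, one_div]
          have h3 : (1 - ((n:ℝ))⁻¹) * ((n:ℝ))⁻¹ ≤ ((n:ℝ))⁻¹ := by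
            have h4 : (0:ℝ) ≤ ((n:ℝ))⁻¹ := by positivity
            nlinarith
          exact mul_le_mul_of_nonneg_right (by nlinarith) hε.le
        linarith
      exact le_of_mul_le_mul_left key hq0
  -- u T is bounded above
  have hsT : BddAbove (Set.range (u T)) := by
    have hint : ∀ n : ℕ, ∫ ω, u T (Z ω + (n:ℝ) * (W ω - Z ω)) ∂μ
        ≤ c - ∑ t ∈ Icc 1 (T-1), u t 0 := by
      intro n
      have hmeasV : Measurable[ℱ T] (fun ω => Z ω + (n:ℝ)*(W ω - Z ω)) :=
        hZmeas.add ((hWmeas.sub hZmeas).const_mul _)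
      have hbddV : ∀ᵐ ω ∂μ, |Z ω + (n:ℝ)*(W ω - Z ω)| ≤ C + n*(C+C) := by
        filter_upwards [hCW, hCZ] with ω h1 h2
        calc |Z ω + (n:ℝ)*(W ω - Z ω)| ≤ |Z ω| + |(n:ℝ)*(W ω - Z ω)| := abs_add_le _ _
          _ ≤ C + n*(C+C) := by
              rw [abs_mul, Nat.abs_cast]
              have : |W ω - Z ω| ≤ C + C := le_trans (abs_sub _ _) (by linarith)
              have hn0 : (0:ℝ) ≤ (n:ℝ) := Nat.cast_nonneg n
              nlinarith
      have hal := allocC_isAlloc hT hℱmono hBpos hBmeas hBbdd hmeasV hbddV (fun _ => 0)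
      have hvle := hstep2 n _ hal
      rw [allocC_val hT hℱle hBpos] at hvle
      simp only [Finset.sum_const_zero, sub_zero, zero_add] at hvle
      linarith
    refine ⟨u T (-C) + (c - (∑ t ∈ Icc 1 (T-1), u t 0) - u T (-C)) / pδ, ?_⟩
    rintro x ⟨x0, rfl⟩
    obtain ⟨n, hn⟩ := exists_nat_ge ((x0 + C)/δ)
    have hnx : x0 ≤ -C + n*δ := by
      rw [div_le_iff₀ hδpos] at hn
      linarith
    have hptw : ∀ᵐ ω ∂μ, u T (-C)
        + Aδ.indicator (fun _ => u T (-C + n*δ) - u T (-C)) ω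
        ≤ u T (Z ω + (n:ℝ)*(W ω - Z ω)) := by
      filter_upwards [hCZ, hWZ] with ω h1 h2
      have hZlow : -C ≤ Z ω := (abs_le.mp h1).1
      by_cases hA : ω ∈ Aδ
      · rw [Set.indicator_of_mem hA]
        have hδD : δ ≤ W ω - Z ω := hA
        have hmul : (n:ℝ)*δ ≤ (n:ℝ)*(W ω - Z ω) :=
          mul_le_mul_of_nonneg_left hδD (Nat.cast_nonneg n)
        have harg : -C + (n:ℝ)*δ ≤ Z ω + (n:ℝ)*(W ω - Z ω) := by linarith
        linarith [(humono T hTmem).monotone harg]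
      · rw [Set.indicator_of_notMem hA, add_zero]
        apply (humono T hTmem).monotone
        have hmul : (0:ℝ) ≤ (n:ℝ)*(W ω - Z ω) :=
          mul_nonneg (Nat.cast_nonneg n) (sub_nonneg.2 h2)
        linarith
    have hbddV : ∀ᵐ ω ∂μ, |Z ω + (n:ℝ)*(W ω - Z ω)| ≤ C + n*(C+C) := by
      filter_upwards [hCW, hCZ] with ω h1 h2
      calc |Z ω + (n:ℝ)*(W ω - Z ω)| ≤ |Z ω| + |(n:ℝ)*(W ω - Z ω)| := abs_add_le _ _
        _ ≤ C + n*(C+C) := by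
            rw [abs_mul, Nat.abs_cast]
            have : |W ω - Z ω| ≤ C + C := le_trans (abs_sub _ _) (by linarith)
            have hn0 : (0:ℝ) ≤ (n:ℝ) := Nat.cast_nonneg n
            nlinarith
    have hintl : Integrable (fun ω => u T (-C)
        + Aδ.indicator (fun _ => u T (-C + n*δ) - u T (-C)) ω) μ :=
      (integrable_const _).add ((integrable_const _).indicator hAδmeas)
    have hintr : Integrable (fun ω => u T (Z ω + (n:ℝ)*(W ω - Z ω))) μ :=
      integrable_comp (hZm.add ((hWm.sub hZm).const_mul _)) hbddV (hucont T hTmem)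
    have hmono := integral_mono_ae hintl hintr hptw
    rw [integral_add (integrable_const _) ((integrable_const _).indicator hAδmeas),
      integral_indicator_const _ hAδmeas, integral_const] at hmono
    simp only [measureReal_def, measure_univ, ENNReal.toReal_one, one_smul, smul_eq_mul] at hmono
    have hintn := hint n
    have hdle : u T (-C + n*δ) - u T (-C)
        ≤ (c - (∑ t ∈ Icc 1 (T-1), u t 0) - u T (-C)) / pδ := by
      rw [le_div_iff₀ hpδpos]
      nlinarith
    calc u T x0 ≤ u T (-C + n*δ) := (humono T hTmem).monotone hnx
      _ ≤ _ := by linarith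
  set s : ℝ := sSup (Set.range (u T)) with hsdef
  have hslt : ∀ x, u T x < s := fun x =>
    lt_of_lt_of_le (humono T hTmem (lt_add_one x)) (le_csSup hsT ⟨x + 1, rfl⟩)
  -- the deterministic value function
  set φ : ℝ → ℝ := fun w => Util μ T ℱ u B (fun _ => w) with hφ
  have hK1 : ∀ (y : ℕ → ℝ) (w : ℝ), (∑ t ∈ Icc 1 T, y t) ≤ w →
      (∑ t ∈ Icc 1 T, u t (y t)) ≤ φ w := by
    intro y w hyw
    have hwmeas : Measurable[ℱ T] (fun _ : Ω => w) := measurable_const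
    have hwbdd : ∀ᵐ ω ∂μ, |(fun _ : Ω => w) ω| ≤ |w| :=
      Filter.Eventually.of_forall fun _ => le_rfl
    have hal := allocC_isAlloc hT hℱmono hBpos hBmeas hBbdd hwmeas hwbdd y
    have hle1 := hval_le (fun _ => w) hwmeas ⟨|w|, hwbdd⟩ _ ⟨_, hal, rfl⟩
    rw [allocC_val hT hℱle hBpos] at hle1
    have hconst : (∫ _ω : Ω, u T (y T + (w - ∑ t' ∈ Icc 1 T, y t')) ∂μ)
        = u T (y T + (w - ∑ t' ∈ Icc 1 T, y t')) := by
      simp [integral_const, measure_univ]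
    rw [hconst] at hle1
    have hTterm : u T (y T) ≤ u T (y T + (w - ∑ t' ∈ Icc 1 T, y t')) :=
      (humono T hTmem).monotone (by linarith)
    calc ∑ t ∈ Icc 1 T, u t (y t)
        = (∑ t ∈ Icc 1 (T-1), u t (y t)) + u T (y T) := sum_Icc_split hT _
      _ ≤ φ w := by linarith
  have hφmid : ∀ w₁ w₂ : ℝ, φ w₁ + φ w₂ ≤ 2 * φ ((w₁ + w₂) / 2) := by
    intro w₁ w₂
    refine le_of_forall_pos_le_add fun ε hε => ?_
    have h₁ : φ w₁ - ε/2 < φ w₁ := by linarith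
    have h₂ : φ w₂ - ε/2 < φ w₂ := by linarith
    obtain ⟨v₁, ⟨Y₁, hY₁, rfl⟩, hv₁⟩ := exists_lt_of_lt_csSup
      (hSne _ measurable_const ⟨|w₁|, Filter.Eventually.of_forall fun _ => le_rfl⟩) h₁
    obtain ⟨v₂, ⟨Y₂, hY₂, rfl⟩, hv₂⟩ := exists_lt_of_lt_csSup
      (hSne _ measurable_const ⟨|w₂|, Filter.Eventually.of_forall fun _ => le_rfl⟩) h₂
    obtain ⟨halloc, hval⟩ := alloc_mix hℱle hBpos hBmeas hucont huconc
      (l := 1/2) (by norm_num) (by norm_num) hY₁ hY₂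
    have half : IsAlloc μ T ℱ B (fun _ => (w₁+w₂)/2)
        (fun t ω => (1 - 1/2) * Y₁ t ω + (1/2) * Y₂ t ω) := by
      refine ⟨halloc.1, ?_⟩
      filter_upwards [halloc.2] with ω h
      rw [h]
      ring
    have hle2 := hval_le _ measurable_const
      ⟨|(w₁+w₂)/2|, Filter.Eventually.of_forall fun _ => le_rfl⟩ _ ⟨_, half, rfl⟩
    linarith
  have hφnc : ¬ ∀ w₁ w₂ : ℝ, φ w₁ = φ w₂ := by
    intro hconst
    have hbdd : ∀ t ∈ Icc 1 T, BddAbove (Set.range (u t)) := by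
      intro t ht
      refine ⟨φ 0 - ∑ t' ∈ (Icc 1 T).erase t, u t' 0, ?_⟩
      rintro x ⟨x0, rfl⟩
      have h := hK1 (fun t' => if t' = t then x0 else 0)
        (∑ t' ∈ Icc 1 T, if t' = t then x0 else 0) le_rfl
      rw [hconst (∑ t' ∈ Icc 1 T, if t' = t then x0 else 0) 0] at h
      rw [← Finset.add_sum_erase _ (fun t' => u t' (if t' = t then x0 else 0)) ht] at h
      have he : ∑ t' ∈ (Icc 1 T).erase t, u t' (if t' = t then x0 else 0)
          = ∑ t' ∈ (Icc 1 T).erase t, u t' 0 :=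
        Finset.sum_congr rfl fun t' ht' => by rw [if_neg (Finset.ne_of_mem_erase ht')]
      rw [he, if_pos rfl] at h
      linarith
    have hstlt : ∀ t ∈ Icc 1 T, ∀ x, u t x < sSup (Set.range (u t)) := fun t ht x =>
      lt_of_lt_of_le (humono t ht (lt_add_one x)) (le_csSup (hbdd t ht) ⟨x+1, rfl⟩)
    have hGm : ∀ m : ℝ, (∑ t ∈ Icc 1 T, u t m) ≤ φ 0 := by
      intro m
      have h := hK1 (fun _ => m) (∑ _t ∈ Icc 1 T, m) le_rfl
      rwa [hconst _ 0] at h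
    set η : ℝ := ((Icc 1 T).image (fun t => sSup (Set.range (u t)) - u t 0)).min'
      (Finset.Nonempty.image ⟨T, hTmem⟩ _) with hη
    have hηpos : 0 < η := by
      refine (Finset.lt_min'_iff _ _).2 fun y hy => ?_
      obtain ⟨t, ht, rfl⟩ := Finset.mem_image.mp hy
      exact sub_pos.2 (hstlt t ht 0)
    have hηle : ∀ t ∈ Icc 1 T, η ≤ sSup (Set.range (u t)) - u t 0 :=
      fun t ht => Finset.min'_le _ _ (Finset.mem_image_of_mem _ ht)
    have hφ0le : φ 0 ≤ (∑ t ∈ Icc 1 T, sSup (Set.range (u t))) - η := by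
      refine csSup_le (hSne _ measurable_const
        ⟨0, Filter.Eventually.of_forall fun _ => by simp⟩) ?_
      rintro v ⟨Y, hY, rfl⟩
      rw [allocVal_eq hℱle hBmeas hBpos hucont hY]
      have hpt : ∀ᵐ ω ∂μ, (∑ t ∈ Icc 1 T, u t (Y t ω / B t ω))
          ≤ (∑ t ∈ Icc 1 T, sSup (Set.range (u t))) - η := by
        filter_upwards [hY.2] with ω hsum
        have hsum0 : ∑ t ∈ Icc 1 T, Y t ω / B t ω = 0 := hsum
        have hex : ∃ t₀ ∈ Icc 1 T, Y t₀ ω / B t₀ ω ≤ 0 := by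
          by_contra hcon2
          push_neg at hcon2
          have := Finset.sum_pos (fun t ht => hcon2 t ht) ⟨T, hTmem⟩
          rw [hsum0] at this
          exact lt_irrefl _ this
        obtain ⟨t₀, ht₀, hle0⟩ := hex
        calc ∑ t ∈ Icc 1 T, u t (Y t ω / B t ω)
            ≤ ∑ t ∈ Icc 1 T, (if t = t₀ then u t₀ 0 else sSup (Set.range (u t))) := by
              refine Finset.sum_le_sum fun t ht => ?_
              by_cases h : t = t₀
              · subst h
                rw [if_pos rfl]
                exact (humono t ht).monotone hle0
              · rw [if_neg h]
                exact (hstlt t ht _).le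
          _ = u t₀ 0 + ∑ t ∈ (Icc 1 T).erase t₀, sSup (Set.range (u t)) := by
              rw [← Finset.add_sum_erase _ _ ht₀, if_pos rfl]
              congr 1
              exact Finset.sum_congr rfl fun t htm => by
                rw [if_neg (Finset.ne_of_mem_erase htm)]
          _ = (∑ t ∈ Icc 1 T, sSup (Set.range (u t)))
                - (sSup (Set.range (u t₀)) - u t₀ 0) := by
              rw [← Finset.add_sum_erase _ (fun t => sSup (Set.range (u t))) ht₀]
              ring
          _ ≤ _ := by linarith [hηle t₀ ht₀]
      have hintF : Integrable (fun ω => ∑ t ∈ Icc 1 T, u t (Y t ω / B t ω)) μ :=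
        integrable_finset_sum _ fun t ht => alloc_integrable hℱle hBmeas hBpos hucont hY ht
      have hm2 := integral_mono_ae hintF (integrable_const _) hpt
      simpa [integral_const, measure_univ] using hm2
    have hxs : ∀ t, ∃ x : ℝ, t ∈ Icc 1 T → sSup (Set.range (u t)) - η/T < u t x := by
      intro t
      by_cases ht : t ∈ Icc 1 T
      · have hTpos : (0:ℝ) < T := by
          have : (1:ℕ) ≤ T := hT
          exact_mod_cast Nat.lt_of_lt_of_le Nat.zero_lt_one this
        have hlt : sSup (Set.range (u t)) - η/T < sSup (Set.range (u t)) := by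
          have : (0:ℝ) < η/T := div_pos hηpos hTpos
          linarith
        obtain ⟨_, ⟨x, rfl⟩, hx⟩ := exists_lt_of_lt_csSup (Set.range_nonempty (u t)) hlt
        exact ⟨x, fun _ => hx⟩
      · exact ⟨0, fun h => absurd h ht⟩
    choose xs hxs' using hxs
    have hsum_lt : (∑ t ∈ Icc 1 T, (sSup (Set.range (u t)) - η/T))
        < ∑ t ∈ Icc 1 T, u t ((Icc 1 T).sup' ⟨T, hTmem⟩ xs) := by
      refine Finset.sum_lt_sum_of_nonempty ⟨T, hTmem⟩ fun t ht => ?_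
      exact lt_of_lt_of_le (hxs' t ht) ((humono t ht).monotone (Finset.le_sup' xs ht))
    have hcard : ((Icc 1 T).card : ℝ) = T := by
      rw [Nat.card_Icc]
      push_cast [Nat.add_sub_cancel]
      ring
    have hTne : (T:ℝ) ≠ 0 := Nat.cast_ne_zero.mpr (by omega)
    have hsum_eq : (∑ t ∈ Icc 1 T, (sSup (Set.range (u t)) - η/T))
        = (∑ t ∈ Icc 1 T, sSup (Set.range (u t))) - η := by
      rw [Finset.sum_sub_distrib, Finset.sum_const, nsmul_eq_mul, hcard]
      field_simp
    linarith [hGm ((Icc 1 T).sup' ⟨T, hTmem⟩ xs)]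
  have hdecay : ∀ R : ℝ, ∃ w : ℝ, φ w ≤ R := by
    intro R
    push_neg at hφnc
    obtain ⟨a, b, hab⟩ := hφnc
    obtain ⟨x₁, x₂, hlt⟩ : ∃ x₁ x₂ : ℝ, φ x₁ < φ x₂ := by
      rcases lt_or_gt_of_ne hab with h | h
      exacts [⟨a, b, h⟩, ⟨b, a, h⟩]
    have hdpos : 0 < φ x₂ - φ x₁ := sub_pos.2 hlt
    have hkey : ∀ k : ℕ, φ (x₂ + 2^k * (x₁ - x₂)) ≤ φ x₂ - 2^k * (φ x₂ - φ x₁) := by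
      intro k
      induction k with
      | zero =>
          have h0 : x₂ + 2^(0:ℕ) * (x₁ - x₂) = x₁ := by ring
          rw [h0]
          norm_num
      | succ k ih =>
          have hmidpt : ((x₂ + 2^(k+1) * (x₁ - x₂)) + x₂)/2 = x₂ + 2^k * (x₁ - x₂) := by
            rw [pow_succ]
            ring
          have hm := hφmid (x₂ + 2^(k+1) * (x₁ - x₂)) x₂
          rw [hmidpt] at hm
          have hpow : (2:ℝ)^(k+1) = 2 * 2^k := by
            rw [pow_succ]
            ring
          rw [hpow] at hm ⊢
          linarith
    obtain ⟨k, hk⟩ := pow_unbounded_of_one_lt ((φ x₂ - R)/(φ x₂ - φ x₁)) (one_lt_two (α := ℝ))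
    refine ⟨x₂ + 2^k * (x₁ - x₂), ?_⟩
    rw [div_lt_iff₀ hdpos] at hk
    linarith [hkey k]
  -- final contradiction
  obtain ⟨w, hwle⟩ := hdecay (u T 0 - s + (φ C + min 0 (2*(c - 2 - φ C)/pδ)))
  have hβle : (φ w - u T 0 + s) - φ C ≤ min 0 (2*(c - 2 - φ C)/pδ) := by linarith
  have hdM : 0 < s - u T (C - w) := sub_pos.2 (hslt (C - w))
  obtain ⟨Mv, hMv⟩ : ∃ x : ℝ, s - (s - u T (C - w))/2 < u T x := by
    obtain ⟨_, ⟨x, rfl⟩, hx⟩ := exists_lt_of_lt_csSup (Set.range_nonempty (u T))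
      (show s - (s - u T (C - w))/2 < s by linarith)
    exact ⟨x, hx⟩
  set ε : ℝ := min 1 (pδ * (s - u T (C - w))/4) with hεdef
  have hεpos : 0 < ε := lt_min one_pos (by positivity)
  have hε1 : ε ≤ 1 := min_le_left _ _
  obtain ⟨v, ⟨Y, hY, rfl⟩, hv⟩ := exists_lt_of_lt_csSup (hSne Z hZmeas ⟨C1, hC1⟩)
    (show c - ε < c by linarith)
  obtain ⟨CY, hCY0, hCY⟩ := alloc_bdd hBpos hY hTmem
  obtain ⟨n, hn⟩ := exists_nat_ge ((Mv + CY)/δ)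
  have hnδ : Mv + CY ≤ n*δ := by
    rw [div_le_iff₀ hδpos] at hn
    linarith
  have hGmeas : Measurable[ℱ T] (fun ω => (n:ℝ)*(W ω - Z ω)) :=
    (hWmeas.sub hZmeas).const_mul _
  have hGbdd : ∀ᵐ ω ∂μ, |(n:ℝ)*(W ω - Z ω)| ≤ (n:ℝ)*(C+C) := by
    filter_upwards [hCW, hCZ] with ω h1 h2
    rw [abs_mul, Nat.abs_cast]
    have h3 : |W ω - Z ω| ≤ C + C := le_trans (abs_sub _ _) (by linarith)
    have hn0 : (0:ℝ) ≤ (n:ℝ) := Nat.cast_nonneg n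
    nlinarith
  obtain ⟨hsal, hsval⟩ := alloc_shift hT hℱle hBpos hBmeas hBbdd hucont hY hGmeas hGbdd
  have hgainle : (∫ ω, (u T (Y T ω / B T ω + (n:ℝ)*(W ω - Z ω))
      - u T (Y T ω / B T ω)) ∂μ) ≤ c - allocVal μ T u B Y := by
    have hle3 := hstep2 n _ hsal
    rw [hsval] at hle3
    linarith
  set Bev : Set Ω := Aδ ∩ {ω | Y T ω / B T ω ≤ C - w} with hBev
  have hmeasYT : Measurable (fun ω => Y T ω / B T ω) := alloc_meas hℱle hBmeas hY hTmem
  have hBevmeas : MeasurableSet Bev :=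
    hAδmeas.inter (measurableSet_le hmeasYT measurable_const)
  have hptgain : ∀ᵐ ω ∂μ, Bev.indicator (fun _ => (s - u T (C - w))/2) ω
      ≤ u T (Y T ω / B T ω + (n:ℝ)*(W ω - Z ω)) - u T (Y T ω / B T ω) := by
    filter_upwards [hCY, hWZ] with ω h1 h2
    by_cases hA : ω ∈ Bev
    · rw [Set.indicator_of_mem hA]
      have hA1 : δ ≤ W ω - Z ω := hA.1
      have hA2 : Y T ω / B T ω ≤ C - w := hA.2
      have hup : Mv ≤ Y T ω / B T ω + (n:ℝ)*(W ω - Z ω) := by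
        have hmul : (n:ℝ)*δ ≤ (n:ℝ)*(W ω - Z ω) :=
          mul_le_mul_of_nonneg_left hA1 (Nat.cast_nonneg n)
        have h1' : -CY ≤ Y T ω / B T ω := (abs_le.mp h1).1
        linarith
      have hu1 := (humono T hTmem).monotone hup
      have hu2 := (humono T hTmem).monotone hA2
      linarith
    · rw [Set.indicator_of_notMem hA]
      have hmul : (0:ℝ) ≤ (n:ℝ)*(W ω - Z ω) :=
        mul_nonneg (Nat.cast_nonneg n) (sub_nonneg.2 h2)
      have : Y T ω / B T ω ≤ Y T ω / B T ω + (n:ℝ)*(W ω - Z ω) := by linarith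
      exact sub_nonneg.2 ((humono T hTmem).monotone this)
  have hintdiff : Integrable (fun ω => u T (Y T ω / B T ω + (n:ℝ)*(W ω - Z ω))
      - u T (Y T ω / B T ω)) μ := by
    refine Integrable.sub ?_ (alloc_integrable hℱle hBmeas hBpos hucont hY hTmem)
    refine integrable_comp (hmeasYT.add ((hWm.sub hZm).const_mul _))
      (C := CY + (n:ℝ)*(C+C)) ?_ (hucont T hTmem)
    filter_upwards [hCY, hCW, hCZ] with ω h1 h2 h3
    calc |Y T ω / B T ω + (n:ℝ)*(W ω - Z ω)|
        ≤ |Y T ω / B T ω| + |(n:ℝ)*(W ω - Z ω)| := abs_add_le _ _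
      _ ≤ CY + (n:ℝ)*(C+C) := by
          rw [abs_mul, Nat.abs_cast]
          have h4 : |W ω - Z ω| ≤ C + C := le_trans (abs_sub _ _) (by linarith)
          have hn0 : (0:ℝ) ≤ (n:ℝ) := Nat.cast_nonneg n
          nlinarith
  have hBevle := integral_mono_ae ((integrable_const _).indicator hBevmeas)
    hintdiff hptgain
  rw [integral_indicator_const _ hBevmeas] at hBevle
  have hμBev : (μ Bev).toReal * ((s - u T (C - w))/2) < ε := by
    have hcv : c - allocVal μ T u B Y < ε := by linarith
    have := hBevle
    rw [smul_eq_mul, measureReal_def] at this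
    linarith
  have hμBev2 : (μ Bev).toReal < pδ/2 := by
    have hεle : ε ≤ pδ * (s - u T (C - w))/4 := min_le_right _ _
    nlinarith [ENNReal.toReal_nonneg (a := μ Bev)]
  set Aev : Set Ω := Aδ ∩ {ω | C - w < Y T ω / B T ω} with hAev
  have hAevmeas : MeasurableSet Aev :=
    hAδmeas.inter (measurableSet_lt measurable_const hmeasYT)
  have hμA : pδ/2 ≤ (μ Aev).toReal := by
    have hcover : Aδ ⊆ Aev ∪ Bev := by
      intro ω hω
      rcases le_or_gt (Y T ω / B T ω) (C - w) with h | h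
      · exact Or.inr ⟨hω, h⟩
      · exact Or.inl ⟨hω, h⟩
    have h1 : μ Aδ ≤ μ Aev + μ Bev :=
      le_trans (measure_mono hcover) (measure_union_le _ _)
    have h2 : (μ Aδ).toReal ≤ (μ Aev).toReal + (μ Bev).toReal := by
      rw [← ENNReal.toReal_add (measure_ne_top μ _) (measure_ne_top μ _)]
      exact ENNReal.toReal_mono
        (ENNReal.add_ne_top.2 ⟨measure_ne_top μ _, measure_ne_top μ _⟩) h1
    linarith
  have hFbd : ∀ᵐ ω ∂μ, (∑ t ∈ Icc 1 T, u t (Y t ω / B t ω))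
      ≤ φ C + Aev.indicator (fun _ => (φ w - u T 0 + s) - φ C) ω := by
    filter_upwards [hY.2, hCZ] with ω hsum hcz
    by_cases hA : ω ∈ Aev
    · rw [Set.indicator_of_mem hA]
      have hm : C - w < Y T ω / B T ω := hA.2
      have hsum_upd : ∑ t ∈ Icc 1 T, Function.update (fun t => Y t ω / B t ω) T 0 t
          = (∑ t ∈ Icc 1 T, Y t ω / B t ω) - Y T ω / B T ω := by
        rw [← Finset.add_sum_erase _ (Function.update (fun t => Y t ω / B t ω) T 0) hTmem,
          Function.update_self,
          ← Finset.add_sum_erase (Icc 1 T) (fun t => Y t ω / B t ω) hTmem]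
        have he : ∑ t ∈ (Icc 1 T).erase T, Function.update (fun t => Y t ω / B t ω) T 0 t
            = ∑ t ∈ (Icc 1 T).erase T, Y t ω / B t ω :=
          Finset.sum_congr rfl fun t ht => by
            rw [Function.update_of_ne (Finset.ne_of_mem_erase ht)]
        rw [he]
        ring
      have hargle : (∑ t ∈ Icc 1 T, Function.update (fun t => Y t ω / B t ω) T 0 t) ≤ w := by
        rw [hsum_upd, hsum]
        have : Z ω ≤ C := (abs_le.mp hcz).2
        linarith
      have hupd := hK1 _ _ hargle
      have hval_upd : ∑ t ∈ Icc 1 T, u t (Function.update (fun t => Y t ω / B t ω) T 0 t)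
          = u T 0 + ∑ t ∈ (Icc 1 T).erase T, u t (Y t ω / B t ω) := by
        rw [← Finset.add_sum_erase _
          (fun t => u t (Function.update (fun t => Y t ω / B t ω) T 0 t)) hTmem,
          Function.update_self]
        congr 1
        exact Finset.sum_congr rfl fun t ht => by
          rw [Function.update_of_ne (Finset.ne_of_mem_erase ht)]
      have hF : ∑ t ∈ Icc 1 T, u t (Y t ω / B t ω)
          = u T (Y T ω / B T ω) + ∑ t ∈ (Icc 1 T).erase T, u t (Y t ω / B t ω) :=
        (Finset.add_sum_erase _ (fun t => u t (Y t ω / B t ω)) hTmem).symm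
      rw [hval_upd] at hupd
      have hsY := (hslt (Y T ω / B T ω)).le
      rw [hF]
      linarith
    · rw [Set.indicator_of_notMem hA, add_zero]
      have h := hK1 (fun t => Y t ω / B t ω) C (by rw [hsum]; exact (abs_le.mp hcz).2)
      exact h
  have hintF : Integrable (fun ω => ∑ t ∈ Icc 1 T, u t (Y t ω / B t ω)) μ :=
    integrable_finset_sum _ fun t ht => alloc_integrable hℱle hBmeas hBpos hucont hY ht
  have hintRHS : Integrable
      (fun ω => φ C + Aev.indicator (fun _ => (φ w - u T 0 + s) - φ C) ω) μ :=
    (integrable_const _).add ((integrable_const _).indicator hAevmeas)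
  have hfinal := integral_mono_ae hintF hintRHS hFbd
  rw [integral_add (integrable_const _) ((integrable_const _).indicator hAevmeas),
    integral_const, integral_indicator_const _ hAevmeas] at hfinal
  simp only [measureReal_def, measure_univ, ENNReal.toReal_one, one_smul, smul_eq_mul] at hfinal
  have hvalY : allocVal μ T u B Y = ∫ ω, ∑ t ∈ Icc 1 T, u t (Y t ω / B t ω) ∂μ :=
    allocVal_eq hℱle hBmeas hBpos hucont hY
  have hβΓ0 : (φ w - u T 0 + s) - φ C ≤ 0 := le_trans hβle (min_le_left _ _)
  have hstepA : (μ Aev).toReal * ((φ w - u T 0 + s) - φ C)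
      ≤ (pδ/2) * ((φ w - u T 0 + s) - φ C) :=
    mul_le_mul_of_nonpos_right hμA hβΓ0
  have hstepB : (pδ/2) * ((φ w - u T 0 + s) - φ C) ≤ c - 2 - φ C := by
    have h1 : (φ w - u T 0 + s) - φ C ≤ 2*(c - 2 - φ C)/pδ := le_trans hβle (min_le_right _ _)
    have h2 : (pδ/2) * ((φ w - u T 0 + s) - φ C) ≤ (pδ/2) * (2*(c - 2 - φ C)/pδ) :=
      mul_le_mul_of_nonneg_left h1 (by positivity)
    have hpδ0 : pδ ≠ 0 := ne_of_gt hpδpos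
    have h3 : (pδ/2) * (2*(c - 2 - φ C)/pδ) = c - 2 - φ C := by
      field_simp
    linarith
  have hYle : allocVal μ T u B Y ≤ c - 2 := by
    rw [hvalY]
    linarith
  linarith
end
end

section
/- For each Z ∈ L^∞ and initial wealth w ∈ ℝ there exists a unique real number H(Z) with U(w + H(Z) − Z) = U(w); indeed the map x ↦ U(w + x − Z) is concave, continuous and strictly increasing on ℝ, is < U(w) for x small enough and > U(w) for x large enough. -/
open MeasureTheory Finset Real

noncomputable section

/-- Existence and uniqueness of the indifference price (Definition 2.6 and the
discussion preceding it): `x ↦ U(w + x - Z)` is concave, continuous, strictly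
increasing, eventually below and eventually above `U(w)`, and there is a unique
`H(Z)` with `U(w + H(Z) - Z) = U(w)`. -/
theorem indifference_price_exists_unique
    {Ω : Type*} [mΩ : MeasurableSpace Ω] (μ : Measure Ω) [IsProbabilityMeasure μ]
    (T : ℕ) (hT : 1 ≤ T)
    (ℱ : ℕ → MeasurableSpace Ω) (hℱmono : Monotone ℱ) (hℱle : ∀ t, ℱ t ≤ mΩ)
    (r : ℕ → Ω → ℝ)
    (hr_meas : ∀ t ∈ Finset.Icc 1 T, Measurable[ℱ (t - 1)] (r t))
    (hr_nonneg : ∀ t ∈ Finset.Icc 1 T, ∀ ω, 0 ≤ r t ω)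
    (hr_bdd : ∀ t ∈ Finset.Icc 1 T, ∃ C : ℝ, ∀ ω, r t ω ≤ C)
    (B : ℕ → Ω → ℝ) (hB : ∀ t ω, B t ω = ∏ k ∈ Finset.Icc 1 t, (1 + r k ω))
    (u : ℕ → ℝ → ℝ)
    (hu_conc : ∀ t ∈ Finset.Icc 1 T, StrictConcaveOn ℝ (Set.univ : Set ℝ) (u t))
    (hu_diff : ∀ t ∈ Finset.Icc 1 T, ContDiff ℝ 1 (u t))
    (hu_deriv : ∀ t ∈ Finset.Icc 1 T, ∀ x : ℝ, 0 < deriv (u t) x)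
    (hUfin : ∀ V : Ω → ℝ, Measurable[ℱ T] V → (∃ C : ℝ, ∀ᵐ ω ∂μ, |V ω| ≤ C) →
      BddAbove {s : ℝ | ∃ Y, IsAlloc μ T ℱ B V Y ∧ s = allocVal μ T u B Y})
    (Z : Ω → ℝ)
    (hZmeas : Measurable[ℱ T] Z) (hZbdd : ∃ C : ℝ, ∀ᵐ ω ∂μ, |Z ω| ≤ C)
    (w : ℝ) :
    (∃! h : ℝ, Util μ T ℱ u B (fun ω => w + h - Z ω) = Util μ T ℱ u B (fun _ => w)) ∧
    ConcaveOn ℝ (Set.univ : Set ℝ) (fun x => Util μ T ℱ u B (fun ω => w + x - Z ω)) ∧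
    Continuous (fun x => Util μ T ℱ u B (fun ω => w + x - Z ω)) ∧
    StrictMono (fun x => Util μ T ℱ u B (fun ω => w + x - Z ω)) ∧
    (∃ x₀ : ℝ, ∀ x ≤ x₀,
      Util μ T ℱ u B (fun ω => w + x - Z ω) < Util μ T ℱ u B (fun _ => w)) ∧
    (∃ x₁ : ℝ, ∀ x, x₁ ≤ x →
      Util μ T ℱ u B (fun _ => w) < Util μ T ℱ u B (fun ω => w + x - Z ω)) := by
  classical
  have htT : T ∈ Finset.Icc 1 T := Finset.mem_Icc.mpr ⟨hT, le_rfl⟩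
  have hIne : (Finset.Icc 1 T).Nonempty := ⟨T, htT⟩
  -- basic facts about u
  have hu_mono : ∀ t ∈ Finset.Icc 1 T, StrictMono (u t) := fun t ht =>
    strictMono_of_deriv_pos (hu_deriv t ht)
  have hu_cont : ∀ t ∈ Finset.Icc 1 T, Continuous (u t) := fun t ht =>
    (hu_diff t ht).continuous
  have hu_cc : ∀ t ∈ Finset.Icc 1 T, ConcaveOn ℝ Set.univ (u t) := fun t ht =>
    (hu_conc t ht).concaveOn
  -- basic facts about B
  have hsub : ∀ t ∈ Finset.Icc 1 T, ∀ k ∈ Finset.Icc 1 t, k ∈ Finset.Icc 1 T := by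
    intro t ht k hk
    rw [Finset.mem_Icc] at *
    exact ⟨hk.1, hk.2.trans ht.2⟩
  have hB1 : ∀ t ∈ Finset.Icc 1 T, ∀ ω, 1 ≤ B t ω := by
    intro t ht ω
    rw [hB]
    calc (1:ℝ) = ∏ _k ∈ Finset.Icc 1 t, 1 := by simp
    _ ≤ ∏ k ∈ Finset.Icc 1 t, (1 + r k ω) := by
        apply Finset.prod_le_prod (fun _ _ => zero_le_one)
        intro k hk
        have := hr_nonneg k (hsub t ht k hk) ω
        linarith
  have hBpos : ∀ t ∈ Finset.Icc 1 T, ∀ ω, 0 < B t ω := fun t ht ω =>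
    lt_of_lt_of_le one_pos (hB1 t ht ω)
  have hBne : ∀ t ∈ Finset.Icc 1 T, ∀ ω, B t ω ≠ 0 := fun t ht ω => (hBpos t ht ω).ne'
  -- measurability of B
  have hBm : ∀ t ∈ Finset.Icc 1 T, Measurable[ℱ t] (B t) := by
    intro t ht
    have hfun : B t = fun ω => ∏ k ∈ Finset.Icc 1 t, (1 + r k ω) := funext (hB t)
    rw [hfun]
    apply Finset.measurable_prod
    intro k hk
    have hk1 : k - 1 ≤ t := le_trans (Nat.sub_le k 1) (Finset.mem_Icc.mp hk).2
    exact measurable_const.add ((hr_meas k (hsub t ht k hk)).mono (hℱmono hk1) le_rfl)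
  have hBmT : Measurable[ℱ T] (B T) := hBm T htT
  have hBmΩ : ∀ t ∈ Finset.Icc 1 T, Measurable (B t) := fun t ht =>
    (hBm t ht).mono (hℱle t) le_rfl
  -- upper bound for B
  have hr_bdd' : ∀ k : ℕ, ∃ C : ℝ, 0 ≤ C ∧ (k ∈ Finset.Icc 1 T → ∀ ω, r k ω ≤ C) := by
    intro k
    by_cases hk : k ∈ Finset.Icc 1 T
    · obtain ⟨C, hC⟩ := hr_bdd k hk
      exact ⟨max C 0, le_max_right _ _, fun _ ω => (hC ω).trans (le_max_left _ _)⟩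
    · exact ⟨0, le_rfl, fun h => absurd h hk⟩
  have hBub : ∀ t ∈ Finset.Icc 1 T, ∃ D : ℝ, 1 ≤ D ∧ ∀ ω, B t ω ≤ D := by
    intro t ht
    choose Cr hCr0 hCr using hr_bdd'
    refine ⟨∏ k ∈ Finset.Icc 1 t, (1 + Cr k), ?_, ?_⟩
    · calc (1:ℝ) = ∏ _k ∈ Finset.Icc 1 t, 1 := by simp
      _ ≤ _ := Finset.prod_le_prod (fun _ _ => zero_le_one)
          (fun k _ => by linarith [hCr0 k])
    · intro ω
      rw [hB]
      apply Finset.prod_le_prod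
      · intro k hk
        have := hr_nonneg k (hsub t ht k hk) ω
        linarith
      · intro k hk
        have := hCr k (hsub t ht k hk) ω
        linarith
  -- the discounted coordinate inherits bounds
  have hdivb : ∀ t ∈ Finset.Icc 1 T, ∀ (f : Ω → ℝ) (ω : Ω) (C : ℝ),
      |f ω| ≤ C → |f ω / B t ω| ≤ C := by
    intro t ht f ω C hC
    rw [abs_div, abs_of_pos (hBpos t ht ω)]
    exact le_trans (div_le_self (abs_nonneg _) (hB1 t ht ω)) hC
  -- integrability of bounded measurable compositions
  have hIntC : ∀ t ∈ Finset.Icc 1 T, ∀ (g : Ω → ℝ), Measurable g → ∀ C : ℝ,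
      (∀ᵐ ω ∂μ, |g ω| ≤ C) → Integrable (fun ω => u t (g ω)) μ := by
    intro t ht g hgm C hC
    obtain ⟨M, hM⟩ := (isCompact_Icc (a := -C) (b := C)).exists_bound_of_continuousOn
      (hu_cont t ht).continuousOn
    apply Integrable.mono' (integrable_const M)
      ((hu_cont t ht).measurable.comp hgm).aestronglyMeasurable
    filter_upwards [hC] with ω hω
    exact hM _ (Set.mem_Icc.mpr (abs_le.mp hω))
  have hIntY : ∀ (V : Ω → ℝ) (Y : ℕ → Ω → ℝ), IsAlloc μ T ℱ B V Y →
      ∀ t ∈ Finset.Icc 1 T, Integrable (fun ω => u t (Y t ω / B t ω)) μ := by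
    intro V Y hY t ht
    obtain ⟨C, hC⟩ := (hY.1 t ht).2
    refine hIntC t ht _ (((hY.1 t ht).1.mono (hℱle t) le_rfl).div (hBmΩ t ht)) C ?_
    filter_upwards [hC] with ω hω using hdivb t ht (Y t) ω C hω
  -- trivial allocation
  have htriv : ∀ V : Ω → ℝ, Measurable[ℱ T] V → ∀ C : ℝ, (∀ᵐ ω ∂μ, |V ω| ≤ C) →
      IsAlloc μ T ℱ B V (fun t => if t = T then (fun ω => B T ω * V ω) else (fun _ => 0)) := by
    intro V hVm C hVb
    constructor
    · intro t ht
      by_cases h : t = T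
      · subst t
        simp only [if_pos rfl]
        obtain ⟨D, hD1, hD⟩ := hBub T htT
        refine ⟨hBmT.mul hVm, D * C, ?_⟩
        filter_upwards [hVb] with ω hω
        simp only [if_true]
        rw [abs_mul, abs_of_pos (hBpos T htT ω)]
        calc B T ω * |V ω| ≤ D * |V ω| :=
              mul_le_mul_of_nonneg_right (hD ω) (abs_nonneg _)
        _ ≤ D * C := mul_le_mul_of_nonneg_left hω (by linarith)
      · simp only [if_neg h]
        exact ⟨measurable_const, 0, Filter.Eventually.of_forall (fun ω => by simp)⟩
    · apply Filter.Eventually.of_forall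
      intro ω
      rw [Finset.sum_eq_single_of_mem T htT]
      · simp only [if_pos rfl]
        exact mul_div_cancel_left₀ _ (hBne T htT ω)
      · intro t _ h
        simp [if_neg h]
  have hne : ∀ V : Ω → ℝ, Measurable[ℱ T] V → (∃ C : ℝ, ∀ᵐ ω ∂μ, |V ω| ≤ C) →
      {s : ℝ | ∃ Y, IsAlloc μ T ℱ B V Y ∧ s = allocVal μ T u B Y}.Nonempty := by
    intro V hVm ⟨C, hVb⟩
    exact ⟨_, _, htriv V hVm C hVb, rfl⟩
  have hleU : ∀ V : Ω → ℝ, Measurable[ℱ T] V → (∃ C : ℝ, ∀ᵐ ω ∂μ, |V ω| ≤ C) →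
      ∀ Y : ℕ → Ω → ℝ, IsAlloc μ T ℱ B V Y → allocVal μ T u B Y ≤ Util μ T ℱ u B V := by
    intro V hVm hVb Y hY
    exact le_csSup (hUfin V hVm hVb) ⟨Y, hY, rfl⟩
  have hUle : ∀ V : Ω → ℝ, Measurable[ℱ T] V → (∃ C : ℝ, ∀ᵐ ω ∂μ, |V ω| ≤ C) →
      ∀ c : ℝ, (∀ Y : ℕ → Ω → ℝ, IsAlloc μ T ℱ B V Y → allocVal μ T u B Y ≤ c) →
      Util μ T ℱ u B V ≤ c := by
    intro V hVm hVb c hc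
    apply csSup_le (hne V hVm hVb)
    rintro s ⟨Y, hY, rfl⟩
    exact hc Y hY
  -- monotonicity of Util
  have hmono : ∀ V₁ V₂ : Ω → ℝ, Measurable[ℱ T] V₁ → (∃ C : ℝ, ∀ᵐ ω ∂μ, |V₁ ω| ≤ C) →
      Measurable[ℱ T] V₂ → (∃ C : ℝ, ∀ᵐ ω ∂μ, |V₂ ω| ≤ C) →
      (∀ᵐ ω ∂μ, V₁ ω ≤ V₂ ω) →
      Util μ T ℱ u B V₁ ≤ Util μ T ℱ u B V₂ := by
    intro V₁ V₂ h1m h1b h2m h2b h12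
    apply hUle V₁ h1m h1b
    intro Y hY
    set Y' : ℕ → Ω → ℝ :=
      fun t => if t = T then (fun ω => Y T ω + B T ω * (V₂ ω - V₁ ω)) else Y t with hY'def
    have hY'T : Y' T = fun ω => Y T ω + B T ω * (V₂ ω - V₁ ω) := by
      rw [hY'def]; simp
    have hY'alloc : IsAlloc μ T ℱ B V₂ Y' := by
      constructor
      · intro t ht
        by_cases h : t = T
        · subst t
          rw [hY'T]
          obtain ⟨C, hC⟩ := (hY.1 T htT).2
          obtain ⟨C₁, hC₁⟩ := h1b
          obtain ⟨C₂, hC₂⟩ := h2b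
          obtain ⟨D, hD1, hD⟩ := hBub T htT
          refine ⟨(hY.1 T htT).1.add (hBmT.mul (h2m.sub h1m)), C + D * (|C₂| + |C₁|), ?_⟩
          filter_upwards [hC, hC₁, hC₂] with ω w1 w2 w3
          have hb0 : 0 < B T ω := hBpos T htT ω
          have : |B T ω * (V₂ ω - V₁ ω)| ≤ D * (|C₂| + |C₁|) := by
            rw [abs_mul, abs_of_pos hb0]
            have h1 : |V₂ ω - V₁ ω| ≤ |C₂| + |C₁| := by
              have h2 := abs_sub (V₂ ω) (V₁ ω)
              have h3 := le_abs_self C₁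
              have h4 := le_abs_self C₂
              linarith
            calc B T ω * |V₂ ω - V₁ ω| ≤ D * |V₂ ω - V₁ ω| :=
                  mul_le_mul_of_nonneg_right (hD ω) (abs_nonneg _)
            _ ≤ D * (|C₂| + |C₁|) := mul_le_mul_of_nonneg_left h1 (by linarith)
          calc |Y T ω + B T ω * (V₂ ω - V₁ ω)| ≤ |Y T ω| + |B T ω * (V₂ ω - V₁ ω)| :=
                abs_add_le _ _
          _ ≤ C + D * (|C₂| + |C₁|) := add_le_add w1 this
        · rw [hY'def]; simp only [if_neg h]; exact hY.1 t ht
      · filter_upwards [hY.2] with ω hω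
        rw [← Finset.add_sum_erase _ _ htT]
        rw [← Finset.add_sum_erase _ _ htT] at hω
        have herase : ∀ t ∈ (Finset.Icc 1 T).erase T, Y' t ω / B t ω = Y t ω / B t ω := by
          intro t ht
          rw [hY'def]
          simp [Finset.ne_of_mem_erase ht]
        rw [Finset.sum_congr rfl herase]
        simp only [hY'T]
        have hbne := hBne T htT ω
        have e1 : (Y T ω + B T ω * (V₂ ω - V₁ ω)) / B T ω
            = Y T ω / B T ω + (V₂ ω - V₁ ω) := by
          rw [add_div, mul_div_cancel_left₀ _ hbne]
        rw [e1]
        linarith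
    refine le_trans ?_ (hleU V₂ h2m h2b Y' hY'alloc)
    unfold allocVal
    apply Finset.sum_le_sum
    intro t ht
    by_cases h : t = T
    · subst t
      apply integral_mono_ae (hIntY V₁ Y hY T htT) (hIntY V₂ Y' hY'alloc T htT)
      filter_upwards [h12] with ω hω
      simp only [hY'T]
      have hbne := hBne T htT ω
      have harg : (Y T ω + B T ω * (V₂ ω - V₁ ω)) / B T ω
          = Y T ω / B T ω + (V₂ ω - V₁ ω) := by
        rw [add_div, mul_div_cancel_left₀ _ hbne]
      rw [harg]
      exact (hu_mono T htT).monotone (by linarith)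
    · rw [hY'def]; simp only [if_neg h]; exact le_rfl
  -- concavity of x ↦ Util (V + x)
  have hniceb : ∀ (V : Ω → ℝ) (C x : ℝ), (∀ᵐ ω ∂μ, |V ω| ≤ C) →
      (∀ᵐ ω ∂μ, |V ω + x| ≤ C + |x|) := by
    intro V C x hC
    filter_upwards [hC] with ω hω
    calc |V ω + x| ≤ |V ω| + |x| := abs_add_le _ _
    _ ≤ C + |x| := by linarith
  have hconcave : ∀ (V : Ω → ℝ), Measurable[ℱ T] V → ∀ CV : ℝ, (∀ᵐ ω ∂μ, |V ω| ≤ CV) →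
      ConcaveOn ℝ Set.univ (fun x => Util μ T ℱ u B (fun ω => V ω + x)) := by
    intro V hVm CV hVb
    have hnm : ∀ x : ℝ, Measurable[ℱ T] (fun ω => V ω + x) := fun x => hVm.add_const x
    have hnb : ∀ x : ℝ, ∃ C : ℝ, ∀ᵐ ω ∂μ, |V ω + x| ≤ C := fun x =>
      ⟨CV + |x|, hniceb V CV x hVb⟩
    refine ⟨convex_univ, ?_⟩
    intro x _ y _ a b ha hb hab
    simp only [smul_eq_mul]
    set g : ℝ → ℝ := fun x => Util μ T ℱ u B (fun ω => V ω + x) with hg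
    rcases eq_or_lt_of_le ha with ha0 | ha0
    · have : b = 1 := by linarith
      simp [← ha0, this]
    rcases eq_or_lt_of_le hb with hb0 | hb0
    · have : a = 1 := by linarith
      simp [← hb0, this]
    apply le_of_forall_pos_le_add
    intro ε hε
    obtain ⟨sa, ⟨Ya, hYa, rfl⟩, hsa⟩ :=
      exists_lt_of_lt_csSup (hne _ (hnm x) (hnb x)) (by linarith : g x - ε < g x)
    obtain ⟨sb, ⟨Yb, hYb, rfl⟩, hsb⟩ :=
      exists_lt_of_lt_csSup (hne _ (hnm y) (hnb y)) (by linarith : g y - ε < g y)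
    set Yc : ℕ → Ω → ℝ := fun t ω => a * Ya t ω + b * Yb t ω with hYc
    have hYcalloc : IsAlloc μ T ℱ B (fun ω => V ω + (a * x + b * y)) Yc := by
      constructor
      · intro t ht
        obtain ⟨Ca, hCa⟩ := (hYa.1 t ht).2
        obtain ⟨Cb, hCb⟩ := (hYb.1 t ht).2
        refine ⟨((hYa.1 t ht).1.const_mul a).add ((hYb.1 t ht).1.const_mul b),
          |a| * |Ca| + |b| * |Cb|, ?_⟩
        filter_upwards [hCa, hCb] with ω w1 w2
        calc |a * Ya t ω + b * Yb t ω| ≤ |a * Ya t ω| + |b * Yb t ω| := abs_add_le _ _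
        _ = |a| * |Ya t ω| + |b| * |Yb t ω| := by rw [abs_mul, abs_mul]
        _ ≤ |a| * |Ca| + |b| * |Cb| := by
            have h3 := mul_le_mul_of_nonneg_left (w1.trans (le_abs_self Ca)) (abs_nonneg a)
            have h4 := mul_le_mul_of_nonneg_left (w2.trans (le_abs_self Cb)) (abs_nonneg b)
            linarith
      · filter_upwards [hYa.2, hYb.2] with ω w1 w2
        have : ∀ t ∈ Finset.Icc 1 T, Yc t ω / B t ω
            = a * (Ya t ω / B t ω) + b * (Yb t ω / B t ω) := by
          intro t ht
          rw [hYc]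
          rw [add_div, mul_div_assoc, mul_div_assoc]
        rw [Finset.sum_congr rfl this, Finset.sum_add_distrib, ← Finset.mul_sum,
          ← Finset.mul_sum, w1, w2]
        linear_combination (V ω) * hab
    have hval : a * allocVal μ T u B Ya + b * allocVal μ T u B Yb
        ≤ allocVal μ T u B Yc := by
      unfold allocVal
      rw [Finset.mul_sum, Finset.mul_sum, ← Finset.sum_add_distrib]
      apply Finset.sum_le_sum
      intro t ht
      have hia := hIntY _ Ya hYa t ht
      have hib := hIntY _ Yb hYb t ht
      have hic := hIntY _ Yc hYcalloc t ht
      rw [← integral_const_mul, ← integral_const_mul, ← integral_add (hia.const_mul a)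
        (hib.const_mul b)]
      apply integral_mono_ae ((hia.const_mul a).add (hib.const_mul b)) hic
      apply Filter.Eventually.of_forall
      intro ω
      simp only [hYc, add_div, mul_div_assoc]
      have := (hu_cc t ht).2 (Set.mem_univ (Ya t ω / B t ω))
        (Set.mem_univ (Yb t ω / B t ω)) ha hb hab
      simpa using this
    have hfin : allocVal μ T u B Yc ≤ g (a * x + b * y) :=
      hleU _ (hnm _) (hnb _) Yc hYcalloc
    have h5 : a * (g x - ε) ≤ a * allocVal μ T u B Ya :=
      mul_le_mul_of_nonneg_left hsa.le ha
    have h6 : b * (g y - ε) ≤ b * allocVal μ T u B Yb :=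
      mul_le_mul_of_nonneg_left hsb.le hb
    have : a * g x + b * g y - ε ≤ g (a * x + b * y) := by nlinarith
    linarith
  -- the spread allocation: Ỹ_t = c for t < T, Ỹ_T = V + c
  have hφ : ∀ (V : Ω → ℝ), Measurable[ℱ T] V → ∀ CV : ℝ, 0 ≤ CV → (∀ᵐ ω ∂μ, |V ω| ≤ CV) →
      ∀ c : ℝ,
      (∫ ω, u T (V ω + c) ∂μ) + ∑ t ∈ (Finset.Icc 1 T).erase T, u t c
        ≤ Util μ T ℱ u B (fun ω => V ω + T * c) := by
    intro V hVm CV hCV0 hVb c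
    have hVmΩ : Measurable V := hVm.mono (hℱle T) le_rfl
    set Yφ : ℕ → Ω → ℝ := fun t ω => B t ω * (c + if t = T then V ω else 0) with hYφ
    have halloc : IsAlloc μ T ℱ B (fun ω => V ω + T * c) Yφ := by
      constructor
      · intro t ht
        obtain ⟨D, hD1, hD⟩ := hBub t ht
        constructor
        · by_cases h : t = T
          · subst t
            have hfun : Yφ T = fun ω => B T ω * (c + V ω) := by
              rw [hYφ]; simp
            rw [hfun]
            exact hBmT.mul (measurable_const.add hVm)
          · have hfun : Yφ t = fun ω => B t ω * c := by
              rw [hYφ]; simp [h]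
            rw [hfun]
            exact (hBm t ht).mul measurable_const
        · refine ⟨D * (|c| + CV), ?_⟩
          filter_upwards [hVb] with ω hω
          rw [hYφ]
          simp only
          rw [abs_mul, abs_of_pos (hBpos t ht ω)]
          have h1 : |c + if t = T then V ω else 0| ≤ |c| + CV := by
            by_cases h : t = T
            · simp only [if_pos h]
              calc |c + V ω| ≤ |c| + |V ω| := abs_add_le _ _
              _ ≤ |c| + CV := by linarith
            · simp only [if_neg h]
              rw [add_zero]
              linarith
          calc B t ω * |c + if t = T then V ω else 0|
              ≤ D * |c + if t = T then V ω else 0| :=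
                mul_le_mul_of_nonneg_right (hD ω) (abs_nonneg _)
          _ ≤ D * (|c| + CV) := mul_le_mul_of_nonneg_left h1 (by linarith)
      · apply Filter.Eventually.of_forall
        intro ω
        have hterm : ∀ t ∈ Finset.Icc 1 T, Yφ t ω / B t ω
            = c + if t = T then V ω else 0 := by
          intro t ht
          rw [hYφ]
          exact mul_div_cancel_left₀ _ (hBne t ht ω)
        rw [Finset.sum_congr rfl hterm, Finset.sum_add_distrib, Finset.sum_const,
          Finset.sum_ite_eq' (Finset.Icc 1 T) T (fun _ => V ω), if_pos htT,
          Nat.card_Icc]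
        simp [nsmul_eq_mul]
        ring
    have hval : allocVal μ T u B Yφ
        = (∫ ω, u T (V ω + c) ∂μ) + ∑ t ∈ (Finset.Icc 1 T).erase T, u t c := by
      unfold allocVal
      have hterm : ∀ t ∈ Finset.Icc 1 T, (∫ ω, u t (Yφ t ω / B t ω) ∂μ)
          = ∫ ω, u t (c + if t = T then V ω else 0) ∂μ := by
        intro t ht
        congr 1
        funext ω
        rw [hYφ]
        rw [mul_div_cancel_left₀ _ (hBne t ht ω)]
      rw [Finset.sum_congr rfl hterm, ← Finset.add_sum_erase _ _ htT]
      congr 1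
      · congr 1
        funext ω
        simp [add_comm]
      · apply Finset.sum_congr rfl
        intro t ht
        have h : ¬ (t = T) := Finset.ne_of_mem_erase ht
        simp only [if_neg h, add_zero]
        simp [integral_const]
    rw [← hval]
    refine hleU _ (hVm.add_const _) ⟨CV + |(T:ℝ) * c|, hniceb V CV _ hVb⟩ Yφ halloc
  -- integral lower bound for the T-term
  have hTlow : ∀ (V : Ω → ℝ), Measurable[ℱ T] V → ∀ CV : ℝ, (∀ᵐ ω ∂μ, |V ω| ≤ CV) →
      ∀ c : ℝ, u T (c - CV) ≤ ∫ ω, u T (V ω + c) ∂μ := by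
    intro V hVm CV hVb c
    have hVmΩ : Measurable V := hVm.mono (hℱle T) le_rfl
    have := integral_mono_ae (integrable_const (u T (c - CV)))
      (hIntC T htT (fun ω => V ω + c) (hVmΩ.add_const c) (CV + |c|) (hniceb V CV c hVb))
      ?_
    · simpa [integral_const] using this
    · filter_upwards [hVb] with ω hω
      apply (hu_mono T htT).monotone
      have := (abs_le.mp hω).1
      linarith
  -- the core lemma: Util strictly increases under large constant shifts
  have hCL : ∀ (V : Ω → ℝ), Measurable[ℱ T] V → ∀ CV : ℝ, 0 ≤ CV → (∀ᵐ ω ∂μ, |V ω| ≤ CV) →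
      ∃ c : ℝ, 1 ≤ c ∧ Util μ T ℱ u B V < Util μ T ℱ u B (fun ω => V ω + T * c) := by
    intro V hVm CV hCV0 hVb
    have hVmΩ : Measurable V := hVm.mono (hℱle T) le_rfl
    have hTpos : (0:ℝ) < T := by exact_mod_cast hT
    by_cases hball : ∀ t ∈ Finset.Icc 1 T, BddAbove (Set.range (u t))
    · -- all utilities bounded above
      set L : ℕ → ℝ := fun t => sSup (Set.range (u t)) with hLdef
      have hL : ∀ t ∈ Finset.Icc 1 T, ∀ x, u t x ≤ L t := fun t ht x =>
        le_csSup (hball t ht) ⟨x, rfl⟩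
      have hLlt : ∀ t ∈ Finset.Icc 1 T, ∀ x, u t x < L t := fun t ht x =>
        lt_of_lt_of_le (hu_mono t ht (lt_add_one x)) (hL t ht (x+1))
      set κ : ℝ := CV / T with hκdef
      set η : ℝ := (Finset.Icc 1 T).inf' hIne (fun t => L t - u t κ) with hηdef
      have hη : 0 < η := (Finset.lt_inf'_iff hIne).mpr fun t ht =>
        sub_pos.mpr (hLlt t ht κ)
      -- uniform upper bound on Util V
      have hUb : Util μ T ℱ u B V ≤ (∑ t ∈ Finset.Icc 1 T, L t) - η := by
        apply hUle V hVm ⟨CV, hVb⟩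
        intro Y hY
        have hint : ∀ t ∈ Finset.Icc 1 T,
            Integrable (fun ω => u t (Y t ω / B t ω)) μ := fun t ht => hIntY V Y hY t ht
        unfold allocVal
        rw [← integral_finset_sum _ hint]
        have hmge := integral_mono_ae (integrable_finset_sum _ hint)
          (integrable_const ((∑ t ∈ Finset.Icc 1 T, L t) - η)) ?_
        · simpa [integral_const] using hmge
        · filter_upwards [hY.2, hVb] with ω h1 h2
          have hex : ∃ t₀ ∈ Finset.Icc 1 T, Y t₀ ω / B t₀ ω ≤ κ := by
            by_contra hcon
            push_neg at hcon
            have hs : ∑ _t ∈ Finset.Icc 1 T, κ < ∑ t ∈ Finset.Icc 1 T, Y t ω / B t ω :=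
              Finset.sum_lt_sum_of_nonempty hIne (fun t ht => hcon t ht)
            have hsk : ∑ _t ∈ Finset.Icc 1 T, κ = CV := by
              rw [Finset.sum_const, Nat.card_Icc]
              simp only [Nat.add_sub_cancel, nsmul_eq_mul, hκdef]
              field_simp
            rw [hsk, h1] at hs
            have := (abs_le.mp h2).2
            linarith
          obtain ⟨t₀, ht₀, hle₀⟩ := hex
          have hstep : u t₀ (Y t₀ ω / B t₀ ω) ≤ L t₀ - η := by
            have h3 : u t₀ (Y t₀ ω / B t₀ ω) ≤ u t₀ κ := (hu_mono t₀ ht₀).monotone hle₀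
            have h4 : η ≤ L t₀ - u t₀ κ := Finset.inf'_le _ ht₀
            linarith
          calc ∑ t ∈ Finset.Icc 1 T, u t (Y t ω / B t ω)
              = u t₀ (Y t₀ ω / B t₀ ω)
                + ∑ t ∈ (Finset.Icc 1 T).erase t₀, u t (Y t ω / B t ω) :=
                (Finset.add_sum_erase _ _ ht₀).symm
          _ ≤ (L t₀ - η) + ∑ t ∈ (Finset.Icc 1 T).erase t₀, L t := by
              apply add_le_add hstep
              exact Finset.sum_le_sum fun t ht =>
                hL t (Finset.mem_of_mem_erase ht) _
          _ = (∑ t ∈ Finset.Icc 1 T, L t) - η := by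
              rw [← Finset.add_sum_erase _ L ht₀]
              ring
      -- choose a large shift c
      set δ : ℝ := η / (2 * T) with hδdef
      have hδ : 0 < δ := by positivity
      have hxs' : ∀ t : ℕ, ∃ x : ℝ, t ∈ Finset.Icc 1 T → L t - δ < u t x := by
        intro t
        by_cases ht : t ∈ Finset.Icc 1 T
        · obtain ⟨y, ⟨x, rfl⟩, hy⟩ := exists_lt_of_lt_csSup (Set.range_nonempty (u t))
            (show L t - δ < L t from sub_lt_self _ hδ)
          exact ⟨x, fun _ => hy⟩
        · exact ⟨0, fun h => absurd h ht⟩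
      choose xs hxs using hxs'
      set c : ℝ := max 1 (CV + (Finset.Icc 1 T).sup' hIne xs) with hcdef
      have hc1 : (1:ℝ) ≤ c := le_max_left _ _
      have hcx : ∀ t ∈ Finset.Icc 1 T, xs t ≤ c - CV := by
        intro t ht
        have h5 : xs t ≤ (Finset.Icc 1 T).sup' hIne xs := Finset.le_sup' xs ht
        have h6 : CV + (Finset.Icc 1 T).sup' hIne xs ≤ c := le_max_right _ _
        linarith
      have hcx' : ∀ t ∈ Finset.Icc 1 T, xs t ≤ c := fun t ht =>
        (hcx t ht).trans (by linarith)
      have key : (∑ t ∈ Finset.Icc 1 T, L t) - η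
          < (∫ ω, u T (V ω + c) ∂μ) + ∑ t ∈ (Finset.Icc 1 T).erase T, u t c := by
        have hTterm : L T - δ < ∫ ω, u T (V ω + c) ∂μ := by
          have h7 : L T - δ < u T (c - CV) :=
            lt_of_lt_of_le (hxs T htT) ((hu_mono T htT).monotone (hcx T htT))
          exact lt_of_lt_of_le h7 (hTlow V hVm CV hVb c)
        have herase : ∀ t ∈ (Finset.Icc 1 T).erase T, L t - δ ≤ u t c := by
          intro t ht
          have ht' := Finset.mem_of_mem_erase ht
          exact le_of_lt (lt_of_lt_of_le (hxs t ht')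
            ((hu_mono t ht').monotone (hcx' t ht')))
        have hsum : ∑ t ∈ Finset.Icc 1 T, (L t - δ)
            < (∫ ω, u T (V ω + c) ∂μ) + ∑ t ∈ (Finset.Icc 1 T).erase T, u t c := by
          rw [← Finset.add_sum_erase _ (fun t => L t - δ) htT]
          exact add_lt_add_of_lt_of_le hTterm (Finset.sum_le_sum herase)
        have h8 : ∑ t ∈ Finset.Icc 1 T, (L t - δ)
            = (∑ t ∈ Finset.Icc 1 T, L t) - (T:ℝ) * δ := by
          rw [Finset.sum_sub_distrib, Finset.sum_const, Nat.card_Icc]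
          simp [nsmul_eq_mul]
        have h9 : (T:ℝ) * δ = η / 2 := by
          rw [hδdef]
          field_simp
        rw [h8, h9] at hsum
        calc (∑ t ∈ Finset.Icc 1 T, L t) - η
            < (∑ t ∈ Finset.Icc 1 T, L t) - η / 2 := by linarith
        _ < _ := hsum
      exact ⟨c, hc1, lt_of_le_of_lt hUb (lt_of_lt_of_le key (hφ V hVm CV hCV0 hVb c))⟩
    · -- some utility is unbounded above
      push_neg at hball
      obtain ⟨t₁, ht₁, hub⟩ := hball
      rw [not_bddAbove_iff] at hub
      by_cases hTt : t₁ = T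
      · subst t₁
        obtain ⟨y, ⟨x₁, rfl⟩, hy⟩ :=
          hub (Util μ T ℱ u B V - ∑ t ∈ (Finset.Icc 1 T).erase T, u t 0)
        set c : ℝ := max 1 (CV + x₁) with hcdef
        have hc1 : (1:ℝ) ≤ c := le_max_left _ _
        have h1 : x₁ ≤ c - CV := by
          have := le_max_right 1 (CV + x₁)
          linarith
        have h2 : Util μ T ℱ u B V - ∑ t ∈ (Finset.Icc 1 T).erase T, u t 0
            < u T (c - CV) := lt_of_lt_of_le hy ((hu_mono T htT).monotone h1)
        have h3 := hTlow V hVm CV hVb c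
        have h4 : ∑ t ∈ (Finset.Icc 1 T).erase T, u t 0
            ≤ ∑ t ∈ (Finset.Icc 1 T).erase T, u t c := by
          apply Finset.sum_le_sum
          intro t ht
          exact (hu_mono t (Finset.mem_of_mem_erase ht)).monotone (by linarith)
        have key : Util μ T ℱ u B V
            < (∫ ω, u T (V ω + c) ∂μ) + ∑ t ∈ (Finset.Icc 1 T).erase T, u t c := by
          linarith
        exact ⟨c, hc1, lt_of_lt_of_le key (hφ V hVm CV hCV0 hVb c)⟩
      · have ht₁e : t₁ ∈ (Finset.Icc 1 T).erase T := Finset.mem_erase.mpr ⟨hTt, ht₁⟩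
        obtain ⟨y, ⟨x₁, rfl⟩, hy⟩ :=
          hub (Util μ T ℱ u B V - u T (0 - CV)
            - ∑ t ∈ ((Finset.Icc 1 T).erase T).erase t₁, u t 0)
        set c : ℝ := max 1 x₁ with hcdef
        have hc1 : (1:ℝ) ≤ c := le_max_left _ _
        have h1 : x₁ ≤ c := le_max_right _ _
        have h2 : u t₁ x₁ ≤ u t₁ c := (hu_mono t₁ ht₁).monotone h1
        have h3 : u T (0 - CV) ≤ u T (c - CV) :=
          (hu_mono T htT).monotone (by linarith)
        have h3' := hTlow V hVm CV hVb c
        have h4 : ∑ t ∈ ((Finset.Icc 1 T).erase T).erase t₁, u t 0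
            ≤ ∑ t ∈ ((Finset.Icc 1 T).erase T).erase t₁, u t c := by
          apply Finset.sum_le_sum
          intro t ht
          exact (hu_mono t (Finset.mem_of_mem_erase (Finset.mem_of_mem_erase ht))).monotone
            (by linarith)
        have hdec : ∑ t ∈ (Finset.Icc 1 T).erase T, u t c
            = u t₁ c + ∑ t ∈ ((Finset.Icc 1 T).erase T).erase t₁, u t c :=
          (Finset.add_sum_erase _ _ ht₁e).symm
        have key : Util μ T ℱ u B V
            < (∫ ω, u T (V ω + c) ∂μ) + ∑ t ∈ (Finset.Icc 1 T).erase T, u t c := by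
          rw [hdec]
          linarith
        exact ⟨c, hc1, lt_of_lt_of_le key (hφ V hVm CV hCV0 hVb c)⟩
  have hTpos : (0:ℝ) < T := by exact_mod_cast hT
  -- strict monotonicity of x ↦ Util (V + x)
  have hSM : ∀ (V : Ω → ℝ), Measurable[ℱ T] V → ∀ CV : ℝ, 0 ≤ CV → (∀ᵐ ω ∂μ, |V ω| ≤ CV) →
      StrictMono (fun x => Util μ T ℱ u B (fun ω => V ω + x)) := by
    intro V hVm CV hCV0 hVb
    have hnm : ∀ x : ℝ, Measurable[ℱ T] (fun ω => V ω + x) := fun x => hVm.add_const x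
    have hnb : ∀ x : ℝ, ∀ᵐ ω ∂μ, |V ω + x| ≤ CV + |x| := fun x => hniceb V CV x hVb
    set g : ℝ → ℝ := fun x => Util μ T ℱ u B (fun ω => V ω + x) with hgdef
    have hgmono : Monotone g := by
      intro p q hpq
      exact hmono _ _ (hnm p) ⟨_, hnb p⟩ (hnm q) ⟨_, hnb q⟩
        (Filter.Eventually.of_forall fun ω => by
          show V ω + p ≤ V ω + q
          linarith)
    intro x y hxy
    by_contra hcon
    push_neg at hcon
    have hgeq : g y = g x := le_antisymm hcon (hgmono hxy.le)
    have hconc := hconcave V hVm CV hVb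
    have hconst : ∀ z, y ≤ z → g z ≤ g x := by
      intro z hz
      rcases eq_or_lt_of_le hz with rfl | hz
      · exact hgeq.le
      · have hzx : 0 < z - x := by linarith
        set a : ℝ := (z - y) / (z - x) with hadef
        set b : ℝ := (y - x) / (z - x) with hbdef
        have ha : 0 ≤ a := div_nonneg (by linarith) hzx.le
        have hb0 : 0 < b := div_pos (by linarith) hzx
        have hab : a + b = 1 := by
          rw [hadef, hbdef]
          field_simp
          ring
        have hy' : a * x + b * z = y := by
          rw [hadef, hbdef]
          field_simp
          ring
        have hcc : a * g x + b * g z ≤ g y := by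
          simp only [hgdef]
          have hcc0 := hconc.2 (Set.mem_univ x) (Set.mem_univ z) ha hb0.le hab
          simp only [smul_eq_mul] at hcc0
          rw [hy'] at hcc0
          exact hcc0
        rw [hgeq] at hcc
        have ha' : a = 1 - b := by linarith
        rw [ha'] at hcc
        have h7 : b * g z ≤ b * g x := by nlinarith
        exact le_of_mul_le_mul_left h7 hb0
    obtain ⟨c, hc1, hlt⟩ := hCL (fun ω => V ω + y) (hnm y) (CV + |y|)
      (by positivity) (hnb y)
    have he1 : Util μ T ℱ u B (fun ω => (V ω + y) + T * c) = g (y + T * c) := by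
      simp only [hgdef]
      congr 1
      funext ω
      ring
    have hTc : 0 < (T:ℝ) * c := mul_pos hTpos (lt_of_lt_of_le one_pos hc1)
    have h6 : g (y + T * c) ≤ g x := hconst _ (by linarith)
    have h8 : g y < g (y + T * c) := by
      have he2 : Util μ T ℱ u B (fun ω => V ω + y) = g y := by simp only [hgdef]
      rw [← he1, ← he2]
      exact hlt
    rw [hgeq] at h8
    linarith
  -- now specialize to the risk Z
  obtain ⟨CZ₀, hCZ₀⟩ := hZbdd
  set CZ : ℝ := max CZ₀ 0 with hCZdef
  have hCZ0 : 0 ≤ CZ := le_max_right _ _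
  have hCZ : ∀ᵐ ω ∂μ, |Z ω| ≤ CZ := by
    filter_upwards [hCZ₀] with ω hω
    exact hω.trans (le_max_left _ _)
  have hVZm : Measurable[ℱ T] (fun ω => w - Z ω) := measurable_const.sub hZmeas
  have hVZb : ∀ᵐ ω ∂μ, |w - Z ω| ≤ |w| + CZ := by
    filter_upwards [hCZ] with ω hω
    calc |w - Z ω| ≤ |w| + |Z ω| := abs_sub _ _
    _ ≤ |w| + CZ := by linarith
  have hVZb0 : (0:ℝ) ≤ |w| + CZ := by positivity
  have hfun : (fun x => Util μ T ℱ u B (fun ω => w + x - Z ω))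
      = fun x => Util μ T ℱ u B (fun ω => (w - Z ω) + x) := by
    funext x
    congr 1
    funext ω
    ring
  have hconcZ : ConcaveOn ℝ (Set.univ : Set ℝ)
      (fun x => Util μ T ℱ u B (fun ω => w + x - Z ω)) := by
    rw [hfun]
    exact hconcave _ hVZm (|w| + CZ) hVZb
  have hSMZ : StrictMono (fun x => Util μ T ℱ u B (fun ω => w + x - Z ω)) := by
    rw [hfun]
    exact hSM _ hVZm (|w| + CZ) hVZb0 hVZb
  have hcontZ : Continuous (fun x => Util μ T ℱ u B (fun ω => w + x - Z ω)) := by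
    rw [← continuousOn_univ]
    have h2 : ContinuousOn (-(fun x => Util μ T ℱ u B (fun ω => w + x - Z ω)))
        Set.univ := (hconcZ.neg).continuousOn isOpen_univ
    have h3 := h2.neg
    simpa using h3
  -- strict monotonicity at constants
  have hwlt : ∀ a b : ℝ, a < b →
      Util μ T ℱ u B (fun _ => a) < Util μ T ℱ u B (fun _ => b) := by
    intro a b hab
    have h := hSM (fun _ : Ω => a) measurable_const |a| (abs_nonneg a)
      (Filter.Eventually.of_forall fun ω => le_rfl) (show (0:ℝ) < b - a by linarith)
    simp only at h
    have e0 : (fun ω : Ω => a + (0:ℝ)) = (fun _ : Ω => a) := funext fun _ => by ring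
    have e1 : (fun ω : Ω => a + (b - a)) = (fun _ : Ω => b) := funext fun _ => by ring
    rw [e0, e1] at h
    exact h
  -- eventually below
  have hbelow : ∀ x ≤ -(CZ + 1),
      Util μ T ℱ u B (fun ω => w + x - Z ω) < Util μ T ℱ u B (fun _ => w) := by
    intro x hx
    have hle : Util μ T ℱ u B (fun ω => w + x - Z ω)
        ≤ Util μ T ℱ u B (fun _ : Ω => w - 1) := by
      apply hmono _ _ (measurable_const.sub hZmeas)
        ⟨|w + x| + CZ, by
          filter_upwards [hCZ] with ω hω
          calc |w + x - Z ω| ≤ |w + x| + |Z ω| := abs_sub _ _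
          _ ≤ |w + x| + CZ := by linarith⟩
        measurable_const ⟨|w - 1|, Filter.Eventually.of_forall fun ω => le_rfl⟩
      filter_upwards [hCZ] with ω hω
      have := (abs_le.mp hω).1
      show w + x - Z ω ≤ w - 1
      linarith
    exact lt_of_le_of_lt hle (hwlt _ _ (by linarith))
  -- eventually above
  have habove : ∀ x, CZ + 1 ≤ x →
      Util μ T ℱ u B (fun _ => w) < Util μ T ℱ u B (fun ω => w + x - Z ω) := by
    intro x hx
    have hle : Util μ T ℱ u B (fun _ : Ω => w + 1)
        ≤ Util μ T ℱ u B (fun ω => w + x - Z ω) := by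
      apply hmono _ _ measurable_const
        ⟨|w + 1|, Filter.Eventually.of_forall fun ω => le_rfl⟩
        (measurable_const.sub hZmeas)
        ⟨|w + x| + CZ, by
          filter_upwards [hCZ] with ω hω
          calc |w + x - Z ω| ≤ |w + x| + |Z ω| := abs_sub _ _
          _ ≤ |w + x| + CZ := by linarith⟩
      filter_upwards [hCZ] with ω hω
      have := (abs_le.mp hω).2
      show w + 1 ≤ w + x - Z ω
      linarith
    exact lt_of_lt_of_le (hwlt _ _ (by linarith)) hle
  -- existence and uniqueness of the indifference price
  have h₀ := hbelow _ le_rfl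
  have h₁ := habove _ le_rfl
  have hx01 : -(CZ + 1) < CZ + 1 := by linarith
  have hmem : Util μ T ℱ u B (fun _ => w) ∈
      Set.Icc (Util μ T ℱ u B (fun ω => w + -(CZ + 1) - Z ω))
        (Util μ T ℱ u B (fun ω => w + (CZ + 1) - Z ω)) := ⟨h₀.le, h₁.le⟩
  obtain ⟨hp, _, hhp⟩ := intermediate_value_Icc hx01.le hcontZ.continuousOn hmem
  exact ⟨⟨hp, hhp, fun y hy => hSMZ.injective (hy.trans hhp.symm)⟩,
    hconcZ, hcontZ, hSMZ, ⟨-(CZ + 1), hbelow⟩, ⟨CZ + 1, habove⟩⟩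
end
end

section
/- The indifference price functional H : L^∞ → ℝ is strictly monotone and convex: (a) if W ≥ Z a.s. and P(W > Z) > 0, then H(W) > H(Z); (b) for a ∈ [0,1], H(aW + (1−a)Z) ≤ a H(W) + (1−a) H(Z). -/
open MeasureTheory Finset Real

noncomputable section

lemma integrable_comp {Ω : Type*} [mΩ : MeasurableSpace Ω] (μ : Measure Ω)
    [IsProbabilityMeasure μ] {f : ℝ → ℝ} (hf : Continuous f) {Y : Ω → ℝ}
    (hm : Measurable Y) {C : ℝ} (hY : ∀ᵐ ω ∂μ, |Y ω| ≤ C) :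
    Integrable (fun ω => f (Y ω)) μ := by
  obtain ⟨M, hM⟩ := (isCompact_Icc : IsCompact (Set.Icc (-C) C)).exists_bound_of_continuousOn
    hf.continuousOn
  refine Integrable.mono' (integrable_const M) ((hf.measurable.comp hm).aestronglyMeasurable) ?_
  filter_upwards [hY] with ω hω
  exact hM _ (abs_le.mp hω |> fun h => Set.mem_Icc.mpr ⟨h.1, h.2⟩)

section Main
variable {Ω : Type*} [mΩ : MeasurableSpace Ω]

structure Ctx (μ : Measure Ω) (T : ℕ) (ℱ : ℕ → MeasurableSpace Ω)
    (B : ℕ → Ω → ℝ) (u : ℕ → ℝ → ℝ) : Prop where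
  hT : 1 ≤ T
  hle : ∀ t, ℱ t ≤ mΩ
  hB1 : ∀ t ∈ Finset.Icc 1 T, ∀ ω, 1 ≤ B t ω
  hBb : ∀ t ∈ Finset.Icc 1 T, ∃ C : ℝ, ∀ ω, B t ω ≤ C
  hBt : ∀ t ∈ Finset.Icc 1 T, Measurable[ℱ t] (B t)
  hBT : ∀ t ∈ Finset.Icc 1 T, Measurable[ℱ T] (B t)
  hum : ∀ t ∈ Finset.Icc 1 T, StrictMono (u t)
  hcon : ∀ t ∈ Finset.Icc 1 T, ConcaveOn ℝ Set.univ (u t)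
  hcont : ∀ t ∈ Finset.Icc 1 T, Continuous (u t)
  hUfin : ∀ V : Ω → ℝ, Measurable[ℱ T] V → (∃ C : ℝ, ∀ᵐ ω ∂μ, |V ω| ≤ C) →
      BddAbove {s : ℝ | ∃ Y, IsAlloc μ T ℱ B V Y ∧ s = allocVal μ T u B Y}

variable {μ : Measure Ω} [IsProbabilityMeasure μ] {T : ℕ} {ℱ : ℕ → MeasurableSpace Ω}
  {B : ℕ → Ω → ℝ} {u : ℕ → ℝ → ℝ}

lemma Ctx.hTmem (hc : Ctx μ T ℱ B u) : T ∈ Finset.Icc 1 T :=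
  Finset.mem_Icc.mpr ⟨hc.hT, le_rfl⟩

lemma Ctx.hBpos (hc : Ctx μ T ℱ B u) {t : ℕ} (ht : t ∈ Finset.Icc 1 T) (ω : Ω) :
    0 < B t ω := lt_of_lt_of_le one_pos (hc.hB1 t ht ω)

lemma Ctx.hBne (hc : Ctx μ T ℱ B u) {t : ℕ} (ht : t ∈ Finset.Icc 1 T) (ω : Ω) :
    B t ω ≠ 0 := (hc.hBpos ht ω).ne'

/-- a.e. bound for the discounted coordinate. -/
lemma Ctx.tilde_bdd (hc : Ctx μ T ℱ B u) {Y : Ω → ℝ} {t : ℕ} (ht : t ∈ Finset.Icc 1 T)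
    {C : ℝ} (hb : ∀ᵐ ω ∂μ, |Y ω| ≤ C) : ∀ᵐ ω ∂μ, |Y ω / B t ω| ≤ C := by
  filter_upwards [hb] with ω hω
  rw [abs_div]
  have h1 : (1:ℝ) ≤ |B t ω| := by
    rw [abs_of_pos (hc.hBpos ht ω)]; exact hc.hB1 t ht ω
  exact le_trans (div_le_self (abs_nonneg _) h1) hω

lemma Ctx.tilde_meas (hc : Ctx μ T ℱ B u) {Y : Ω → ℝ} {t : ℕ} (ht : t ∈ Finset.Icc 1 T)
    (hm : Measurable[ℱ t] Y) : Measurable (fun ω => Y ω / B t ω) :=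
  (hm.mono (hc.hle t) le_rfl).div ((hc.hBt t ht).mono (hc.hle t) le_rfl)

lemma Ctx.alloc_integrable (hc : Ctx μ T ℱ B u) {V : Ω → ℝ} {Y : ℕ → Ω → ℝ}
    (hY : IsAlloc μ T ℱ B V Y) {t : ℕ} (ht : t ∈ Finset.Icc 1 T) :
    Integrable (fun ω => u t (Y t ω / B t ω)) μ := by
  obtain ⟨C, hC⟩ := (hY.1 t ht).2
  exact integrable_comp μ (hc.hcont t ht) (hc.tilde_meas ht (hY.1 t ht).1)
    (hc.tilde_bdd ht hC)

lemma Ctx.allocVal_le_Util (hc : Ctx μ T ℱ B u) {V : Ω → ℝ} (hV : Measurable[ℱ T] V)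
    (hVb : ∃ C : ℝ, ∀ᵐ ω ∂μ, |V ω| ≤ C) {Y : ℕ → Ω → ℝ} (hY : IsAlloc μ T ℱ B V Y) :
    allocVal μ T u B Y ≤ Util μ T ℱ u B V :=
  le_csSup (hc.hUfin V hV hVb) ⟨Y, hY, rfl⟩

lemma Util_le {V : Ω → ℝ} {M : ℝ}
    (hne : {s : ℝ | ∃ Y, IsAlloc μ T ℱ B V Y ∧ s = allocVal μ T u B Y}.Nonempty)
    (h : ∀ Y, IsAlloc μ T ℱ B V Y → allocVal μ T u B Y ≤ M) :
    Util μ T ℱ u B V ≤ M := by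
  refine csSup_le hne ?_
  rintro s ⟨Y, hY, rfl⟩
  exact h Y hY

/-- the canonical allocation putting everything at time T -/
def canonAlloc (B : ℕ → Ω → ℝ) (T : ℕ) (V : Ω → ℝ) : ℕ → Ω → ℝ :=
  fun t => if t = T then (fun ω => V ω * B T ω) else (fun _ => 0)

lemma Ctx.canon_isAlloc (hc : Ctx μ T ℱ B u) {V : Ω → ℝ} (hV : Measurable[ℱ T] V)
    {CV : ℝ} (hVb : ∀ᵐ ω ∂μ, |V ω| ≤ CV) : IsAlloc μ T ℱ B V (canonAlloc B T V) := by
  obtain ⟨Cb, hCb⟩ := hc.hBb T hc.hTmem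
  constructor
  · intro t ht
    unfold canonAlloc
    by_cases h : t = T
    · subst h
      rw [if_pos rfl]
      refine ⟨hV.mul (hc.hBT _ hc.hTmem), ⟨CV * Cb, ?_⟩⟩
      filter_upwards [hVb] with ω hω
      rw [abs_mul, abs_of_pos (hc.hBpos hc.hTmem ω)]
      exact mul_le_mul hω (hCb ω) (hc.hBpos hc.hTmem ω).le (le_trans (abs_nonneg _) hω)
    · rw [if_neg h]
      exact ⟨measurable_const, ⟨0, Filter.Eventually.of_forall (by simp)⟩⟩
  · refine Filter.Eventually.of_forall fun ω => ?_
    rw [Finset.sum_eq_sum_sdiff_singleton_add hc.hTmem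
      (fun t => canonAlloc B T V t ω / B t ω)]
    have h0 : ∀ t ∈ Finset.Icc 1 T \ {T}, canonAlloc B T V t ω / B t ω = 0 := by
      intro t ht
      rcases Finset.mem_sdiff.mp ht with ⟨_, ht2⟩
      unfold canonAlloc
      rw [if_neg (by simpa using ht2)]
      simp
    rw [Finset.sum_eq_zero h0, zero_add]
    unfold canonAlloc
    rw [if_pos rfl, mul_div_cancel_right₀ _ (hc.hBne hc.hTmem ω)]

lemma Ctx.canon_allocVal (hc : Ctx μ T ℱ B u) (V : Ω → ℝ) :
    allocVal μ T u B (canonAlloc B T V) =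
      (∑ t ∈ Finset.Icc 1 T \ {T}, u t 0) + ∫ ω, u T (V ω) ∂μ := by
  unfold allocVal
  rw [Finset.sum_eq_sum_sdiff_singleton_add hc.hTmem]
  congr 1
  · refine Finset.sum_congr rfl fun t ht => ?_
    rcases Finset.mem_sdiff.mp ht with ⟨_, ht2⟩
    have : (fun ω => u t (canonAlloc B T V t ω / B t ω)) = fun _ => u t 0 := by
      funext ω
      unfold canonAlloc
      rw [if_neg (by simpa using ht2)]
      simp
    rw [this]
    simp
  · have : (fun ω => u T (canonAlloc B T V T ω / B T ω)) = fun ω => u T (V ω) := by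
      funext ω
      unfold canonAlloc
      rw [if_pos rfl, mul_div_cancel_right₀ _ (hc.hBne hc.hTmem ω)]
    rw [this]

lemma Ctx.USet_nonempty (hc : Ctx μ T ℱ B u) {V : Ω → ℝ} (hV : Measurable[ℱ T] V)
    (hVb : ∃ C : ℝ, ∀ᵐ ω ∂μ, |V ω| ≤ C) :
    {s : ℝ | ∃ Y, IsAlloc μ T ℱ B V Y ∧ s = allocVal μ T u B Y}.Nonempty := by
  obtain ⟨C, hC⟩ := hVb
  exact ⟨_, ⟨canonAlloc B T V, hc.canon_isAlloc hV hC, rfl⟩⟩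

end Main

lemma IsAlloc_congr {Ω : Type*} [mΩ : MeasurableSpace Ω] {μ : Measure Ω} {T : ℕ}
    {ℱ : ℕ → MeasurableSpace Ω} {B : ℕ → Ω → ℝ} {V V' : Ω → ℝ} {Y : ℕ → Ω → ℝ}
    (hY : IsAlloc μ T ℱ B V Y) (h : ∀ᵐ ω ∂μ, V ω = V' ω) : IsAlloc μ T ℱ B V' Y := by
  refine ⟨hY.1, ?_⟩
  filter_upwards [hY.2, h] with ω h1 h2
  rw [h1, h2]

section Main2
variable {Ω : Type*} [mΩ : MeasurableSpace Ω] {μ : Measure Ω} [IsProbabilityMeasure μ]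
  {T : ℕ} {ℱ : ℕ → MeasurableSpace Ω} {B : ℕ → Ω → ℝ} {u : ℕ → ℝ → ℝ}

/-- modify an allocation by adding discounted amount `g` at time `T` -/
def addT (B : ℕ → Ω → ℝ) (T : ℕ) (Y : ℕ → Ω → ℝ) (g : Ω → ℝ) : ℕ → Ω → ℝ :=
  fun t => if t = T then (fun ω => Y T ω + g ω * B T ω) else Y t

lemma Ctx.addT_isAlloc (hc : Ctx μ T ℱ B u) {V : Ω → ℝ} {Y : ℕ → Ω → ℝ}
    (hY : IsAlloc μ T ℱ B V Y) {g : Ω → ℝ} (hg : Measurable[ℱ T] g)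
    {Cg : ℝ} (hgb : ∀ᵐ ω ∂μ, |g ω| ≤ Cg) :
    IsAlloc μ T ℱ B (fun ω => V ω + g ω) (addT B T Y g) := by
  obtain ⟨Cb, hCb⟩ := hc.hBb T hc.hTmem
  obtain ⟨CY, hCY⟩ := (hY.1 T hc.hTmem).2
  constructor
  · intro t ht
    unfold addT
    by_cases h : t = T
    · rw [if_pos h]
      have hme : Measurable[ℱ t] (fun ω => Y T ω + g ω * B T ω) := by
        rw [h]; exact ((hY.1 T hc.hTmem).1).add (hg.mul (hc.hBT T hc.hTmem))
      refine ⟨hme, ⟨CY + Cg * Cb, ?_⟩⟩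
      filter_upwards [hgb, hCY] with ω h1 h2
      have hb0 : (0:ℝ) < B T ω := hc.hBpos hc.hTmem ω
      calc |Y T ω + g ω * B T ω| ≤ |Y T ω| + |g ω| * |B T ω| := by
            rw [← abs_mul]; exact abs_add_le _ _
        _ ≤ CY + Cg * Cb := by
            have : |g ω| * |B T ω| ≤ Cg * Cb := by
              rw [abs_of_pos hb0]
              exact mul_le_mul h1 (hCb ω) hb0.le (le_trans (abs_nonneg _) h1)
            linarith
    · rw [if_neg h]; exact hY.1 t ht
  · filter_upwards [hY.2] with ω hω
    rw [Finset.sum_eq_sum_sdiff_singleton_add hc.hTmem (fun t => addT B T Y g t ω / B t ω)]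
    have h0 : ∀ t ∈ Finset.Icc 1 T \ {T}, addT B T Y g t ω / B t ω = Y t ω / B t ω := by
      intro t ht
      rcases Finset.mem_sdiff.mp ht with ⟨_, ht2⟩
      unfold addT
      rw [if_neg (by simpa using ht2)]
    rw [Finset.sum_congr rfl h0]
    unfold addT
    rw [if_pos rfl, add_div, mul_div_cancel_right₀ _ (hc.hBne hc.hTmem ω)]
    rw [← hω, Finset.sum_eq_sum_sdiff_singleton_add hc.hTmem (fun t => Y t ω / B t ω)]
    ring

lemma Ctx.addT_allocVal (hc : Ctx μ T ℱ B u) {V : Ω → ℝ} {Y : ℕ → Ω → ℝ}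
    (hY : IsAlloc μ T ℱ B V Y) {g : Ω → ℝ} (hg : Measurable[ℱ T] g)
    {Cg : ℝ} (hgb : ∀ᵐ ω ∂μ, |g ω| ≤ Cg) :
    allocVal μ T u B (addT B T Y g) = allocVal μ T u B Y +
      ∫ ω, (u T (Y T ω / B T ω + g ω) - u T (Y T ω / B T ω)) ∂μ := by
  obtain ⟨CY, hCY⟩ := (hY.1 T hc.hTmem).2
  have hmeas : Measurable (fun ω => Y T ω / B T ω + g ω) :=
    (hc.tilde_meas hc.hTmem (hY.1 T hc.hTmem).1).add (hg.mono (hc.hle T) le_rfl)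
  have hbd : ∀ᵐ ω ∂μ, |Y T ω / B T ω + g ω| ≤ CY + Cg := by
    filter_upwards [hc.tilde_bdd hc.hTmem hCY, hgb] with ω h1 h2
    exact le_trans (abs_add_le _ _) (by linarith)
  have hint1 : Integrable (fun ω => u T (Y T ω / B T ω + g ω)) μ :=
    integrable_comp μ (hc.hcont T hc.hTmem) hmeas hbd
  have hint2 : Integrable (fun ω => u T (Y T ω / B T ω)) μ :=
    hc.alloc_integrable hY hc.hTmem
  unfold allocVal
  rw [Finset.sum_eq_sum_sdiff_singleton_add hc.hTmem,
    Finset.sum_eq_sum_sdiff_singleton_add hc.hTmem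
      (fun t => ∫ ω, u t (Y t ω / B t ω) ∂μ)]
  have h0 : ∀ t ∈ Finset.Icc 1 T \ {T},
      (∫ ω, u t (addT B T Y g t ω / B t ω) ∂μ) = ∫ ω, u t (Y t ω / B t ω) ∂μ := by
    intro t ht
    rcases Finset.mem_sdiff.mp ht with ⟨_, ht2⟩
    unfold addT
    rw [if_neg (by simpa using ht2)]
  rw [Finset.sum_congr rfl h0]
  have hT' : (fun ω => u T (addT B T Y g T ω / B T ω)) =
      fun ω => u T (Y T ω / B T ω + g ω) := by
    funext ω
    unfold addT
    rw [if_pos rfl, add_div, mul_div_cancel_right₀ _ (hc.hBne hc.hTmem ω)]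
  rw [hT', integral_sub hint1 hint2]
  ring

lemma Ctx.Util_mono (hc : Ctx μ T ℱ B u) {V1 V2 : Ω → ℝ}
    (hV1 : Measurable[ℱ T] V1) (hb1 : ∃ C : ℝ, ∀ᵐ ω ∂μ, |V1 ω| ≤ C)
    (hV2 : Measurable[ℱ T] V2) (hb2 : ∃ C : ℝ, ∀ᵐ ω ∂μ, |V2 ω| ≤ C)
    (hle : ∀ᵐ ω ∂μ, V1 ω ≤ V2 ω) : Util μ T ℱ u B V1 ≤ Util μ T ℱ u B V2 := by
  obtain ⟨C1, hC1⟩ := hb1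
  obtain ⟨C2, hC2⟩ := hb2
  refine Util_le (hc.USet_nonempty hV1 ⟨C1, hC1⟩) fun Y hY => ?_
  set g : Ω → ℝ := fun ω => V2 ω - V1 ω with hgdef
  have hg : Measurable[ℱ T] g := hV2.sub hV1
  have hgb : ∀ᵐ ω ∂μ, |g ω| ≤ C2 + C1 := by
    filter_upwards [hC1, hC2] with ω h1 h2
    rw [hgdef]
    calc |V2 ω - V1 ω| ≤ |V2 ω| + |V1 ω| := abs_sub _ _
      _ ≤ C2 + C1 := by linarith
  have halloc : IsAlloc μ T ℱ B V2 (addT B T Y g) := by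
    refine IsAlloc_congr (hc.addT_isAlloc hY hg hgb) ?_
    exact Filter.Eventually.of_forall fun ω => by rw [hgdef]; ring
  have hval := hc.addT_allocVal hY hg hgb
  have hpos : 0 ≤ ∫ ω, (u T (Y T ω / B T ω + g ω) - u T (Y T ω / B T ω)) ∂μ := by
    refine integral_nonneg_of_ae ?_
    filter_upwards [hle] with ω h1
    have : Y T ω / B T ω ≤ Y T ω / B T ω + g ω := by rw [hgdef]; linarith
    have := ((hc.hum T hc.hTmem).monotone this)
    simpa using sub_nonneg.mpr this
  have := hc.allocVal_le_Util hV2 ⟨C2, hC2⟩ halloc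
  linarith [hval ▸ this]

end Main2

lemma conc_inc {f : ℝ → ℝ} (hf : ConcaveOn ℝ Set.univ f) {x z h : ℝ}
    (hxz : x ≤ z) (hh : 0 ≤ h) : f (z + h) - f z ≤ f (x + h) - f x := by
  rcases eq_or_lt_of_le (by linarith : x ≤ z + h) with he | hlt
  · have hx : x = z := le_antisymm hxz (by linarith)
    have : h = 0 := by linarith
    simp [hx, this]
  · set s := z + h - x with hs
    have hs0 : 0 < s := by dsimp [s]; linarith
    set θ := (z - x) / s with hθ
    have hθ0 : 0 ≤ θ := div_nonneg (by linarith) hs0.le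
    have hθ1 : 1 - θ = h / s := by
      rw [hθ]; field_simp; dsimp [s]; ring
    have hθle : θ ≤ 1 := by
      rw [hθ, div_le_one hs0]; dsimp [s]; linarith
    have harg1 : θ * x + (1 - θ) * (z + h) = x + h := by
      rw [hθ1, hθ]; field_simp; ring
    have harg2 : (1 - θ) * x + θ * (z + h) = z := by
      rw [hθ1, hθ]; field_simp; ring
    have h1 := hf.2 (Set.mem_univ x) (Set.mem_univ (z + h)) hθ0 (by linarith : (0:ℝ) ≤ 1 - θ)
      (by ring : θ + (1 - θ) = 1)
    have h2 := hf.2 (Set.mem_univ x) (Set.mem_univ (z + h)) (by linarith : (0:ℝ) ≤ 1 - θ) hθ0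
      (by ring : (1 - θ) + θ = 1)
    rw [smul_eq_mul, smul_eq_mul, smul_eq_mul, smul_eq_mul, harg1] at h1
    rw [smul_eq_mul, smul_eq_mul, smul_eq_mul, smul_eq_mul, harg2] at h2
    nlinarith

lemma combo_csSup {S1 S2 : Set ℝ} (h1 : S1.Nonempty) (h2 : S2.Nonempty)
    {a M : ℝ} (ha : 0 ≤ a) (ha1 : a ≤ 1)
    (hM : ∀ s1 ∈ S1, ∀ s2 ∈ S2, a * s1 + (1 - a) * s2 ≤ M) :
    a * sSup S1 + (1 - a) * sSup S2 ≤ M := by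
  refine le_of_forall_pos_le_add fun δ hδ => ?_
  obtain ⟨s1, hs1, hs1'⟩ := exists_lt_of_lt_csSup h1 (by linarith : sSup S1 - δ/2 < sSup S1)
  obtain ⟨s2, hs2, hs2'⟩ := exists_lt_of_lt_csSup h2 (by linarith : sSup S2 - δ/2 < sSup S2)
  have e1 : a * sSup S1 ≤ a * s1 + δ/2 := by nlinarith
  have e2 : (1 - a) * sSup S2 ≤ (1 - a) * s2 + δ/2 := by nlinarith
  have := hM s1 hs1 s2 hs2
  linarith

section Main3
variable {Ω : Type*} [mΩ : MeasurableSpace Ω] {μ : Measure Ω} [IsProbabilityMeasure μ]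
  {T : ℕ} {ℱ : ℕ → MeasurableSpace Ω} {B : ℕ → Ω → ℝ} {u : ℕ → ℝ → ℝ}

lemma Ctx.mix_isAlloc (hc : Ctx μ T ℱ B u) {P P1 P2 : Ω → ℝ} {Y1 Y2 : ℕ → Ω → ℝ}
    (hY1 : IsAlloc μ T ℱ B P1 Y1) (hY2 : IsAlloc μ T ℱ B P2 Y2) {a : ℝ}
    (ha : 0 ≤ a) (ha1 : a ≤ 1) (hPid : ∀ ω, P ω = a * P1 ω + (1 - a) * P2 ω) :
    IsAlloc μ T ℱ B P (fun t ω => a * Y1 t ω + (1 - a) * Y2 t ω) := by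
  constructor
  · intro t ht
    obtain ⟨C1, hC1⟩ := (hY1.1 t ht).2
    obtain ⟨C2, hC2⟩ := (hY2.1 t ht).2
    refine ⟨((hY1.1 t ht).1.const_mul a).add ((hY2.1 t ht).1.const_mul (1 - a)), ⟨|a| * C1 + |1 - a| * C2, ?_⟩⟩
    filter_upwards [hC1, hC2] with ω h1 h2
    calc |a * Y1 t ω + (1 - a) * Y2 t ω| ≤ |a| * |Y1 t ω| + |1 - a| * |Y2 t ω| := by
          rw [← abs_mul, ← abs_mul]; exact abs_add_le _ _
      _ ≤ |a| * C1 + |1 - a| * C2 := by gcongr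
  · filter_upwards [hY1.2, hY2.2] with ω h1 h2
    rw [hPid ω, ← h1, ← h2, Finset.mul_sum, Finset.mul_sum, ← Finset.sum_add_distrib]
    refine Finset.sum_congr rfl fun t ht => ?_
    rw [add_div, mul_div_assoc, mul_div_assoc]

lemma Ctx.Util_combo (hc : Ctx μ T ℱ B u) {P P1 P2 : Ω → ℝ}
    (hP1 : Measurable[ℱ T] P1) (hb1 : ∃ C : ℝ, ∀ᵐ ω ∂μ, |P1 ω| ≤ C)
    (hP2 : Measurable[ℱ T] P2) (hb2 : ∃ C : ℝ, ∀ᵐ ω ∂μ, |P2 ω| ≤ C)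
    (hP : Measurable[ℱ T] P) (hbP : ∃ C : ℝ, ∀ᵐ ω ∂μ, |P ω| ≤ C)
    {a : ℝ} (ha : 0 ≤ a) (ha1 : a ≤ 1)
    (hPid : ∀ ω, P ω = a * P1 ω + (1 - a) * P2 ω) :
    a * Util μ T ℱ u B P1 + (1 - a) * Util μ T ℱ u B P2 ≤ Util μ T ℱ u B P := by
  refine combo_csSup (hc.USet_nonempty hP1 hb1) (hc.USet_nonempty hP2 hb2) ha ha1 ?_
  rintro s1 ⟨Y1, hY1, rfl⟩ s2 ⟨Y2, hY2, rfl⟩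
  have hmix := hc.mix_isAlloc hY1 hY2 ha ha1 hPid
  have hval : a * allocVal μ T u B Y1 + (1 - a) * allocVal μ T u B Y2 ≤
      allocVal μ T u B (fun t ω => a * Y1 t ω + (1 - a) * Y2 t ω) := by
    unfold allocVal
    rw [Finset.mul_sum, Finset.mul_sum, ← Finset.sum_add_distrib]
    refine Finset.sum_le_sum fun t ht => ?_
    have hint1 := hc.alloc_integrable hY1 ht
    have hint2 := hc.alloc_integrable hY2 ht
    have hintm := hc.alloc_integrable hmix ht
    rw [← integral_const_mul, ← integral_const_mul, ← integral_add (hint1.const_mul a) (hint2.const_mul (1 - a))]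
    refine integral_mono_ae ((hint1.const_mul a).add (hint2.const_mul (1 - a))) hintm ?_
    refine Filter.Eventually.of_forall fun ω => ?_
    have harg : (a * Y1 t ω + (1 - a) * Y2 t ω) / B t ω =
        a * (Y1 t ω / B t ω) + (1 - a) * (Y2 t ω / B t ω) := by
      rw [add_div, mul_div_assoc, mul_div_assoc]
    have := (hc.hcon t ht).2 (Set.mem_univ (Y1 t ω / B t ω)) (Set.mem_univ (Y2 t ω / B t ω))
      ha (by linarith : (0:ℝ) ≤ 1 - a) (by ring : a + (1 - a) = 1)
    rw [smul_eq_mul, smul_eq_mul, smul_eq_mul, smul_eq_mul] at this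
    simpa [harg] using this
  exact le_trans hval (hc.allocVal_le_Util hP hbP hmix)

lemma Ctx.Util_lt_add_const (hc : Ctx μ T ℱ B u) {V V' : Ω → ℝ}
    (hV : Measurable[ℱ T] V) {CV : ℝ} (hVb : ∀ᵐ ω ∂μ, |V ω| ≤ CV)
    {c : ℝ} (hc0 : 0 < c) (hid : ∀ ω, V' ω = V ω + c) :
    Util μ T ℱ u B V < Util μ T ℱ u B V' := by
  have hne : (Finset.Icc 1 T).Nonempty := Finset.nonempty_Icc.mpr hc.hT
  have hT0 : (0:ℝ) < (T:ℝ) := by exact_mod_cast hc.hT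
  set h := c / T with hhdef
  have hh0 : 0 < h := div_pos hc0 hT0
  set δ := (Finset.Icc 1 T).inf' hne (fun t => u t (CV / T + h) - u t (CV / T)) with hδdef
  have hδ0 : 0 < δ := by
    rw [hδdef, Finset.lt_inf'_iff]
    intro t ht
    have := (hc.hum t ht) (by linarith : CV / T < CV / T + h)
    linarith
  have hV' : Measurable[ℱ T] V' := by
    have : V' = fun ω => V ω + c := funext hid
    rw [this]; exact hV.add measurable_const
  have hV'b : ∀ᵐ ω ∂μ, |V' ω| ≤ CV + |c| := by
    filter_upwards [hVb] with ω h1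
    rw [hid ω]
    exact le_trans (abs_add_le _ _) (by linarith)
  have key : ∀ Y, IsAlloc μ T ℱ B V Y → allocVal μ T u B Y ≤ Util μ T ℱ u B V' - δ := by
    intro Y hY
    set Y' : ℕ → Ω → ℝ := fun t ω => Y t ω + h * B t ω with hY'def
    have hY'alloc : IsAlloc μ T ℱ B V' Y' := by
      constructor
      · intro t ht
        obtain ⟨C1, hC1⟩ := (hY.1 t ht).2
        obtain ⟨Cb, hCb⟩ := hc.hBb t ht
        refine ⟨(hY.1 t ht).1.add ((hc.hBt t ht).const_mul h), ⟨C1 + |h| * Cb, ?_⟩⟩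
        filter_upwards [hC1] with ω h1
        calc |Y t ω + h * B t ω| ≤ |Y t ω| + |h| * |B t ω| := by
              rw [← abs_mul]; exact abs_add_le _ _
          _ ≤ C1 + |h| * Cb := by
              have : |B t ω| ≤ Cb := by
                rw [abs_of_pos (hc.hBpos ht ω)]; exact hCb ω
              gcongr
      · filter_upwards [hY.2] with ω h1
        have : ∀ t ∈ Finset.Icc 1 T, Y' t ω / B t ω = Y t ω / B t ω + h := by
          intro t ht
          rw [hY'def]
          rw [add_div, mul_div_assoc, div_self (hc.hBne ht ω), mul_one]
        rw [Finset.sum_congr rfl this, Finset.sum_add_distrib, h1, Finset.sum_const,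
          Nat.card_Icc, hid ω]
        have hTc : (T + 1 - 1) • h = c := by
          simp only [Nat.add_sub_cancel, nsmul_eq_mul]
          rw [hhdef]
          field_simp
        rw [hTc]
    have hval' : ∀ t ∈ Finset.Icc 1 T, (fun ω => u t (Y' t ω / B t ω)) =
        fun ω => u t (Y t ω / B t ω + h) := by
      intro t ht
      funext ω
      rw [hY'def]
      simp only
      rw [add_div, mul_div_assoc, div_self (hc.hBne ht ω), mul_one]
    have hintY : ∀ t ∈ Finset.Icc 1 T, Integrable (fun ω => u t (Y t ω / B t ω)) μ :=
      fun t ht => hc.alloc_integrable hY ht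
    have hintY' : ∀ t ∈ Finset.Icc 1 T, Integrable (fun ω => u t (Y t ω / B t ω + h)) μ := by
      intro t ht
      have := hc.alloc_integrable hY'alloc ht
      rwa [hval' t ht] at this
    have hgain : allocVal μ T u B Y + δ ≤ allocVal μ T u B Y' := by
      have e1 : allocVal μ T u B Y' = ∫ ω, ∑ t ∈ Finset.Icc 1 T, u t (Y t ω / B t ω + h) ∂μ := by
        unfold allocVal
        rw [Finset.sum_congr rfl (fun t ht => by rw [hval' t ht])]
        exact (integral_finset_sum _ hintY').symm
      have e2 : allocVal μ T u B Y = ∫ ω, ∑ t ∈ Finset.Icc 1 T, u t (Y t ω / B t ω) ∂μ :=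
        (integral_finset_sum _ hintY).symm
      rw [e1, e2]
      have hmono : ∫ _ω, (δ:ℝ) ∂μ ≤ ∫ ω, (∑ t ∈ Finset.Icc 1 T, u t (Y t ω / B t ω + h)
          - ∑ t ∈ Finset.Icc 1 T, u t (Y t ω / B t ω)) ∂μ := by
        refine integral_mono_ae (integrable_const δ) ((integrable_finset_sum _ hintY').sub
          (integrable_finset_sum _ hintY)) ?_
        filter_upwards [hY.2, hVb] with ω hsum hCVω
        have hVle : V ω ≤ CV := le_trans (le_abs_self _) hCVω
        obtain ⟨t0, ht0, hx0⟩ : ∃ t0 ∈ Finset.Icc 1 T, Y t0 ω / B t0 ω ≤ CV / T := by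
          by_contra hcon
          push_neg at hcon
          have hlt : ∑ t ∈ Finset.Icc 1 T, (CV / T) < ∑ t ∈ Finset.Icc 1 T, Y t ω / B t ω :=
            Finset.sum_lt_sum_of_nonempty hne hcon
          rw [Finset.sum_const, Nat.card_Icc] at hlt
          simp only [Nat.add_sub_cancel, nsmul_eq_mul] at hlt
          rw [mul_div_cancel₀ _ hT0.ne'] at hlt
          rw [hsum] at hlt
          linarith
        rw [← Finset.sum_sub_distrib]
        have hterm : ∀ t ∈ Finset.Icc 1 T, 0 ≤ u t (Y t ω / B t ω + h) - u t (Y t ω / B t ω) := by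
          intro t ht
          have := (hc.hum t ht).monotone (by linarith : Y t ω / B t ω ≤ Y t ω / B t ω + h)
          linarith
        calc δ ≤ u t0 (Y t0 ω / B t0 ω + h) - u t0 (Y t0 ω / B t0 ω) := by
              refine le_trans (Finset.inf'_le _ ht0) ?_
              exact conc_inc (hc.hcon t0 ht0) hx0 hh0.le
          _ ≤ ∑ t ∈ Finset.Icc 1 T, (u t (Y t ω / B t ω + h) - u t (Y t ω / B t ω)) :=
              Finset.single_le_sum hterm ht0
      rw [integral_sub (integrable_finset_sum _ hintY') (integrable_finset_sum _ hintY)] at hmono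
      simp only [integral_const, measure_univ, ENNReal.toReal_one, probReal_univ, smul_eq_mul, one_mul] at hmono
      linarith
    have := hc.allocVal_le_Util hV' ⟨CV + |c|, hV'b⟩ hY'alloc
    linarith
  have h1 : Util μ T ℱ u B V ≤ Util μ T ℱ u B V' - δ :=
    Util_le (hc.USet_nonempty hV ⟨CV, hVb⟩) key
  linarith

end Main3

/-- pointwise allocation sup over deterministic discounted vectors -/
def PsiSet (T : ℕ) (u : ℕ → ℝ → ℝ) (m : ℝ) : Set ℝ :=
  {x | ∃ y : ℕ → ℝ, (∑ t ∈ Finset.Icc 1 T, y t) = m ∧ x = ∑ t ∈ Finset.Icc 1 T, u t (y t)}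

def Psi (T : ℕ) (u : ℕ → ℝ → ℝ) (m : ℝ) : ℝ := sSup (PsiSet T u m)

section Main4
variable {Ω : Type*} [mΩ : MeasurableSpace Ω] {μ : Measure Ω} [IsProbabilityMeasure μ]
  {T : ℕ} {ℱ : ℕ → MeasurableSpace Ω} {B : ℕ → Ω → ℝ} {u : ℕ → ℝ → ℝ}

lemma Ctx.vec_isAlloc (hc : Ctx μ T ℱ B u) (y : ℕ → ℝ) {m : ℝ}
    (hsum : (∑ t ∈ Finset.Icc 1 T, y t) = m) :
    IsAlloc μ T ℱ B (fun _ => m) (fun t ω => y t * B t ω) := by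
  constructor
  · intro t ht
    obtain ⟨Cb, hCb⟩ := hc.hBb t ht
    refine ⟨(hc.hBt t ht).const_mul (y t), ⟨|y t| * Cb, ?_⟩⟩
    refine Filter.Eventually.of_forall fun ω => ?_
    rw [abs_mul]
    have h1 : |B t ω| ≤ Cb := by rw [abs_of_pos (hc.hBpos ht ω)]; exact hCb ω
    gcongr
  · refine Filter.Eventually.of_forall fun ω => ?_
    rw [← hsum]
    refine Finset.sum_congr rfl fun t ht => ?_
    rw [mul_div_assoc, div_self (hc.hBne ht ω), mul_one]

lemma Ctx.vec_allocVal (hc : Ctx μ T ℱ B u) (y : ℕ → ℝ) :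
    allocVal μ T u B (fun t ω => y t * B t ω) = ∑ t ∈ Finset.Icc 1 T, u t (y t) := by
  unfold allocVal
  refine Finset.sum_congr rfl fun t ht => ?_
  have : (fun ω => u t (y t * B t ω / B t ω)) = fun _ => u t (y t) := by
    funext ω
    rw [mul_div_assoc, div_self (hc.hBne ht ω), mul_one]
  rw [this]
  simp

lemma Ctx.Psi_bdd (hc : Ctx μ T ℱ B u) (m : ℝ) : BddAbove (PsiSet T u m) := by
  refine ⟨Util μ T ℱ u B (fun _ => m), ?_⟩
  rintro x ⟨y, hysum, rfl⟩
  rw [← hc.vec_allocVal y]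
  exact hc.allocVal_le_Util measurable_const
    ⟨|m|, Filter.Eventually.of_forall fun _ => le_refl _⟩ (hc.vec_isAlloc y hysum)

lemma Psi_nonempty (hc : Ctx μ T ℱ B u) (m : ℝ) : (PsiSet T u m).Nonempty := by
  have hT0 : (0:ℝ) < (T:ℝ) := by exact_mod_cast hc.hT
  refine ⟨∑ t ∈ Finset.Icc 1 T, u t (m / T), ⟨fun _ => m / T, ?_, rfl⟩⟩
  rw [Finset.sum_const, Nat.card_Icc]
  simp only [Nat.add_sub_cancel, nsmul_eq_mul]
  field_simp

lemma Ctx.Psi_mono (hc : Ctx μ T ℱ B u) {m m' : ℝ} (h : m ≤ m') :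
    Psi T u m ≤ Psi T u m' := by
  refine csSup_le (Psi_nonempty hc m) ?_
  rintro x ⟨y, hysum, rfl⟩
  set y' : ℕ → ℝ := fun t => if t = T then y T + (m' - m) else y t with hy'
  have hd : ∀ t ∈ Finset.Icc 1 T \ {T}, y' t = y t := by
    intro t ht
    rcases Finset.mem_sdiff.mp ht with ⟨_, ht2⟩
    simp only [hy']
    rw [if_neg (by simpa using ht2)]
  have hT' : y' T = y T + (m' - m) := by simp [hy']
  have hsum' : (∑ t ∈ Finset.Icc 1 T, y' t) = m' := by
    rw [Finset.sum_eq_sum_sdiff_singleton_add hc.hTmem y', Finset.sum_congr rfl hd, hT']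
    rw [Finset.sum_eq_sum_sdiff_singleton_add hc.hTmem y] at hysum
    linarith
  refine le_trans ?_ (le_csSup (hc.Psi_bdd m') ⟨y', hsum', rfl⟩)
  rw [Finset.sum_eq_sum_sdiff_singleton_add hc.hTmem (fun t => u t (y t)),
    Finset.sum_eq_sum_sdiff_singleton_add hc.hTmem (fun t => u t (y' t))]
  have he : ∀ t ∈ Finset.Icc 1 T \ {T}, u t (y t) = u t (y' t) := by
    intro t ht
    rw [hd t ht]
  rw [Finset.sum_congr rfl he]
  have : u T (y T) ≤ u T (y' T) := by
    rw [hT']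
    exact (hc.hum T hc.hTmem).monotone (by linarith)
  linarith

lemma Ctx.Psi_step (hc : Ctx μ T ℱ B u) {Cb m : ℝ} (hm : m ≤ Cb) :
    Psi T u (m - 1) ≤ Psi T u m - (Finset.Icc 1 T).inf' (Finset.nonempty_Icc.mpr hc.hT)
      (fun t => u t (Cb / T + 1) - u t (Cb / T)) := by
  have hne : (Finset.Icc 1 T).Nonempty := Finset.nonempty_Icc.mpr hc.hT
  have hT0 : (0:ℝ) < (T:ℝ) := by exact_mod_cast hc.hT
  set δ := (Finset.Icc 1 T).inf' hne (fun t => u t (Cb / T + 1) - u t (Cb / T)) with hδ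
  refine csSup_le (Psi_nonempty hc (m-1)) ?_
  rintro x ⟨y, hysum, rfl⟩
  obtain ⟨t0, ht0, hy0⟩ : ∃ t0 ∈ Finset.Icc 1 T, y t0 ≤ Cb / T := by
    by_contra hcon
    push_neg at hcon
    have hlt : ∑ _t ∈ Finset.Icc 1 T, (Cb / T) < ∑ t ∈ Finset.Icc 1 T, y t :=
      Finset.sum_lt_sum_of_nonempty hne hcon
    rw [hysum, Finset.sum_const, Nat.card_Icc] at hlt
    simp only [Nat.add_sub_cancel, nsmul_eq_mul] at hlt
    rw [mul_div_cancel₀ _ hT0.ne'] at hlt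
    linarith
  set y' : ℕ → ℝ := fun t => if t = t0 then y t + 1 else y t with hy'
  have hd : ∀ t ∈ Finset.Icc 1 T \ {t0}, y' t = y t := by
    intro t ht
    rcases Finset.mem_sdiff.mp ht with ⟨_, ht2⟩
    simp only [hy']
    rw [if_neg (by simpa using ht2)]
  have hT' : y' t0 = y t0 + 1 := by simp [hy']
  have hsum' : (∑ t ∈ Finset.Icc 1 T, y' t) = m := by
    rw [Finset.sum_eq_sum_sdiff_singleton_add ht0 y', Finset.sum_congr rfl hd, hT']
    rw [Finset.sum_eq_sum_sdiff_singleton_add ht0 y] at hysum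
    linarith
  have hval : (∑ t ∈ Finset.Icc 1 T, u t (y t)) + δ ≤ ∑ t ∈ Finset.Icc 1 T, u t (y' t) := by
    have hcongr : (∑ t ∈ Finset.Icc 1 T \ {t0}, u t (y' t)) =
        ∑ t ∈ Finset.Icc 1 T \ {t0}, u t (y t) :=
      Finset.sum_congr rfl (fun t ht => by rw [hd t ht])
    rw [Finset.sum_eq_sum_sdiff_singleton_add ht0 (fun t => u t (y t)),
      Finset.sum_eq_sum_sdiff_singleton_add ht0 (fun t => u t (y' t)), hcongr, hT']
    have hinc : u t0 (Cb / T + 1) - u t0 (Cb / T) ≤ u t0 (y t0 + 1) - u t0 (y t0) :=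
      conc_inc (hc.hcon t0 ht0) hy0 zero_le_one
    have hδle : δ ≤ u t0 (Cb / T + 1) - u t0 (Cb / T) := Finset.inf'_le _ ht0
    linarith
  have hPsi : (∑ t ∈ Finset.Icc 1 T, u t (y' t)) ≤ Psi T u m :=
    le_csSup (hc.Psi_bdd m) ⟨y', hsum', rfl⟩
  linarith

lemma Ctx.Psi_chain (hc : Ctx μ T ℱ B u) (Cb : ℝ) (n : ℕ) :
    Psi T u (Cb - n) ≤ Psi T u Cb - n * (Finset.Icc 1 T).inf' (Finset.nonempty_Icc.mpr hc.hT)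
      (fun t => u t (Cb / T + 1) - u t (Cb / T)) := by
  induction n with
  | zero => simp
  | succ n ih =>
    have harg : Cb - ((n : ℝ) + 1) = (Cb - n) - 1 := by ring
    have hstep := hc.Psi_step (Cb := Cb) (m := Cb - n)
      (by linarith [Nat.cast_nonneg (α := ℝ) n] : Cb - (n:ℝ) ≤ Cb)
    push_cast
    rw [harg]
    set δ := (Finset.Icc 1 T).inf' (Finset.nonempty_Icc.mpr hc.hT)
      (fun t => u t (Cb / T + 1) - u t (Cb / T))
    linarith

lemma Ctx.psi_glob (hc : Ctx μ T ℱ B u) {x : ℕ → ℝ} {v Cb : ℝ}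
    (hsum : (∑ t ∈ Finset.Icc 1 T, x t) = v) (hv : v ≤ Cb) :
    (∑ t ∈ Finset.Icc 1 T, u t (x t)) ≤ Psi T u Cb :=
  le_trans (le_csSup (hc.Psi_bdd v) ⟨x, hsum, rfl⟩) (hc.Psi_mono hv)

lemma Ctx.psi_cap (hc : Ctx μ T ℱ B u) {x : ℕ → ℝ} {v Cb K M : ℝ}
    (hsum : (∑ t ∈ Finset.Icc 1 T, x t) = v) (hv : v ≤ Cb) (hK : K ≤ x T)
    (hM : ∀ z : ℝ, u T z ≤ M) :
    (∑ t ∈ Finset.Icc 1 T, u t (x t)) ≤ Psi T u (Cb - K) + (M - u T 0) := by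
  set z : ℕ → ℝ := fun t => if t = T then 0 else x t with hz
  have hd : ∀ t ∈ Finset.Icc 1 T \ {T}, z t = x t := by
    intro t ht
    rcases Finset.mem_sdiff.mp ht with ⟨_, ht2⟩
    simp only [hz]
    rw [if_neg (by simpa using ht2)]
  have hzT : z T = 0 := by simp [hz]
  have hzsum : (∑ t ∈ Finset.Icc 1 T, z t) = v - x T := by
    rw [Finset.sum_eq_sum_sdiff_singleton_add hc.hTmem z, Finset.sum_congr rfl hd, hzT]
    rw [Finset.sum_eq_sum_sdiff_singleton_add hc.hTmem x] at hsum
    linarith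
  have hle : (∑ t ∈ Finset.Icc 1 T, u t (z t)) ≤ Psi T u (Cb - K) :=
    le_trans (le_csSup (hc.Psi_bdd (v - x T)) ⟨z, hzsum, rfl⟩)
      (hc.Psi_mono (by linarith))
  have hcongr : (∑ t ∈ Finset.Icc 1 T \ {T}, u t (z t)) =
      ∑ t ∈ Finset.Icc 1 T \ {T}, u t (x t) :=
    Finset.sum_congr rfl (fun t ht => by rw [hd t ht])
  rw [Finset.sum_eq_sum_sdiff_singleton_add hc.hTmem (fun t => u t (z t)), hcongr, hzT] at hle
  rw [Finset.sum_eq_sum_sdiff_singleton_add hc.hTmem (fun t => u t (x t))]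
  have := hM (x T)
  linarith

lemma indicator_abs_le_one {A : Set Ω} (ω : Ω) : |A.indicator (fun _ => (1:ℝ)) ω| ≤ 1 := by
  by_cases h : ω ∈ A
  · rw [Set.indicator_of_mem h]; simp
  · rw [Set.indicator_of_notMem h]; simp

lemma indicator_nonneg' {A : Set Ω} (ω : Ω) : 0 ≤ A.indicator (fun _ => (1:ℝ)) ω := by
  by_cases h : ω ∈ A
  · rw [Set.indicator_of_mem h]; norm_num
  · rw [Set.indicator_of_notMem h]

lemma Ctx.flat_unbounded (hc : Ctx μ T ℱ B u) {A : Set Ω} (hA : MeasurableSet[ℱ T] A)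
    (hAp : (0:ℝ) < (μ A).toReal) {ε : ℝ} (hε : 0 < ε) {V0 : Ω → ℝ}
    (hV0 : Measurable[ℱ T] V0) {C0 : ℝ} (hV0b : ∀ᵐ ω ∂μ, |V0 ω| ≤ C0)
    (hMu : ¬ BddAbove (Set.range (u T)))
    (heqm : Util μ T ℱ u B (fun ω => V0 ω - ε * A.indicator (fun _ => (1:ℝ)) ω)
      = Util μ T ℱ u B V0) : False := by
  classical
  set χ : Ω → ℝ := A.indicator (fun _ => (1:ℝ)) with hχ
  have hχm : Measurable[ℱ T] χ := measurable_const.indicator hA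
  have hAm : MeasurableSet A := hc.hle T A hA
  set s := Util μ T ℱ u B V0 with hs
  set c0 := ∑ t ∈ Finset.Icc 1 T \ {T}, u t 0 with hc0
  set p' := (μ A).toReal with hp'
  -- choose a large utility point
  obtain ⟨yy, ⟨x0, rfl⟩, hx0gt⟩ := (not_bddAbove_iff.mp hMu)
    (max (u T (-C0)) (u T (-C0) + (s - c0 - u T (-C0)) / p'))
  have hx0a : u T (-C0) < u T x0 := lt_of_le_of_lt (le_max_left _ _) hx0gt
  have hx0b : u T (-C0) + (s - c0 - u T (-C0)) / p' < u T x0 :=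
    lt_of_le_of_lt (le_max_right _ _) hx0gt
  have hx0C : -C0 < x0 := (hc.hum T hc.hTmem).lt_iff_lt.mp hx0a
  set la := x0 + C0 with hla
  have hla0 : 0 < la := by rw [hla]; linarith
  set P2 : Ω → ℝ := fun ω => V0 ω + la * χ ω with hP2
  have hP2m : Measurable[ℱ T] P2 := hV0.add (hχm.const_mul la)
  have hP2b : ∀ᵐ ω ∂μ, |P2 ω| ≤ C0 + |la| := by
    filter_upwards [hV0b] with ω h1
    rw [hP2]
    refine le_trans (abs_add_le _ _) ?_
    have : |la * χ ω| ≤ |la| := by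
      rw [abs_mul]
      nlinarith [indicator_abs_le_one (A := A) ω, abs_nonneg la]
    linarith
  have hVmm : Measurable[ℱ T] (fun ω => V0 ω - ε * χ ω) := hV0.sub (hχm.const_mul ε)
  have hVmb : ∀ᵐ ω ∂μ, |V0 ω - ε * χ ω| ≤ C0 + ε := by
    filter_upwards [hV0b] with ω h1
    have h2 := indicator_abs_le_one (A := A) ω
    have h3 : |ε * χ ω| ≤ ε := by
      rw [abs_mul, abs_of_pos hε]
      nlinarith
    calc |V0 ω - ε * χ ω| ≤ |V0 ω| + |ε * χ ω| := abs_sub _ _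
      _ ≤ C0 + ε := by linarith
  -- flatness : Util P2 ≤ s
  have hUP2 : Util μ T ℱ u B P2 ≤ s := by
    set k := la + ε with hk
    have hk0 : 0 < k := by rw [hk]; linarith
    set a := la / k with ha
    have ha0 : 0 ≤ a := div_nonneg hla0.le hk0.le
    have ha1 : a ≤ 1 := by rw [ha, div_le_one hk0, hk]; linarith
    have h1a : 1 - a = ε / k := by rw [ha, hk]; field_simp; ring
    have hcombo := hc.Util_combo (P := V0) (P1 := fun ω => V0 ω - ε * χ ω) (P2 := P2)
      hVmm ⟨C0 + ε, hVmb⟩ hP2m ⟨C0 + |la|, hP2b⟩ hV0 ⟨C0, hV0b⟩ ha0 ha1 ?_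
    · rw [heqm, ← hs] at hcombo
      have h1a0 : 0 < 1 - a := by rw [h1a]; positivity
      nlinarith [hcombo]
    · intro ω
      rw [hP2, h1a, ha]
      field_simp
      ring
  -- canonical allocation lower bound
  have hcanon := hc.canon_isAlloc hP2m hP2b
  have hcval := hc.canon_allocVal (μ := μ) P2
  have hintP2 : Integrable (fun ω => u T (P2 ω)) μ :=
    integrable_comp μ (hc.hcont T hc.hTmem) (hP2m.mono (hc.hle T) le_rfl) hP2b
  set d := u T x0 - u T (-C0) with hd
  have hlow : u T (-C0) + d * p' ≤ ∫ ω, u T (P2 ω) ∂μ := by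
    have hRint : Integrable (fun ω => u T (-C0) + A.indicator (fun _ => d) ω) μ :=
      (integrable_const _).add ((integrable_const d).indicator hAm)
    have hRval : ∫ ω, (u T (-C0) + A.indicator (fun _ => d) ω) ∂μ = u T (-C0) + d * p' := by
      rw [integral_add (integrable_const _) ((integrable_const d).indicator hAm),
        integral_indicator_const d hAm]
      simp [hp', mul_comm, Measure.real]
    rw [← hRval]
    refine integral_mono_ae hRint hintP2 ?_
    filter_upwards [hV0b] with ω h1
    have hV0low : -C0 ≤ V0 ω := by
      have := abs_le.mp h1
      linarith [this.1]
    by_cases hω : ω ∈ A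
    · rw [Set.indicator_of_mem hω]
      have hχ1 : χ ω = 1 := by rw [hχ, Set.indicator_of_mem hω]
      have : x0 ≤ P2 ω := by
        show x0 ≤ V0 ω + la * χ ω
        rw [hχ1, hla]
        linarith
      have := (hc.hum T hc.hTmem).monotone this
      rw [hd]
      linarith
    · rw [Set.indicator_of_notMem hω]
      have hχ0 : χ ω = 0 := by rw [hχ, Set.indicator_of_notMem hω]
      have : -C0 ≤ P2 ω := by
        show -C0 ≤ V0 ω + la * χ ω
        rw [hχ0]; linarith
      have := (hc.hum T hc.hTmem).monotone this
      linarith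
  have hUcanon : allocVal μ T u B (canonAlloc B T P2) ≤ Util μ T ℱ u B P2 :=
    hc.allocVal_le_Util hP2m ⟨C0 + |la|, hP2b⟩ hcanon
  rw [hcval] at hUcanon
  have hdp : s - c0 - u T (-C0) < d * p' := by
    rw [hd]
    have := (div_lt_iff₀ hAp).mp (by linarith : (s - c0 - u T (-C0)) / p' < u T x0 - u T (-C0))
    linarith
  linarith

set_option maxHeartbeats 1000000 in
lemma Ctx.flat_bounded (hc : Ctx μ T ℱ B u) {A : Set Ω} (hA : MeasurableSet[ℱ T] A)
    (hAp : (0:ℝ) < (μ A).toReal) {ε : ℝ} (hε : 0 < ε) {V0 : Ω → ℝ}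
    (hV0 : Measurable[ℱ T] V0) {C0 : ℝ} (hV0b : ∀ᵐ ω ∂μ, |V0 ω| ≤ C0)
    (hMu : BddAbove (Set.range (u T)))
    (heqm : Util μ T ℱ u B (fun ω => V0 ω - ε * A.indicator (fun _ => (1:ℝ)) ω)
      = Util μ T ℱ u B V0) : False := by
  classical
  have hne : (Finset.Icc 1 T).Nonempty := Finset.nonempty_Icc.mpr hc.hT
  set χ : Ω → ℝ := A.indicator (fun _ => (1:ℝ)) with hχ
  have hχm : Measurable[ℱ T] χ := measurable_const.indicator hA
  have hAm : MeasurableSet A := hc.hle T A hA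
  set Vm : Ω → ℝ := fun ω => V0 ω - ε * χ ω with hVm
  have hVmm : Measurable[ℱ T] Vm := hV0.sub (hχm.const_mul ε)
  set C1 := C0 + ε with hC1
  have hVmb : ∀ᵐ ω ∂μ, |Vm ω| ≤ C1 := by
    filter_upwards [hV0b] with ω h1
    have h2 := indicator_abs_le_one (A := A) ω
    have h3 : |ε * χ ω| ≤ ε := by
      rw [abs_mul, abs_of_pos hε]
      nlinarith
    calc |Vm ω| ≤ |V0 ω| + |ε * χ ω| := abs_sub _ _
      _ ≤ C1 := by rw [hC1]; linarith
  set s := Util μ T ℱ u B V0 with hs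
  set M := sSup (Set.range (u T)) with hM
  have hMle : ∀ z : ℝ, u T z ≤ M := fun z => le_csSup hMu (Set.mem_range_self z)
  set p' := (μ A).toReal with hp'
  set δψ := (Finset.Icc 1 T).inf' hne (fun t => u t (C1 / T + 1) - u t (C1 / T)) with hδψ
  have hδψ0 : 0 < δψ := by
    rw [hδψ, Finset.lt_inf'_iff]
    intro t ht
    have := hc.hum t ht (by linarith : C1 / T < C1 / T + 1)
    linarith
  set P := max (Psi T u C1) 0 with hP
  set R := min (P + (s - 2 - P) / (p' / 2)) 0 with hR
  obtain ⟨n, hn⟩ := exists_nat_ge ((Psi T u C1 + (M - u T 0) - R) / δψ)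
  set Θ := Psi T u (C1 - n) + (M - u T 0) with hΘ
  have hΘR : Θ ≤ R := by
    have hchain := hc.Psi_chain (μ := μ) C1 n
    rw [← hδψ] at hchain
    have : Psi T u C1 + (M - u T 0) - R ≤ n * δψ := by
      rw [div_le_iff₀ hδψ0] at hn
      linarith
    rw [hΘ]
    linarith
  set γ := u T ((n : ℝ) + ε) - u T (n : ℝ) with hγ
  have hγ0 : 0 < γ := by
    rw [hγ]
    have := hc.hum T hc.hTmem (by linarith : (n:ℝ) < (n:ℝ) + ε)
    linarith
  set δ0 := γ * (p' / 2) with hδ0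
  have hδ00 : 0 < δ0 := by positivity
  set η := min (δ0 / 2) 1 with hη
  have hη0 : 0 < η := by positivity
  have hηle : η ≤ 1 := min_le_right _ _
  have hηle2 : η ≤ δ0 / 2 := min_le_left _ _
  -- a near-optimal allocation of Vm
  obtain ⟨v, hvmem, hv⟩ := exists_lt_of_lt_csSup
    (hc.USet_nonempty hVmm ⟨C1, hVmb⟩)
    (show s - η < Util μ T ℱ u B Vm by rw [heqm]; linarith)
  obtain ⟨Y, hY, rfl⟩ := hvmem
  -- the bad set where the last coordinate is huge
  set S : Set Ω := {ω | (n:ℝ) < Y T ω / B T ω} with hSdef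
  have hYTmeas : Measurable (fun ω => Y T ω / B T ω) :=
    hc.tilde_meas hc.hTmem (hY.1 T hc.hTmem).1
  have hS : MeasurableSet S := measurableSet_lt measurable_const hYTmeas
  have hfint : ∀ t ∈ Finset.Icc 1 T, Integrable (fun ω => u t (Y t ω / B t ω)) μ :=
    fun t ht => hc.alloc_integrable hY ht
  set f : Ω → ℝ := fun ω => ∑ t ∈ Finset.Icc 1 T, u t (Y t ω / B t ω) with hf
  have hfe : allocVal μ T u B Y = ∫ ω, f ω ∂μ := (integral_finset_sum _ hfint).symm
  have hfInt : Integrable f μ := integrable_finset_sum _ hfint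
  -- pointwise upper bound
  have hub : ∀ᵐ ω ∂μ, f ω ≤ S.indicator (fun _ => Θ - P) ω + P := by
    filter_upwards [hY.2, hV0b] with ω hsum hC0ω
    have hvle : Vm ω ≤ C1 := by
      have h2 := indicator_nonneg' (A := A) ω
      have := abs_le.mp hC0ω
      show V0 ω - ε * χ ω ≤ C1
      rw [hC1]
      nlinarith [this.2]
    by_cases hω : ω ∈ S
    · rw [Set.indicator_of_mem hω]
      have hcap := hc.psi_cap (x := fun t => Y t ω / B t ω) (v := Vm ω) (Cb := C1)
        (K := (n:ℝ)) (M := M) hsum hvle (le_of_lt hω) hMle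
      rw [hf]
      simp only
      rw [← hΘ] at hcap
      linarith
    · rw [Set.indicator_of_notMem hω]
      have := hc.psi_glob (x := fun t => Y t ω / B t ω) hsum hvle
      have hPle : Psi T u C1 ≤ P := le_max_left _ _
      rw [hf]
      simp only
      linarith
  have hIub : ∫ ω, f ω ∂μ ≤ (Θ - P) * (μ S).toReal + P := by
    have hRint : Integrable (fun ω => S.indicator (fun _ => Θ - P) ω + P) μ :=
      ((integrable_const _).indicator hS).add (integrable_const P)
    have := integral_mono_ae hfInt hRint hub
    rw [integral_add ((integrable_const _).indicator hS) (integrable_const P),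
      integral_indicator_const _ hS] at this
    simpa [mul_comm, smul_eq_mul, Measure.real] using this
  -- the bad set cannot be large
  have hval_big : s - η < allocVal μ T u B Y := hv
  have hμS : (μ S).toReal < p' / 2 := by
    by_contra hge
    push_neg at hge
    have hR0 : R ≤ 0 := min_le_right _ _
    have hP0 : 0 ≤ P := le_max_right _ _
    have hΘP : Θ - P ≤ 0 := by linarith
    have h1 : (Θ - P) * (μ S).toReal ≤ (Θ - P) * (p' / 2) :=
      mul_le_mul_of_nonpos_left hge hΘP
    have h2 : Θ - P ≤ (s - 2 - P) / (p' / 2) := by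
      have : Θ ≤ P + (s - 2 - P) / (p' / 2) := le_trans hΘR (min_le_left _ _)
      linarith
    have hp2 : 0 < p' / 2 := by positivity
    have h3 : (Θ - P) * (p' / 2) ≤ s - 2 - P := by
      rw [← le_div_iff₀ hp2]
      exact h2
    have hchain : ∫ ω, f ω ∂μ ≤ s - 2 := by
      calc ∫ ω, f ω ∂μ ≤ (Θ - P) * (μ S).toReal + P := hIub
        _ ≤ (Θ - P) * (p' / 2) + P := by linarith
        _ ≤ (s - 2 - P) + P := by linarith
        _ = s - 2 := by ring
    rw [hfe] at hval_big
    linarith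
  -- hence A ∖ S is substantial
  have hfin1 : μ (A ∩ S) ≠ ⊤ := measure_ne_top μ _
  have hfin2 : μ (A \ S) ≠ ⊤ := measure_ne_top μ _
  have hsplit : (μ (A ∩ S)).toReal + (μ (A \ S)).toReal = p' := by
    rw [hp', ← measure_inter_add_diff A hS, ENNReal.toReal_add hfin1 hfin2]
  have hAcapS : (μ (A ∩ S)).toReal ≤ (μ S).toReal :=
    ENNReal.toReal_le_toReal hfin1 (measure_ne_top μ _) |>.mpr
      (measure_mono Set.inter_subset_right)
  have hAS : p' / 2 < (μ (A \ S)).toReal := by linarith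
  -- improve the allocation using the A-money
  set g : Ω → ℝ := fun ω => ε * χ ω with hg
  have hgm : Measurable[ℱ T] g := hχm.const_mul ε
  have hgb : ∀ᵐ ω ∂μ, |g ω| ≤ ε := by
    refine Filter.Eventually.of_forall fun ω => ?_
    rw [hg]
    simp only
    rw [abs_mul, abs_of_pos hε]
    nlinarith [indicator_abs_le_one (A := A) ω]
  have halloc' : IsAlloc μ T ℱ B V0 (addT B T Y g) := by
    refine IsAlloc_congr (hc.addT_isAlloc hY hgm hgb) ?_
    refine Filter.Eventually.of_forall fun ω => ?_
    show Vm ω + g ω = V0 ω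
    rw [hVm, hg]
    ring
  have hvaleq := hc.addT_allocVal hY hgm hgb
  -- lower bound on the gain
  obtain ⟨CY, hCY⟩ := (hY.1 T hc.hTmem).2
  have hint1 : Integrable (fun ω => u T (Y T ω / B T ω + g ω)) μ := by
    refine integrable_comp μ (hc.hcont T hc.hTmem)
      (hYTmeas.add (hgm.mono (hc.hle T) le_rfl)) (C := CY + ε) ?_
    filter_upwards [hc.tilde_bdd hc.hTmem hCY, hgb] with ω h1 h2
    exact le_trans (abs_add_le _ _) (by linarith)
  have hint2 : Integrable (fun ω => u T (Y T ω / B T ω)) μ := hfint T hc.hTmem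
  have hgain : γ * (μ (A \ S)).toReal ≤
      ∫ ω, (u T (Y T ω / B T ω + g ω) - u T (Y T ω / B T ω)) ∂μ := by
    have hLint : Integrable ((A \ S).indicator (fun _ => γ)) μ :=
      (integrable_const _).indicator (hAm.diff hS)
    have hLval : ∫ ω, (A \ S).indicator (fun _ => γ) ω ∂μ = γ * (μ (A \ S)).toReal := by
      rw [integral_indicator_const _ (hAm.diff hS)]
      simp [mul_comm, Measure.real]
    rw [← hLval]
    refine integral_mono_ae hLint (hint1.sub hint2) ?_
    refine Filter.Eventually.of_forall fun ω => ?_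
    have hg0 : 0 ≤ g ω := by
      rw [hg]
      simp only
      nlinarith [indicator_nonneg' (A := A) ω]
    by_cases hω : ω ∈ A \ S
    · rw [Set.indicator_of_mem hω]
      have hχ1 : χ ω = 1 := by rw [hχ, Set.indicator_of_mem hω.1]
      have hgε : g ω = ε := by show ε * χ ω = ε; rw [hχ1, mul_one]
      have hYn : Y T ω / B T ω ≤ (n : ℝ) := not_lt.mp hω.2
      have hcc := conc_inc (hc.hcon T hc.hTmem) hYn hε.le
      show γ ≤ u T (Y T ω / B T ω + g ω) - u T (Y T ω / B T ω)
      rw [hgε, hγ]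
      linarith
    · rw [Set.indicator_of_notMem hω]
      show (0:ℝ) ≤ u T (Y T ω / B T ω + g ω) - u T (Y T ω / B T ω)
      have := (hc.hum T hc.hTmem).monotone
        (by linarith : Y T ω / B T ω ≤ Y T ω / B T ω + g ω)
      linarith
  -- contradiction
  have hfinal : allocVal μ T u B (addT B T Y g) ≤ s :=
    hc.allocVal_le_Util hV0 ⟨C0, hV0b⟩ halloc'
  rw [hvaleq] at hfinal
  have : γ * (p' / 2) ≤ γ * (μ (A \ S)).toReal :=
    mul_le_mul_of_nonneg_left hAS.le hγ0.le
  rw [← hδ0] at this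
  have hIg : δ0 ≤ ∫ ω, (u T (Y T ω / B T ω + g ω) - u T (Y T ω / B T ω)) ∂μ :=
    le_trans this hgain
  have hc1 : s - η < allocVal μ T u B Y := hval_big
  have hc2 : η ≤ δ0 / 2 := hηle2
  nlinarith [hfinal, hIg, hc1, hc2, hδ00]

end Main4


/-- Properties of the indifference price functional (Proposition 2.7):
strict monotonicity and convexity. -/
theorem indifference_price_strictMono_convex
    {Ω : Type*} [mΩ : MeasurableSpace Ω] (μ : Measure Ω) [IsProbabilityMeasure μ]
    (T : ℕ) (hT : 1 ≤ T)
    (ℱ : ℕ → MeasurableSpace Ω) (hℱmono : Monotone ℱ) (hℱle : ∀ t, ℱ t ≤ mΩ)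
    (r : ℕ → Ω → ℝ)
    (hr_meas : ∀ t ∈ Finset.Icc 1 T, Measurable[ℱ (t - 1)] (r t))
    (hr_nonneg : ∀ t ∈ Finset.Icc 1 T, ∀ ω, 0 ≤ r t ω)
    (hr_bdd : ∀ t ∈ Finset.Icc 1 T, ∃ C : ℝ, ∀ ω, r t ω ≤ C)
    (B : ℕ → Ω → ℝ) (hB : ∀ t ω, B t ω = ∏ k ∈ Finset.Icc 1 t, (1 + r k ω))
    (u : ℕ → ℝ → ℝ)
    (hu_conc : ∀ t ∈ Finset.Icc 1 T, StrictConcaveOn ℝ (Set.univ : Set ℝ) (u t))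
    (hu_diff : ∀ t ∈ Finset.Icc 1 T, ContDiff ℝ 1 (u t))
    (hu_deriv : ∀ t ∈ Finset.Icc 1 T, ∀ x : ℝ, 0 < deriv (u t) x)
    (hUfin : ∀ V : Ω → ℝ, Measurable[ℱ T] V → (∃ C : ℝ, ∀ᵐ ω ∂μ, |V ω| ≤ C) →
      BddAbove {s : ℝ | ∃ Y, IsAlloc μ T ℱ B V Y ∧ s = allocVal μ T u B Y})
    (w : ℝ) (H : (Ω → ℝ) → ℝ)
    (hH : ∀ V : Ω → ℝ, Measurable[ℱ T] V → (∃ C : ℝ, ∀ᵐ ω ∂μ, |V ω| ≤ C) →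
      Util μ T ℱ u B (fun ω => w + H V - V ω) = Util μ T ℱ u B (fun _ => w))
    (W Z : Ω → ℝ)
    (hWmeas : Measurable[ℱ T] W) (hWbdd : ∃ C : ℝ, ∀ᵐ ω ∂μ, |W ω| ≤ C)
    (hZmeas : Measurable[ℱ T] Z) (hZbdd : ∃ C : ℝ, ∀ᵐ ω ∂μ, |Z ω| ≤ C) :
    ((∀ᵐ ω ∂μ, Z ω ≤ W ω) → 0 < μ {ω | Z ω < W ω} → H Z < H W) ∧
    (∀ a : ℝ, 0 ≤ a → a ≤ 1 →
      H (fun ω => a * W ω + (1 - a) * Z ω) ≤ a * H W + (1 - a) * H Z) := by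
  classical
  -- build the context
  have hBmem : ∀ t ∈ Finset.Icc 1 T, ∀ k ∈ Finset.Icc 1 t, k ∈ Finset.Icc 1 T := by
    intro t ht k hk
    rw [Finset.mem_Icc] at *
    exact ⟨hk.1, le_trans hk.2 ht.2⟩
  have hB1 : ∀ t ∈ Finset.Icc 1 T, ∀ ω, 1 ≤ B t ω := by
    intro t ht ω
    rw [hB]
    calc (1:ℝ) = ∏ _k ∈ Finset.Icc 1 t, (1:ℝ) := by simp
      _ ≤ ∏ k ∈ Finset.Icc 1 t, (1 + r k ω) :=
        Finset.prod_le_prod (by norm_num)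
          (fun k hk => by linarith [hr_nonneg k (hBmem t ht k hk) ω])
  choose! Cr hCr using hr_bdd
  have hBb : ∀ t ∈ Finset.Icc 1 T, ∃ C : ℝ, ∀ ω, B t ω ≤ C := by
    intro t ht
    refine ⟨∏ k ∈ Finset.Icc 1 t, (1 + max (Cr k) 0), fun ω => ?_⟩
    rw [hB]
    refine Finset.prod_le_prod (fun k hk => by linarith [hr_nonneg k (hBmem t ht k hk) ω])
      (fun k hk => ?_)
    have := hCr k (hBmem t ht k hk) ω
    have := le_max_left (Cr k) 0
    linarith
  have hBmeas : ∀ s : ℕ, (∀ t ∈ Finset.Icc 1 T, ℱ t ≤ ℱ s) →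
      ∀ t ∈ Finset.Icc 1 T, t ≤ s → Measurable[ℱ s] (B t) := by
    intro s hmono t ht hts
    have : B t = fun ω => ∏ k ∈ Finset.Icc 1 t, (1 + r k ω) := funext fun ω => hB t ω
    rw [this]
    refine Finset.measurable_prod _ fun k hk => ?_
    have hk' := hBmem t ht k hk
    have hkt : k - 1 ≤ s := by
      rw [Finset.mem_Icc] at hk
      omega
    exact measurable_const.add ((hr_meas k hk').mono (hℱmono hkt) le_rfl)
  have hBt : ∀ t ∈ Finset.Icc 1 T, Measurable[ℱ t] (B t) := by
    intro t ht
    have : B t = fun ω => ∏ k ∈ Finset.Icc 1 t, (1 + r k ω) := funext fun ω => hB t ω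
    rw [this]
    refine Finset.measurable_prod _ fun k hk => ?_
    have hkt : k - 1 ≤ t := by
      rw [Finset.mem_Icc] at hk
      omega
    exact measurable_const.add ((hr_meas k (hBmem t ht k hk)).mono (hℱmono hkt) le_rfl)
  have hBT : ∀ t ∈ Finset.Icc 1 T, Measurable[ℱ T] (B t) := by
    intro t ht
    have : B t = fun ω => ∏ k ∈ Finset.Icc 1 t, (1 + r k ω) := funext fun ω => hB t ω
    rw [this]
    refine Finset.measurable_prod _ fun k hk => ?_
    have hkt : k - 1 ≤ T := by
      rw [Finset.mem_Icc] at hk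
      rw [Finset.mem_Icc] at ht
      omega
    exact measurable_const.add ((hr_meas k (hBmem t ht k hk)).mono (hℱmono hkt) le_rfl)
  have hc : Ctx μ T ℱ B u :=
    ⟨hT, hℱle, hB1, hBb, hBt, hBT,
      fun t ht => strictMono_of_deriv_pos (hu_deriv t ht),
      fun t ht => (hu_conc t ht).concaveOn,
      fun t ht => (hu_diff t ht).continuous,
      hUfin⟩
  obtain ⟨CW, hCW⟩ := hWbdd
  obtain ⟨CZ, hCZ⟩ := hZbdd
  constructor
  · -- strict monotonicity
    intro hle hpos
    by_contra hcon
    rw [not_lt] at hcon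
    -- find a positive-measure set with a uniform gap
    have hsub : {ω | Z ω < W ω} ⊆ ⋃ n : ℕ, {ω | Z ω + 1 / ((n : ℝ) + 1) ≤ W ω} := by
      intro ω hω
      obtain ⟨n, hn⟩ := exists_nat_one_div_lt (show (0:ℝ) < W ω - Z ω by
        have : Z ω < W ω := hω
        linarith)
      exact Set.mem_iUnion.mpr ⟨n, by simp only [Set.mem_setOf_eq]; linarith⟩
    obtain ⟨n, hn⟩ : ∃ n : ℕ, μ {ω | Z ω + 1 / ((n : ℝ) + 1) ≤ W ω} ≠ 0 := by
      by_contra hall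
      push_neg at hall
      have h1 := measure_iUnion_null hall
      have h2 := measure_mono (μ := μ) hsub
      rw [h1] at h2
      exact absurd (le_antisymm h2 zero_le) hpos.ne'
    set ε := 1 / ((n : ℝ) + 1) with hεdef
    have hε : 0 < ε := by positivity
    set A := {ω | Z ω + ε ≤ W ω} with hAdef
    have hA : MeasurableSet[ℱ T] A := measurableSet_le (hZmeas.add measurable_const) hWmeas
    have hApos : (0:ℝ) < (μ A).toReal := ENNReal.toReal_pos hn (measure_ne_top μ A)
    set V0 : Ω → ℝ := fun ω => w + H Z - Z ω with hV0def
    have hV0m : Measurable[ℱ T] V0 := measurable_const.sub hZmeas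
    set C0 := |w + H Z| + CZ with hC0def
    have hV0b : ∀ᵐ ω ∂μ, |V0 ω| ≤ C0 := by
      filter_upwards [hCZ] with ω h1
      calc |V0 ω| ≤ |w + H Z| + |Z ω| := abs_sub _ _
        _ ≤ C0 := by rw [hC0def]; linarith
    set χ : Ω → ℝ := A.indicator (fun _ => (1:ℝ)) with hχdef
    have hχm : Measurable[ℱ T] χ := measurable_const.indicator hA
    set Vm : Ω → ℝ := fun ω => V0 ω - ε * χ ω with hVmdef
    have hVmm : Measurable[ℱ T] Vm := hV0m.sub (hχm.const_mul ε)
    have hVmb : ∀ᵐ ω ∂μ, |Vm ω| ≤ C0 + ε := by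
      filter_upwards [hV0b] with ω h1
      have h2 := indicator_abs_le_one (A := A) ω
      have h3 : |ε * χ ω| ≤ ε := by
        rw [abs_mul, abs_of_pos hε]
        nlinarith
      calc |Vm ω| ≤ |V0 ω| + |ε * χ ω| := abs_sub _ _
        _ ≤ C0 + ε := by linarith
    -- the two prices sandwich
    set V1 : Ω → ℝ := fun ω => w + H W - W ω with hV1def
    have hV1m : Measurable[ℱ T] V1 := measurable_const.sub hWmeas
    have hV1b : ∀ᵐ ω ∂μ, |V1 ω| ≤ |w + H W| + CW := by
      filter_upwards [hCW] with ω h1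
      calc |V1 ω| ≤ |w + H W| + |W ω| := abs_sub _ _
        _ ≤ |w + H W| + CW := by linarith
    have e1 : Util μ T ℱ u B V1 = Util μ T ℱ u B (fun _ => w) := hH W hWmeas ⟨CW, hCW⟩
    have e2 : Util μ T ℱ u B V0 = Util μ T ℱ u B (fun _ => w) := hH Z hZmeas ⟨CZ, hCZ⟩
    have hmono1 : Util μ T ℱ u B V1 ≤ Util μ T ℱ u B Vm := by
      refine hc.Util_mono hV1m ⟨|w + H W| + CW, hV1b⟩ hVmm ⟨C0 + ε, hVmb⟩ ?_
      filter_upwards [hle] with ω h1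
      by_cases hω : ω ∈ A
      · have hχ1 : χ ω = 1 := by rw [hχdef, Set.indicator_of_mem hω]
        have hgap : Z ω + ε ≤ W ω := hω
        show w + H W - W ω ≤ V0 ω - ε * χ ω
        rw [hχ1, hV0def]
        simp only
        linarith
      · have hχ0 : χ ω = 0 := by rw [hχdef, Set.indicator_of_notMem hω]
        show w + H W - W ω ≤ V0 ω - ε * χ ω
        rw [hχ0, hV0def]
        simp only
        linarith
    have hmono2 : Util μ T ℱ u B Vm ≤ Util μ T ℱ u B V0 := by
      refine hc.Util_mono hVmm ⟨C0 + ε, hVmb⟩ hV0m ⟨C0, hV0b⟩ ?_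
      refine Filter.Eventually.of_forall fun ω => ?_
      have h2 := indicator_nonneg' (A := A) ω
      show V0 ω - ε * χ ω ≤ V0 ω
      rw [hχdef]
      nlinarith
    have heqm : Util μ T ℱ u B Vm = Util μ T ℱ u B V0 := by
      refine le_antisymm hmono2 ?_
      calc Util μ T ℱ u B V0 = Util μ T ℱ u B V1 := by rw [e1, e2]
        _ ≤ Util μ T ℱ u B Vm := hmono1
    by_cases hMu : BddAbove (Set.range (u T))
    · exact hc.flat_bounded hA hApos hε hV0m hV0b hMu heqm
    · exact hc.flat_unbounded hA hApos hε hV0m hV0b hMu heqm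
  · -- convexity
    intro a ha0 ha1
    by_contra hcon
    rw [not_le] at hcon
    set X : Ω → ℝ := fun ω => a * W ω + (1 - a) * Z ω with hXdef
    have hXm : Measurable[ℱ T] X := (hWmeas.const_mul a).add (hZmeas.const_mul (1 - a))
    have hXb : ∀ᵐ ω ∂μ, |X ω| ≤ |a| * CW + |1 - a| * CZ := by
      filter_upwards [hCW, hCZ] with ω h1 h2
      calc |X ω| ≤ |a| * |W ω| + |1 - a| * |Z ω| := by
            rw [← abs_mul, ← abs_mul]; exact abs_add_le _ _
        _ ≤ |a| * CW + |1 - a| * CZ := by gcongr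
    set pbar := a * H W + (1 - a) * H Z with hpbar
    set P : Ω → ℝ := fun ω => w + pbar - X ω with hPdef
    have hPm : Measurable[ℱ T] P := measurable_const.sub hXm
    have hPb : ∀ᵐ ω ∂μ, |P ω| ≤ |w + pbar| + (|a| * CW + |1 - a| * CZ) := by
      filter_upwards [hXb] with ω h1
      calc |P ω| ≤ |w + pbar| + |X ω| := abs_sub _ _
        _ ≤ _ := by linarith
    set V1 : Ω → ℝ := fun ω => w + H W - W ω with hV1def
    set V2 : Ω → ℝ := fun ω => w + H Z - Z ω with hV2def
    have hV1m : Measurable[ℱ T] V1 := measurable_const.sub hWmeas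
    have hV2m : Measurable[ℱ T] V2 := measurable_const.sub hZmeas
    have hV1b : ∀ᵐ ω ∂μ, |V1 ω| ≤ |w + H W| + CW := by
      filter_upwards [hCW] with ω h1
      calc |V1 ω| ≤ |w + H W| + |W ω| := abs_sub _ _
        _ ≤ |w + H W| + CW := by linarith
    have hV2b : ∀ᵐ ω ∂μ, |V2 ω| ≤ |w + H Z| + CZ := by
      filter_upwards [hCZ] with ω h1
      calc |V2 ω| ≤ |w + H Z| + |Z ω| := abs_sub _ _
        _ ≤ |w + H Z| + CZ := by linarith
    have e1 : Util μ T ℱ u B V1 = Util μ T ℱ u B (fun _ => w) := hH W hWmeas ⟨CW, hCW⟩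
    have e2 : Util μ T ℱ u B V2 = Util μ T ℱ u B (fun _ => w) := hH Z hZmeas ⟨CZ, hCZ⟩
    have eX : Util μ T ℱ u B (fun ω => w + H X - X ω) = Util μ T ℱ u B (fun _ => w) :=
      hH X hXm ⟨|a| * CW + |1 - a| * CZ, hXb⟩
    have hcombo := hc.Util_combo (P := P) (P1 := V1) (P2 := V2)
      hV1m ⟨|w + H W| + CW, hV1b⟩ hV2m ⟨|w + H Z| + CZ, hV2b⟩
      hPm ⟨|w + pbar| + (|a| * CW + |1 - a| * CZ), hPb⟩ ha0 ha1 ?_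
    · have hls : Util μ T ℱ u B (fun _ => w) ≤ Util μ T ℱ u B P := by
        rw [e1, e2] at hcombo
        have hring : a * Util μ T ℱ u B (fun _ => w) + (1 - a) * Util μ T ℱ u B (fun _ => w)
            = Util μ T ℱ u B (fun _ => w) := by ring
        linarith
      have hstrict : Util μ T ℱ u B P < Util μ T ℱ u B (fun ω => w + H X - X ω) := by
        refine hc.Util_lt_add_const hPm hPb (c := H X - pbar) (by linarith) ?_
        intro ω
        show w + H X - X ω = P ω + (H X - pbar)
        rw [hPdef]
        ring
      rw [eX] at hstrict
      linarith
    · intro ω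
      show w + pbar - X ω = a * V1 ω + (1 - a) * V2 ω
      rw [hpbar, hXdef, hV1def, hV2def]
      simp only
      ring
end
end

section
/- Characterization of optimality by the first order condition: for W ∈ L^∞ and (X_t)_{t∈𝕋} ∈ A(W), the allocation (X_t) is optimal (i.e. ∑_{t∈𝕋} E[u_t(X̃_t)] = U(W)) if and only if the process (u_t'(X̃_t))_{t∈𝕋} is an (F_t)-martingale. -/
open MeasureTheory Finset Real

noncomputable section

/-- Tangent line lies above a concave differentiable function. -/
lemma concave_tangent_le {f : ℝ → ℝ} (hf : ConcaveOn ℝ Set.univ f)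
    (hd : Differentiable ℝ f) (x y : ℝ) : f y - f x ≤ deriv f x * (y - x) := by
  rcases lt_trichotomy x y with h | h | h
  · have hs := hf.slope_le_deriv (Set.mem_univ x) (Set.mem_univ y) h (hd x)
    rw [slope_def_field, div_le_iff₀ (by linarith)] at hs
    linarith
  · subst h; simp
  · have hs := hf.deriv_le_slope (Set.mem_univ y) (Set.mem_univ x) h (hd x)
    rw [slope_def_field, le_div_iff₀ (by linarith)] at hs
    linarith

/-- A continuous function composed with an a.e. bounded function is integrable, with bound. -/
lemma exists_bound_comp {g : ℝ → ℝ} (hg : Continuous g) (C : ℝ) :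
    ∃ K : ℝ, ∀ x : ℝ, |x| ≤ C → |g x| ≤ K := by
  obtain ⟨K, hK⟩ := (isCompact_Icc (a := -C) (b := C)).exists_bound_of_continuousOn
    hg.continuousOn
  exact ⟨K, fun x hx => hK x (Set.mem_Icc.mpr (abs_le.mp hx))⟩

lemma integrable_comp_of_bdd {Ω : Type*} [MeasurableSpace Ω] {μ : Measure Ω}
    [IsProbabilityMeasure μ] {g : ℝ → ℝ} (hg : Continuous g) {f : Ω → ℝ}
    (hf : AEStronglyMeasurable f μ) {C : ℝ} (hC : ∀ᵐ ω ∂μ, |f ω| ≤ C) :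
    Integrable (fun ω => g (f ω)) μ := by
  obtain ⟨K, hK⟩ := exists_bound_comp hg C
  refine Integrable.mono' (integrable_const K) (hg.comp_aestronglyMeasurable hf) ?_
  filter_upwards [hC] with ω h
  exact hK _ h

lemma sum_pair_ite {s t : ℕ} {F : Finset ℕ} (hs : s ∈ F) (ht : t ∈ F) (hst : s ≠ t)
    (a b : ℝ) :
    ∑ k ∈ F, (if k = s then a else if k = t then b else 0) = a + b := by
  have h : ∀ k, (if k = s then a else if k = t then b else 0)
      = (if k = s then a else 0) + (if k = t then b else 0) := by
    intro k
    rcases eq_or_ne k s with hk | hk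
    · subst hk; simp [if_neg hst]
    · simp [hk]
  simp_rw [h, Finset.sum_add_distrib, Finset.sum_ite_eq' F s (fun _ => a),
    Finset.sum_ite_eq' F t (fun _ => b), if_pos hs, if_pos ht]

lemma integral_indicator_one_mul {Ω : Type*} [MeasurableSpace Ω] (μ : Measure Ω)
    {A : Set Ω} (hA : MeasurableSet A) (h : Ω → ℝ) :
    ∫ ω, A.indicator (fun _ => (1 : ℝ)) ω * h ω ∂μ = ∫ ω in A, h ω ∂μ := by
  rw [← integral_indicator hA]
  congr 1
  funext ω
  by_cases hω : ω ∈ A <;> simp [hω]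

/-- Characterization of optimality by the first order condition (Theorem 2.8):
`(X_t) ∈ A(W)` is optimal iff `(u_t'(X̃_t))_{t∈𝕋}` is an `(F_t)`-martingale. -/
theorem optimal_iff_firstOrderCondition
    {Ω : Type*} [mΩ : MeasurableSpace Ω] (μ : Measure Ω) [IsProbabilityMeasure μ]
    (T : ℕ) (hT : 1 ≤ T)
    (ℱ : ℕ → MeasurableSpace Ω) (hℱmono : Monotone ℱ) (hℱle : ∀ t, ℱ t ≤ mΩ)
    (r : ℕ → Ω → ℝ)
    (hr_meas : ∀ t ∈ Finset.Icc 1 T, Measurable[ℱ (t - 1)] (r t))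
    (hr_nonneg : ∀ t ∈ Finset.Icc 1 T, ∀ ω, 0 ≤ r t ω)
    (hr_bdd : ∀ t ∈ Finset.Icc 1 T, ∃ C : ℝ, ∀ ω, r t ω ≤ C)
    (B : ℕ → Ω → ℝ) (hB : ∀ t ω, B t ω = ∏ k ∈ Finset.Icc 1 t, (1 + r k ω))
    (u : ℕ → ℝ → ℝ)
    (hu_conc : ∀ t ∈ Finset.Icc 1 T, StrictConcaveOn ℝ (Set.univ : Set ℝ) (u t))
    (hu_diff : ∀ t ∈ Finset.Icc 1 T, ContDiff ℝ 1 (u t))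
    (hu_deriv : ∀ t ∈ Finset.Icc 1 T, ∀ x : ℝ, 0 < deriv (u t) x)
    (W : Ω → ℝ) (hWmeas : Measurable[ℱ T] W) (hWbdd : ∃ C : ℝ, ∀ᵐ ω ∂μ, |W ω| ≤ C)
    (X : ℕ → Ω → ℝ) (hX : IsAlloc μ T ℱ B W X) :
    (∀ Y, IsAlloc μ T ℱ B W Y → allocVal μ T u B Y ≤ allocVal μ T u B X) ↔
    (∀ s ∈ Finset.Icc 1 T, ∀ t ∈ Finset.Icc 1 T, s ≤ t →
      μ[(fun ω => deriv (u t) (X t ω / B t ω)) | ℱ s]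
        =ᵐ[μ] fun ω => deriv (u s) (X s ω / B s ω)) := by
  -- Basic facts about the discount process B
  have hB1 : ∀ t, t ≤ T → ∀ ω, (1 : ℝ) ≤ B t ω := by
    intro t htT ω
    rw [hB]
    calc (1 : ℝ) = ∏ _k ∈ Finset.Icc 1 t, (1 : ℝ) := by rw [Finset.prod_const_one]
    _ ≤ ∏ k ∈ Finset.Icc 1 t, (1 + r k ω) := by
        refine Finset.prod_le_prod (fun k _ => zero_le_one) (fun k hk => ?_)
        have hkT : k ∈ Finset.Icc 1 T := Finset.mem_Icc.mpr
          ⟨(Finset.mem_Icc.mp hk).1, le_trans (Finset.mem_Icc.mp hk).2 htT⟩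
        linarith [hr_nonneg k hkT ω]
  have hBne : ∀ t, t ≤ T → ∀ ω, B t ω ≠ 0 := fun t htT ω =>
    ne_of_gt (lt_of_lt_of_le zero_lt_one (hB1 t htT ω))
  have hBmeas : ∀ t, t ≤ T → Measurable[ℱ t] (B t) := by
    intro t htT
    have h1 : Measurable[ℱ t] (fun ω => ∏ k ∈ Finset.Icc 1 t, (1 + r k ω)) := by
      refine Finset.measurable_prod _ fun k hk => ?_
      have hkT : k ∈ Finset.Icc 1 T := Finset.mem_Icc.mpr
        ⟨(Finset.mem_Icc.mp hk).1, le_trans (Finset.mem_Icc.mp hk).2 htT⟩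
      have hk1 : k - 1 ≤ t := le_trans (Nat.sub_le k 1) (Finset.mem_Icc.mp hk).2
      exact measurable_const.add ((hr_meas k hkT).mono (hℱmono hk1) le_rfl)
    have heq : B t = fun ω => ∏ k ∈ Finset.Icc 1 t, (1 + r k ω) := funext fun ω => hB t ω
    rw [heq]; exact h1
  have hBbdd : ∀ t, t ≤ T → ∃ K : ℝ, ∀ ω, |B t ω| ≤ K := by
    intro t htT
    set C : ℕ → ℝ := fun k => if hk : k ∈ Finset.Icc 1 T then
      max ((hr_bdd k hk).choose) 0 else 0 with hCdef
    refine ⟨∏ k ∈ Finset.Icc 1 t, (1 + C k), fun ω => ?_⟩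
    rw [abs_of_pos (lt_of_lt_of_le zero_lt_one (hB1 t htT ω)), hB]
    refine Finset.prod_le_prod (fun k hk => ?_) (fun k hk => ?_)
    · have hkT : k ∈ Finset.Icc 1 T := Finset.mem_Icc.mpr
        ⟨(Finset.mem_Icc.mp hk).1, le_trans (Finset.mem_Icc.mp hk).2 htT⟩
      linarith [hr_nonneg k hkT ω]
    · have hkT : k ∈ Finset.Icc 1 T := Finset.mem_Icc.mpr
        ⟨(Finset.mem_Icc.mp hk).1, le_trans (Finset.mem_Icc.mp hk).2 htT⟩
      have : r k ω ≤ C k := by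
        rw [hCdef]; simp only [dif_pos hkT]
        exact le_max_of_le_left ((hr_bdd k hkT).choose_spec ω)
      linarith
  -- Facts about the discounted process X̃
  have hXt_meas : ∀ t ∈ Finset.Icc 1 T, Measurable[ℱ t] (fun ω => X t ω / B t ω) :=
    fun t ht => (hX.1 t ht).1.div (hBmeas t (Finset.mem_Icc.mp ht).2)
  have hXt_bdd : ∀ t ∈ Finset.Icc 1 T, ∃ C : ℝ, 0 ≤ C ∧ ∀ᵐ ω ∂μ, |X t ω / B t ω| ≤ C := by
    intro t ht
    obtain ⟨C, hC⟩ := (hX.1 t ht).2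
    refine ⟨max C 0, le_max_right _ _, ?_⟩
    filter_upwards [hC] with ω h
    have htT := (Finset.mem_Icc.mp ht).2
    have hb := hB1 t htT ω
    calc |X t ω / B t ω| = |X t ω| / |B t ω| := abs_div _ _
    _ = |X t ω| / B t ω := by rw [abs_of_pos (by linarith : (0:ℝ) < B t ω)]
    _ ≤ |X t ω| := by
        refine div_le_self (abs_nonneg _) hb
    _ ≤ max C 0 := le_trans h (le_max_left _ _)
  have hu'cont : ∀ t ∈ Finset.Icc 1 T, Continuous (deriv (u t)) :=
    fun t ht => (hu_diff t ht).continuous_deriv le_rfl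
  have hudiff : ∀ t ∈ Finset.Icc 1 T, Differentiable ℝ (u t) :=
    fun t ht => (hu_diff t ht).differentiable one_ne_zero
  have hucont : ∀ t ∈ Finset.Icc 1 T, Continuous (u t) :=
    fun t ht => (hudiff t ht).continuous
  -- measurability upgrade
  have hXt_aesm : ∀ t ∈ Finset.Icc 1 T, AEStronglyMeasurable (fun ω => X t ω / B t ω) μ :=
    fun t ht => ((hXt_meas t ht).mono (hℱle t) le_rfl).aestronglyMeasurable
  -- integrability of u_t'(X̃_t)
  have hu'X_int : ∀ t ∈ Finset.Icc 1 T,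
      Integrable (fun ω => deriv (u t) (X t ω / B t ω)) μ := by
    intro t ht
    obtain ⟨C, _, hC⟩ := hXt_bdd t ht
    exact integrable_comp_of_bdd (hu'cont t ht) (hXt_aesm t ht) hC
  have hu'X_sm : ∀ t ∈ Finset.Icc 1 T,
      StronglyMeasurable[ℱ t] (fun ω => deriv (u t) (X t ω / B t ω)) := by
    intro t ht
    exact (((hu'cont t ht).measurable).comp (hXt_meas t ht)).stronglyMeasurable
  constructor
  · -- optimal → martingale property
    intro hopt s hs t ht hst
    have hsT := (Finset.mem_Icc.mp hs).2
    rcases eq_or_lt_of_le hst with hseq | hslt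
    · -- s = t : conditional expectation of a measurable function
      subst hseq
      rw [condExp_of_stronglyMeasurable (hℱle s) (hu'X_sm s hs) (hu'X_int s hs)]
    · -- s < t : perturbation argument
      have hst_ne : s ≠ t := ne_of_lt hslt
      obtain ⟨Cs, hCs0, hCs⟩ := hXt_bdd s hs
      obtain ⟨Ct, hCt0, hCt⟩ := hXt_bdd t ht
      obtain ⟨Ks, hKs⟩ := exists_bound_comp (hu'cont s hs) (Cs + 1)
      obtain ⟨Kt, hKt⟩ := exists_bound_comp (hu'cont t ht) (Ct + 1)
      -- Key inequality for all bounded ℱ_s-measurable Z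
      have key : ∀ Z : Ω → ℝ, Measurable[ℱ s] Z → (∀ ω, |Z ω| ≤ 1) →
          ∫ ω, Z ω * deriv (u s) (X s ω / B s ω) ∂μ
            ≤ ∫ ω, Z ω * deriv (u t) (X t ω / B t ω) ∂μ := by
        intro Z hZm hZb
        have hZmΩ : Measurable Z := hZm.mono (hℱle s) le_rfl
        have hZae : AEStronglyMeasurable Z μ := hZmΩ.aestronglyMeasurable
        set ε : ℕ → ℝ := fun n => 1 / ((n : ℝ) + 1) with hεdef
        have hεpos : ∀ n, 0 < ε n := fun n => by positivity
        have hεle1 : ∀ n, ε n ≤ 1 := by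
          intro n
          rw [hεdef]
          rw [div_le_one (by positivity)]
          simp
        -- the perturbed arguments
        have hsarg_meas : ∀ n, AEStronglyMeasurable
            (fun ω => X s ω / B s ω + ε n * Z ω) μ :=
          fun n => ((hXt_meas s hs).mono (hℱle s) le_rfl).aestronglyMeasurable.add
            ((hZmΩ.const_mul (ε n)).aestronglyMeasurable)
        have htarg_meas : ∀ n, AEStronglyMeasurable
            (fun ω => X t ω / B t ω - ε n * Z ω) μ :=
          fun n => ((hXt_meas t ht).mono (hℱle t) le_rfl).aestronglyMeasurable.sub
            ((hZmΩ.const_mul (ε n)).aestronglyMeasurable)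
        have hsarg_bdd : ∀ n, ∀ᵐ ω ∂μ, |X s ω / B s ω + ε n * Z ω| ≤ Cs + 1 := by
          intro n
          filter_upwards [hCs] with ω h
          have h1 : |ε n * Z ω| ≤ 1 := by
            rw [abs_mul, abs_of_pos (hεpos n)]
            calc ε n * |Z ω| ≤ 1 * 1 :=
              mul_le_mul (hεle1 n) (hZb ω) (abs_nonneg _) zero_le_one
            _ = 1 := one_mul 1
          calc |X s ω / B s ω + ε n * Z ω| ≤ |X s ω / B s ω| + |ε n * Z ω| := abs_add_le _ _
          _ ≤ Cs + 1 := add_le_add h h1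
        have htarg_bdd : ∀ n, ∀ᵐ ω ∂μ, |X t ω / B t ω - ε n * Z ω| ≤ Ct + 1 := by
          intro n
          filter_upwards [hCt] with ω h
          have h1 : |ε n * Z ω| ≤ 1 := by
            rw [abs_mul, abs_of_pos (hεpos n)]
            calc ε n * |Z ω| ≤ 1 * 1 :=
              mul_le_mul (hεle1 n) (hZb ω) (abs_nonneg _) zero_le_one
            _ = 1 := one_mul 1
          calc |X t ω / B t ω - ε n * Z ω| ≤ |X t ω / B t ω| + |ε n * Z ω| := abs_sub _ _
          _ ≤ Ct + 1 := add_le_add h h1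
        -- integrability of all relevant functions
        have hIs : ∀ n, Integrable
            (fun ω => deriv (u s) (X s ω / B s ω + ε n * Z ω)) μ :=
          fun n => integrable_comp_of_bdd (hu'cont s hs) (hsarg_meas n) (hsarg_bdd n)
        have hIt : ∀ n, Integrable
            (fun ω => deriv (u t) (X t ω / B t ω - ε n * Z ω)) μ :=
          fun n => integrable_comp_of_bdd (hu'cont t ht) (htarg_meas n) (htarg_bdd n)
        have hZIs : ∀ n, Integrable
            (fun ω => Z ω * deriv (u s) (X s ω / B s ω + ε n * Z ω)) μ :=
          fun n => (hIs n).bdd_mul hZae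
            (Filter.Eventually.of_forall fun ω => by
              simpa [Real.norm_eq_abs] using hZb ω)
        have hZIt : ∀ n, Integrable
            (fun ω => Z ω * deriv (u t) (X t ω / B t ω - ε n * Z ω)) μ :=
          fun n => (hIt n).bdd_mul hZae
            (Filter.Eventually.of_forall fun ω => by
              simpa [Real.norm_eq_abs] using hZb ω)
        have husX_int : ∀ n, Integrable (fun ω => u s (X s ω / B s ω + ε n * Z ω)) μ :=
          fun n => integrable_comp_of_bdd (hucont s hs) (hsarg_meas n) (hsarg_bdd n)
        have husX_int0 : Integrable (fun ω => u s (X s ω / B s ω)) μ :=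
          integrable_comp_of_bdd (hucont s hs) (hXt_aesm s hs) hCs
        have hutX_int : ∀ n, Integrable (fun ω => u t (X t ω / B t ω - ε n * Z ω)) μ :=
          fun n => integrable_comp_of_bdd (hucont t ht) (htarg_meas n) (htarg_bdd n)
        have hutX_int0 : Integrable (fun ω => u t (X t ω / B t ω)) μ :=
          integrable_comp_of_bdd (hucont t ht) (hXt_aesm t ht) hCt
        -- the inequality at each scale ε n
        have hn : ∀ n : ℕ,
            ∫ ω, Z ω * deriv (u s) (X s ω / B s ω + ε n * Z ω) ∂μ
              ≤ ∫ ω, Z ω * deriv (u t) (X t ω / B t ω - ε n * Z ω) ∂μ := by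
          intro n
          -- perturbed allocation
          set Yn : ℕ → Ω → ℝ := fun k ω =>
            if k = s then X s ω + ε n * (B s ω * Z ω)
            else if k = t then X t ω - ε n * (B t ω * Z ω)
            else X k ω with hYdef
          obtain ⟨KBs, hKBs⟩ := hBbdd s hsT
          obtain ⟨KBt, hKBt⟩ := hBbdd t (Finset.mem_Icc.mp ht).2
          have hYalloc : IsAlloc μ T ℱ B W Yn := by
            constructor
            · intro k hk
              rcases eq_or_ne k s with hks | hks
              · subst hks
                constructor
                · simp only [hYdef, if_pos rfl]
                  exact (hX.1 k hk).1.add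
                    (measurable_const.mul ((hBmeas k hsT).mul hZm))
                · obtain ⟨Cx, hCx⟩ := (hX.1 k hk).2
                  refine ⟨Cx + KBs, ?_⟩
                  filter_upwards [hCx] with ω h
                  simp only [hYdef, if_pos rfl]
                  have h2 : |ε n * (B k ω * Z ω)| ≤ KBs := by
                    rw [abs_mul, abs_mul, abs_of_pos (hεpos n)]
                    calc ε n * (|B k ω| * |Z ω|) ≤ 1 * (KBs * 1) := by
                              refine mul_le_mul (hεle1 n) ?_ (by positivity) zero_le_one
                              exact mul_le_mul (hKBs ω) (hZb ω) (abs_nonneg _)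
                                (le_trans (abs_nonneg _) (hKBs ω))
                    _ = KBs := by ring
                  calc |X k ω + ε n * (B k ω * Z ω)| ≤ |X k ω| + |ε n * (B k ω * Z ω)| :=
                    abs_add_le _ _
                  _ ≤ Cx + KBs := add_le_add h h2
              · rcases eq_or_ne k t with hkt | hkt
                · subst hkt
                  constructor
                  · simp only [hYdef, if_neg hks, if_pos rfl]
                    refine (hX.1 k hk).1.sub
                      (measurable_const.mul (((hBmeas k (Finset.mem_Icc.mp hk).2)).mul
                        (hZm.mono (hℱmono hst) le_rfl)))
                  · obtain ⟨Cx, hCx⟩ := (hX.1 k hk).2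
                    refine ⟨Cx + KBt, ?_⟩
                    filter_upwards [hCx] with ω h
                    simp only [hYdef, if_neg hks, if_pos rfl]
                    have h2 : |ε n * (B k ω * Z ω)| ≤ KBt := by
                      rw [abs_mul, abs_mul, abs_of_pos (hεpos n)]
                      calc ε n * (|B k ω| * |Z ω|) ≤ 1 * (KBt * 1) := by
                                refine mul_le_mul (hεle1 n) ?_ (by positivity) zero_le_one
                                exact mul_le_mul (hKBt ω) (hZb ω) (abs_nonneg _)
                                  (le_trans (abs_nonneg _) (hKBt ω))
                      _ = KBt := by ring
                    calc |X k ω - ε n * (B k ω * Z ω)| ≤ |X k ω| + |ε n * (B k ω * Z ω)| :=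
                      abs_sub _ _
                    _ ≤ Cx + KBt := add_le_add h h2
                · constructor
                  · simp only [hYdef, if_neg hks, if_neg hkt]
                    exact (hX.1 k hk).1
                  · obtain ⟨Cx, hCx⟩ := (hX.1 k hk).2
                    refine ⟨Cx, ?_⟩
                    filter_upwards [hCx] with ω h
                    simpa only [hYdef, if_neg hks, if_neg hkt] using h
            · filter_upwards [hX.2] with ω hω
              have hterm : ∀ k ∈ Finset.Icc 1 T, Yn k ω / B k ω
                  = X k ω / B k ω +
                    (if k = s then ε n * Z ω else if k = t then -(ε n * Z ω) else 0) := by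
                intro k hk
                have hkT := (Finset.mem_Icc.mp hk).2
                have hbne := hBne k hkT ω
                rcases eq_or_ne k s with hks | hks
                · subst hks
                  simp only [hYdef, if_pos rfl, if_true]
                  field_simp
                · rcases eq_or_ne k t with hkt | hkt
                  · subst hkt
                    simp only [hYdef, if_neg (Ne.symm (ne_of_eq_of_ne rfl hks)), if_pos rfl,
                      if_neg hks, if_true]
                    field_simp
                    ring
                  · simp only [hYdef, if_neg hks, if_neg hkt]
                    ring
              rw [Finset.sum_congr rfl hterm, Finset.sum_add_distrib, hω,
                sum_pair_ite hs ht hst_ne]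
              ring
          have hval := hopt Yn hYalloc
          -- decompose the difference of values
          have hYs_eq : (fun ω => u s (Yn s ω / B s ω))
              = fun ω => u s (X s ω / B s ω + ε n * Z ω) := by
            funext ω
            have hbne := hBne s hsT ω
            congr 1
            simp only [hYdef, if_pos rfl]
            field_simp
          have hYt_eq : (fun ω => u t (Yn t ω / B t ω))
              = fun ω => u t (X t ω / B t ω - ε n * Z ω) := by
            funext ω
            have hbne := hBne t (Finset.mem_Icc.mp ht).2 ω
            congr 1
            simp only [hYdef, if_neg (Ne.symm hst_ne), if_pos rfl, if_true]
            field_simp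
          have hsplit : allocVal μ T u B Yn - allocVal μ T u B X
              = (∫ ω, u s (X s ω / B s ω + ε n * Z ω) ∂μ - ∫ ω, u s (X s ω / B s ω) ∂μ)
              + (∫ ω, u t (X t ω / B t ω - ε n * Z ω) ∂μ - ∫ ω, u t (X t ω / B t ω) ∂μ) := by
            rw [allocVal, allocVal, ← Finset.sum_sub_distrib]
            rw [Finset.sum_congr rfl (fun k hk => ?_), sum_pair_ite hs ht hst_ne]
            rcases eq_or_ne k s with hks | hks
            · subst hks
              rw [if_pos rfl, hYs_eq]
            · rcases eq_or_ne k t with hkt | hkt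
              · subst hkt
                rw [if_neg hks, if_pos rfl, hYt_eq]
              · rw [if_neg hks, if_neg hkt]
                have : (fun ω => u k (Yn k ω / B k ω)) = fun ω => u k (X k ω / B k ω) := by
                  funext ω
                  simp only [hYdef, if_neg hks, if_neg hkt]
                rw [this]
                ring
          -- concavity lower bounds
          have hconc_s : ∫ ω, u s (X s ω / B s ω + ε n * Z ω) ∂μ
              - ∫ ω, u s (X s ω / B s ω) ∂μ
              ≥ ε n * ∫ ω, Z ω * deriv (u s) (X s ω / B s ω + ε n * Z ω) ∂μ := by
            rw [← integral_sub (husX_int n) husX_int0, ← integral_const_mul]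
            refine integral_mono ((hZIs n).const_mul (ε n)) ((husX_int n).sub husX_int0) ?_
            intro ω
            have := concave_tangent_le (hu_conc s hs).concaveOn (hudiff s hs)
              (X s ω / B s ω + ε n * Z ω) (X s ω / B s ω)
            simp only
            nlinarith [this]
          have hconc_t : ∫ ω, u t (X t ω / B t ω - ε n * Z ω) ∂μ
              - ∫ ω, u t (X t ω / B t ω) ∂μ
              ≥ -(ε n * ∫ ω, Z ω * deriv (u t) (X t ω / B t ω - ε n * Z ω) ∂μ) := by
            rw [← integral_sub (hutX_int n) hutX_int0, ← integral_const_mul, ← integral_neg]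
            refine integral_mono (((hZIt n).const_mul (ε n)).neg)
              ((hutX_int n).sub hutX_int0) ?_
            intro ω
            have := concave_tangent_le (hu_conc t ht).concaveOn (hudiff t ht)
              (X t ω / B t ω - ε n * Z ω) (X t ω / B t ω)
            simp only
            nlinarith [this]
          have h0 : allocVal μ T u B Yn - allocVal μ T u B X ≤ 0 := by linarith
          rw [hsplit] at h0
          have hε := hεpos n
          nlinarith [hconc_s, hconc_t, h0]
        -- pass to the limit ε n → 0
        have hεlim : Filter.Tendsto ε Filter.atTop (nhds 0) := by
          rw [hεdef]
          exact tendsto_one_div_add_atTop_nhds_zero_nat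
        have hlim_s : Filter.Tendsto
            (fun n => ∫ ω, Z ω * deriv (u s) (X s ω / B s ω + ε n * Z ω) ∂μ)
            Filter.atTop (nhds (∫ ω, Z ω * deriv (u s) (X s ω / B s ω) ∂μ)) := by
          refine MeasureTheory.tendsto_integral_of_dominated_convergence
            (fun _ => |Ks|) (fun n => (hZIs n).aestronglyMeasurable)
            (integrable_const _) (fun n => ?_) ?_
          · filter_upwards [hsarg_bdd n] with ω h
            rw [Real.norm_eq_abs, abs_mul]
            calc |Z ω| * |deriv (u s) (X s ω / B s ω + ε n * Z ω)| ≤ 1 * |Ks| := by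
                      refine mul_le_mul (hZb ω) (le_trans ?_ (le_abs_self Ks))
                        (abs_nonneg _) zero_le_one
                      simpa [Real.norm_eq_abs] using hKs _ h
            _ = |Ks| := one_mul _
          · refine Filter.Eventually.of_forall fun ω => ?_
            have harg : Filter.Tendsto (fun n => X s ω / B s ω + ε n * Z ω)
                Filter.atTop (nhds (X s ω / B s ω)) := by
              have h0 : Filter.Tendsto (fun n => ε n * Z ω) Filter.atTop (nhds 0) := by
                have := hεlim.mul_const (Z ω); rwa [zero_mul] at this
              have h1 := (tendsto_const_nhds (x := X s ω / B s ω)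
                (f := Filter.atTop (α := ℕ))).add h0
              rwa [add_zero] at h1
            exact ((((hu'cont s hs).tendsto _).comp harg).const_mul (Z ω))
        have hlim_t : Filter.Tendsto
            (fun n => ∫ ω, Z ω * deriv (u t) (X t ω / B t ω - ε n * Z ω) ∂μ)
            Filter.atTop (nhds (∫ ω, Z ω * deriv (u t) (X t ω / B t ω) ∂μ)) := by
          refine MeasureTheory.tendsto_integral_of_dominated_convergence
            (fun _ => |Kt|) (fun n => (hZIt n).aestronglyMeasurable)
            (integrable_const _) (fun n => ?_) ?_
          · filter_upwards [htarg_bdd n] with ω h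
            rw [Real.norm_eq_abs, abs_mul]
            calc |Z ω| * |deriv (u t) (X t ω / B t ω - ε n * Z ω)| ≤ 1 * |Kt| := by
                      refine mul_le_mul (hZb ω) (le_trans ?_ (le_abs_self Kt))
                        (abs_nonneg _) zero_le_one
                      simpa [Real.norm_eq_abs] using hKt _ h
            _ = |Kt| := one_mul _
          · refine Filter.Eventually.of_forall fun ω => ?_
            have harg : Filter.Tendsto (fun n => X t ω / B t ω - ε n * Z ω)
                Filter.atTop (nhds (X t ω / B t ω)) := by
              have h0 : Filter.Tendsto (fun n => ε n * Z ω) Filter.atTop (nhds 0) := by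
                have := hεlim.mul_const (Z ω); rwa [zero_mul] at this
              have h1 := (tendsto_const_nhds (x := X t ω / B t ω)
                (f := Filter.atTop (α := ℕ))).sub h0
              rwa [sub_zero] at h1
            exact ((((hu'cont t ht).tendsto _).comp harg).const_mul (Z ω))
        exact le_of_tendsto_of_tendsto' hlim_s hlim_t hn
      -- turn the key inequality into set-integral equality and conclude
      refine (ae_eq_condExp_of_forall_setIntegral_eq (hℱle s) (hu'X_int t ht)
        (fun A _ _ => (hu'X_int s hs).integrableOn)
        (fun A hA _ => ?_) ((hu'X_sm s hs).aestronglyMeasurable)).symm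
      have hAmΩ : MeasurableSet A := hℱle s A hA
      have hind_meas : Measurable[ℱ s] (A.indicator (fun _ => (1:ℝ))) :=
        measurable_const.indicator hA
      have hind_bdd : ∀ ω, |A.indicator (fun _ => (1:ℝ)) ω| ≤ 1 := by
        intro ω
        by_cases hω : ω ∈ A <;> simp [hω]
      have h1 := key _ hind_meas hind_bdd
      have h2 := key (fun ω => -(A.indicator (fun _ => (1:ℝ)) ω))
        hind_meas.neg (fun ω => by rw [abs_neg]; exact hind_bdd ω)
      simp only [neg_mul, integral_neg, neg_le_neg_iff] at h2
      rw [integral_indicator_one_mul μ hAmΩ, integral_indicator_one_mul μ hAmΩ] at h1 h2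
      exact le_antisymm h1 h2
  · -- martingale property → optimal
    intro hmart Y hY
    have hTmem : T ∈ Finset.Icc 1 T := Finset.mem_Icc.mpr ⟨hT, le_rfl⟩
    set M : Ω → ℝ := fun ω => deriv (u T) (X T ω / B T ω) with hMdef
    have hMint : Integrable M μ := hu'X_int T hTmem
    set D : ℕ → Ω → ℝ := fun t ω => Y t ω / B t ω - X t ω / B t ω with hDdef
    have hYt_meas : ∀ t ∈ Finset.Icc 1 T, Measurable[ℱ t] (fun ω => Y t ω / B t ω) :=
      fun t ht => (hY.1 t ht).1.div (hBmeas t (Finset.mem_Icc.mp ht).2)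
    have hYt_bdd : ∀ t ∈ Finset.Icc 1 T, ∃ C : ℝ, 0 ≤ C ∧ ∀ᵐ ω ∂μ, |Y t ω / B t ω| ≤ C := by
      intro t ht
      obtain ⟨C, hC⟩ := (hY.1 t ht).2
      refine ⟨max C 0, le_max_right _ _, ?_⟩
      filter_upwards [hC] with ω h
      have htT := (Finset.mem_Icc.mp ht).2
      have hb := hB1 t htT ω
      calc |Y t ω / B t ω| = |Y t ω| / |B t ω| := abs_div _ _
      _ = |Y t ω| / B t ω := by rw [abs_of_pos (by linarith : (0:ℝ) < B t ω)]
      _ ≤ |Y t ω| := div_le_self (abs_nonneg _) hb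
      _ ≤ max C 0 := le_trans h (le_max_left _ _)
    have hYt_aesm : ∀ t ∈ Finset.Icc 1 T, AEStronglyMeasurable (fun ω => Y t ω / B t ω) μ :=
      fun t ht => ((hYt_meas t ht).mono (hℱle t) le_rfl).aestronglyMeasurable
    have hD_meas : ∀ t ∈ Finset.Icc 1 T, Measurable[ℱ t] (D t) :=
      fun t ht => (hYt_meas t ht).sub (hXt_meas t ht)
    have hD_bdd : ∀ t ∈ Finset.Icc 1 T, ∃ C : ℝ, ∀ᵐ ω ∂μ, ‖D t ω‖ ≤ C := by
      intro t ht
      obtain ⟨Cy, _, hCy⟩ := hYt_bdd t ht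
      obtain ⟨Cx, _, hCx⟩ := hXt_bdd t ht
      refine ⟨Cy + Cx, ?_⟩
      filter_upwards [hCy, hCx] with ω h1 h2
      rw [hDdef]
      simp only [Real.norm_eq_abs]
      calc |Y t ω / B t ω - X t ω / B t ω| ≤ |Y t ω / B t ω| + |X t ω / B t ω| := abs_sub _ _
      _ ≤ Cy + Cx := add_le_add h1 h2
    have hDM_int : ∀ t ∈ Finset.Icc 1 T, Integrable (fun ω => D t ω * M ω) μ := by
      intro t ht
      obtain ⟨C, hC⟩ := hD_bdd t ht
      exact hMint.bdd_mul
        (((hD_meas t ht).mono (hℱle t) le_rfl).aestronglyMeasurable) hC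
    have huY_int : ∀ t ∈ Finset.Icc 1 T, Integrable (fun ω => u t (Y t ω / B t ω)) μ := by
      intro t ht
      obtain ⟨C, _, hC⟩ := hYt_bdd t ht
      exact integrable_comp_of_bdd (hucont t ht) (hYt_aesm t ht) hC
    have huX_int : ∀ t ∈ Finset.Icc 1 T, Integrable (fun ω => u t (X t ω / B t ω)) μ := by
      intro t ht
      obtain ⟨C, _, hC⟩ := hXt_bdd t ht
      exact integrable_comp_of_bdd (hucont t ht) (hXt_aesm t ht) hC
    -- term-by-term bound
    have hterm : ∀ t ∈ Finset.Icc 1 T,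
        ∫ ω, u t (Y t ω / B t ω) ∂μ - ∫ ω, u t (X t ω / B t ω) ∂μ
          ≤ ∫ ω, D t ω * M ω ∂μ := by
      intro t ht
      obtain ⟨C, hC⟩ := hD_bdd t ht
      have hDu'_int : Integrable (fun ω => D t ω * deriv (u t) (X t ω / B t ω)) μ :=
        (hu'X_int t ht).bdd_mul
          (((hD_meas t ht).mono (hℱle t) le_rfl).aestronglyMeasurable) hC
      have step1 : ∫ ω, u t (Y t ω / B t ω) ∂μ - ∫ ω, u t (X t ω / B t ω) ∂μ
          ≤ ∫ ω, D t ω * deriv (u t) (X t ω / B t ω) ∂μ := by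
        rw [← integral_sub (huY_int t ht) (huX_int t ht)]
        refine integral_mono ((huY_int t ht).sub (huX_int t ht)) hDu'_int ?_
        intro ω
        have := concave_tangent_le (hu_conc t ht).concaveOn (hudiff t ht)
          (X t ω / B t ω) (Y t ω / B t ω)
        simp only [hDdef]
        nlinarith [this]
      have hce := hmart t ht T hTmem (Finset.mem_Icc.mp ht).2
      have hpull := condExp_stronglyMeasurable_mul_of_bound (hℱle t)
        ((hD_meas t ht).stronglyMeasurable) hMint C hC
      have step2 : ∫ ω, D t ω * deriv (u t) (X t ω / B t ω) ∂μ
          = ∫ ω, D t ω * M ω ∂μ := by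
        have e1 : ∫ ω, D t ω * deriv (u t) (X t ω / B t ω) ∂μ
            = ∫ ω, D t ω * (μ[M | ℱ t]) ω ∂μ := by
          refine integral_congr_ae ?_
          filter_upwards [hce] with ω h
          rw [← h]
        have e2 : ∫ ω, D t ω * (μ[M | ℱ t]) ω ∂μ
            = ∫ ω, (μ[(fun ω => D t ω * M ω) | ℱ t]) ω ∂μ := by
          refine (integral_congr_ae ?_).symm
          filter_upwards [hpull] with ω h
          exact h
        have e3 : ∫ ω, (μ[(fun ω => D t ω * M ω) | ℱ t]) ω ∂μ
            = ∫ ω, D t ω * M ω ∂μ := integral_condExp (hℱle t)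
        rw [e1, e2, e3]
      rw [← step2]
      exact step1
    -- sum up
    have hsum0 : ∀ᵐ ω ∂μ, ∑ t ∈ Finset.Icc 1 T, D t ω = 0 := by
      filter_upwards [hX.2, hY.2] with ω h1 h2
      rw [hDdef]
      simp only
      rw [Finset.sum_sub_distrib, h1, h2, sub_self]
    have hsumDM : ∑ t ∈ Finset.Icc 1 T, ∫ ω, D t ω * M ω ∂μ = 0 := by
      rw [← integral_finset_sum _ (fun t ht => hDM_int t ht)]
      have : ∫ ω, ∑ t ∈ Finset.Icc 1 T, D t ω * M ω ∂μ = ∫ ω, (0:ℝ) ∂μ := by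
        refine integral_congr_ae ?_
        filter_upwards [hsum0] with ω h
        rw [← Finset.sum_mul, h, zero_mul]
      rw [this, integral_zero]
    have hfinal : allocVal μ T u B Y - allocVal μ T u B X ≤ 0 := by
      rw [allocVal, allocVal, ← Finset.sum_sub_distrib]
      calc ∑ t ∈ Finset.Icc 1 T,
          (∫ ω, u t (Y t ω / B t ω) ∂μ - ∫ ω, u t (X t ω / B t ω) ∂μ)
          ≤ ∑ t ∈ Finset.Icc 1 T, ∫ ω, D t ω * M ω ∂μ :=
        Finset.sum_le_sum hterm
      _ = 0 := hsumDM
    linarith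
end
end
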